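/- arXiv:1801.10346 — 3 statements merged into one kernel-verified Lean document; each statement's English description precedes it below -/
import Mathlib

section
/- Let P be a Borel probability measure on ℝ^d with finite second moment and h ∈ (0,1). Then for all x, y ∈ ℝ^d and every μ ∈ 𝒫_{x,h}(P), d_{P,h}²(y) − ‖y‖² ≤ d_{P,h}²(x) − ‖x‖² − 2⟨y − x, m(μ)⟩, with equality if and only if μ ∈ 𝒫_{y,h}(P). -/
open MeasureTheory ENNReal Set Metric

noncomputable section

/-- `d`-dimensional Euclidean space. -/
abbrev Ed (d : ℕ) : Type := EuclideanSpace ℝ (Fin d)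

variable {d : ℕ}

/-- A Borel probability measure is sub-Gaussian with variance `V²` if
`Q {‖x‖ > t} ≤ exp (−t²/(2V²))` for all `t > V`. -/
def IsSubG (Q : Measure (Ed d)) (V : ℝ) : Prop :=
  ∀ t : ℝ, V < t → Q {x : Ed d | t < ‖x‖} ≤ ENNReal.ofReal (Real.exp (-(t ^ 2) / (2 * V ^ 2)))

/-- `δ_{P,l}(x) = inf {r > 0 | P (B̄(x,r)) > l}`. -/
def dtmRadius (P : Measure (Ed d)) (l : ℝ) (x : Ed d) : ℝ :=
  sInf {r : ℝ | 0 < r ∧ ENNReal.ofReal l < P (closedBall x r)}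

/-- The distance to the measure `P` with mass parameter `h`. -/
def dtm (P : Measure (Ed d)) (h : ℝ) (x : Ed d) : ℝ :=
  Real.sqrt ((1 / h) * ∫ l in (0:ℝ)..h, (dtmRadius P l x) ^ 2)

/-- `c_{P,h}(v) = sup {c | P {y | ⟨y,v⟩ > c} > h}`. -/
def cInf (P : Measure (Ed d)) (h : ℝ) (v : Ed d) : ℝ :=
  sSup {c : ℝ | ENNReal.ofReal h < P {y : Ed d | c < (inner ℝ y v : ℝ)}}

/-- `𝒫_{x,h}(P)`: probability measures `(1/h)·Q` with `Q` a sub-measure of `P` of total mass `h`,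
coinciding with `P` on the open ball `B(x, δ_{P,h}(x))` and supported on the closed ball. -/
def PlocPt (P : Measure (Ed d)) (h : ℝ) (x : Ed d) : Set (Measure (Ed d)) :=
  {μ | ∃ Q : Measure (Ed d),
    μ = (ENNReal.ofReal h)⁻¹ • Q ∧ Q ≤ P ∧ Q Set.univ = ENNReal.ofReal h ∧
    (∀ A : Set (Ed d), A ⊆ ball x (dtmRadius P h x) → Q A = P A) ∧
    Q ((closedBall x (dtmRadius P h x))ᶜ) = 0}

/-- `𝒫_{v∞,h}(P)`: probability measures `(1/h)·Q` with `Q` a sub-measure of `P` of total mass `h`,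
coinciding with `P` on the open half-space `H(v, c_{P,h}(v))` and giving no mass to
`{y | ⟨y,v⟩ < c_{P,h}(v)}`. -/
def PlocInf (P : Measure (Ed d)) (h : ℝ) (v : Ed d) : Set (Measure (Ed d)) :=
  {μ | ∃ Q : Measure (Ed d),
    μ = (ENNReal.ofReal h)⁻¹ • Q ∧ Q ≤ P ∧ Q Set.univ = ENNReal.ofReal h ∧
    (∀ A : Set (Ed d), A ⊆ {y : Ed d | cInf P h v < (inner ℝ y v : ℝ)} → Q A = P A) ∧
    Q {y : Ed d | (inner ℝ y v : ℝ) < cInf P h v} = 0}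

/-- Mean of a measure. -/
def mMean (μ : Measure (Ed d)) : Ed d := ∫ u, u ∂μ

/-- Variance of a measure. -/
def mVar (μ : Measure (Ed d)) : ℝ := ∫ u, ‖u - mMean μ‖ ^ 2 ∂μ

/-- The set `M_h(P)` of all means of localized sub-measures of `P`. -/
def Mset (P : Measure (Ed d)) (h : ℝ) : Set (Ed d) :=
  {m | (∃ x : Ed d, ∃ μ ∈ PlocPt P h x, m = mMean μ) ∨
       (∃ v : Ed d, ‖v‖ = 1 ∧ ∃ μ ∈ PlocInf P h v, m = mMean μ)}

/-- A center is either a point of `ℝ^d` or a point at infinity `v∞` for a unit vector `v`. -/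
def ExtPt (d : ℕ) : Type := Ed d ⊕ {v : Ed d // ‖v‖ = 1}

/-- Localized measures at an extended point. -/
def PlocExt (P : Measure (Ed d)) (h : ℝ) : ExtPt d → Set (Measure (Ed d))
  | Sum.inl x => PlocPt P h x
  | Sum.inr v => PlocInf P h v.1

/-- A `k`-center for `P`: centers `t i` with localized measures `μ i ∈ 𝒫_{t i,h}(P)`. -/
def IsKCenter (P : Measure (Ed d)) (h : ℝ) (k : ℕ)
    (t : Fin k → ExtPt d) (μ : Fin k → Measure (Ed d)) : Prop :=
  ∀ i, μ i ∈ PlocExt P h (t i)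

/-- The risk of a `k`-center. -/
def risk (P : Measure (Ed d)) (k : ℕ) (μ : Fin k → Measure (Ed d)) : ℝ :=
  ∫ u, (⨅ i : Fin k, (‖u - mMean (μ i)‖ ^ 2 + mVar (μ i))) ∂P

/-- `f` is a `k`-PDTM of `P`: the square root of the power function of a risk-minimizing
`k`-center. -/
def IsKPDTM (P : Measure (Ed d)) (h : ℝ) (k : ℕ) (f : Ed d → ℝ) : Prop :=
  ∃ (t : Fin k → ExtPt d) (μ : Fin k → Measure (Ed d)),
    IsKCenter P h k t μ ∧
    (∀ (t' : Fin k → ExtPt d) (μ' : Fin k → Measure (Ed d)),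
      IsKCenter P h k t' μ' → risk P k μ ≤ risk P k μ') ∧
    ∀ x, f x = Real.sqrt (⨅ i : Fin k, (‖x - mMean (μ i)‖ ^ 2 + mVar (μ i)))

/-- `f` is an `ε`-approximate `k`-PDTM of `P`. -/
def IsEpsKPDTM (P : Measure (Ed d)) (h : ℝ) (k : ℕ) (ε : ℝ) (f : Ed d → ℝ) : Prop :=
  ∃ (t : Fin k → ExtPt d) (μ : Fin k → Measure (Ed d)),
    IsKCenter P h k t μ ∧
    (∀ (t' : Fin k → ExtPt d) (μ' : Fin k → Measure (Ed d)),
      IsKCenter P h k t' μ' → risk P k μ ≤ risk P k μ' + ε) ∧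
    ∀ x, f x = Real.sqrt (⨅ i : Fin k, (‖x - mMean (μ i)‖ ^ 2 + mVar (μ i)))

/-- `ω²_{P,h}(θ) = sup_x (d_{P,h}²(x) − ‖x−θ‖²)`, as an extended nonnegative real. -/
def omega2 (P : Measure (Ed d)) (h : ℝ) (θ : Ed d) : ℝ≥0∞ :=
  ⨆ x : Ed d, ENNReal.ofReal ((dtm P h x) ^ 2 - ‖x - θ‖ ^ 2)

/-- When `P` puts no mass on spheres, the unique element of `𝒫_{x,h}(P)`. -/
def locMeasure (P : Measure (Ed d)) (h : ℝ) (x : Ed d) : Measure (Ed d) :=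
  (ENNReal.ofReal h)⁻¹ • P.restrict (ball x (dtmRadius P h x))

/-- The `Lᵖ`-Wasserstein distance. -/
def Wdist (p : ℝ) (P Q : Measure (Ed d)) : ℝ :=
  sInf {w | ∃ π : Measure (Ed d × Ed d),
    π.map Prod.fst = P ∧ π.map Prod.snd = Q ∧
    w = (∫ y, ‖y.1 - y.2‖ ^ p ∂π) ^ (1 / p)}

/-- The support of a measure. -/
def msupport (P : Measure (Ed d)) : Set (Ed d) :=
  {x : Ed d | ∀ r : ℝ, 0 < r → 0 < P (ball x r)}

end


set_option linter.unusedSectionVars false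

section AuxProofs
variable {d : ℕ}

section Basic
variable (P : Measure (Ed d)) [IsProbabilityMeasure P] (z : Ed d)

lemma dtmRadius_nonneg (l : ℝ) : 0 ≤ dtmRadius P l z :=
  Real.sInf_nonneg fun _ hr => hr.1.le

lemma F_mono : Monotone (fun r => P (closedBall z r)) := fun _ _ hab =>
  measure_mono (closedBall_subset_closedBall hab)

lemma S_nonempty {l : ℝ} (hl : l < 1) :
    {r : ℝ | 0 < r ∧ ENNReal.ofReal l < P (closedBall z r)}.Nonempty := by
  have hU : (univ : Set (Ed d)) = ⋃ n : ℕ, closedBall z (n + 1) := by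
    ext u
    simp only [mem_univ, mem_iUnion, mem_closedBall, true_iff]
    obtain ⟨n, hn⟩ := exists_nat_ge (dist u z)
    exact ⟨n, hn.trans (by linarith)⟩
  have hmono : Monotone (fun n : ℕ => closedBall z (n + 1)) := fun a b hab =>
    closedBall_subset_closedBall (by have : (a:ℝ) ≤ b := Nat.cast_le.2 hab; linarith)
  have h1 : ENNReal.ofReal l < P univ := by
    rw [measure_univ]; exact ENNReal.ofReal_lt_one.2 hl
  rw [hU, Directed.measure_iUnion hmono.directed_le] at h1
  obtain ⟨n, hn⟩ := lt_iSup_iff.mp h1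
  exact ⟨n + 1, by positivity, hn⟩

lemma dtmRadius_le {l r : ℝ} (hr : 0 < r) (hlr : ENNReal.ofReal l < P (closedBall z r)) :
    dtmRadius P l z ≤ r :=
  csInf_le ⟨0, fun _ hs => hs.1.le⟩ ⟨hr, hlr⟩

lemma le_dtmRadius {l r : ℝ} (hl : l < 1) (hr : P (closedBall z r) ≤ ENNReal.ofReal l) :
    r ≤ dtmRadius P l z := by
  refine le_csInf (S_nonempty P z hl) fun b hb => ?_
  by_contra hc
  push_neg at hc
  exact absurd (lt_of_le_of_lt (le_trans (F_mono P z hc.le) hr) hb.2) (lt_irrefl _)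

lemma F_tendsto (r : ℝ) :
    Filter.Tendsto (fun n : ℕ => P (closedBall z (r + 1 / (n + 1)))) Filter.atTop
      (nhds (P (closedBall z r))) := by
  have hI : ⋂ n : ℕ, closedBall z (r + 1 / (n + 1)) = closedBall z r := by
    ext u
    simp only [mem_iInter, mem_closedBall]
    constructor
    · intro hu
      refine le_of_forall_pos_le_add fun ε hε => ?_
      obtain ⟨n, hn⟩ := exists_nat_one_div_lt hε
      exact (hu n).trans (by linarith)
    · intro hu n
      have : (0:ℝ) < 1 / (n + 1) := by positivity
      linarith
  have hanti : Antitone fun n : ℕ => closedBall z (r + 1 / (n + 1)) := by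
    intro a b hab
    apply closedBall_subset_closedBall
    have : (1:ℝ) / (b + 1) ≤ 1 / (a + 1) := by
      apply one_div_le_one_div_of_le (by positivity)
      exact_mod_cast by simpa using Nat.succ_le_succ hab
    linarith
  have := tendsto_measure_iInter_atTop (μ := P)
    (fun n => (measurableSet_closedBall).nullMeasurableSet) hanti
    ⟨0, measure_ne_top _ _⟩
  rwa [hI] at this

end Basic

set_option linter.unusedSectionVars false

section Slice
variable (P : Measure (Ed d)) [IsProbabilityMeasure P] (z : Ed d)

lemma dtmRadius_monoMin {h : ℝ} (hh1 : h < 1) :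
    Monotone (fun l => dtmRadius P (min l h) z) := by
  intro a b hab
  apply csInf_le_csInf ⟨0, fun _ hs => hs.1.le⟩
    (S_nonempty P z (lt_of_le_of_lt (min_le_right b h) hh1))
  intro r hr
  exact ⟨hr.1, lt_of_le_of_lt (ENNReal.ofReal_le_ofReal (min_le_min_right h hab)) hr.2⟩

lemma sliceMeas {h : ℝ} (hh : h ∈ Ioo (0:ℝ) 1) {r : ℝ} (hr : 0 < r) :
    volume ({l : ℝ | r < dtmRadius P l z} ∩ Ioo 0 h) =
      ENNReal.ofReal h - P (closedBall z r) := by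
  set c := (P (closedBall z r)).toReal with hc_def
  have hc : 0 ≤ c := ENNReal.toReal_nonneg
  have hFr : P (closedBall z r) = ENNReal.ofReal c :=
    (ENNReal.ofReal_toReal (measure_ne_top _ _)).symm
  have key : ENNReal.ofReal h - P (closedBall z r) = ENNReal.ofReal (h - c) := by
    rw [hFr, ← ENNReal.ofReal_sub _ hc]
  rw [key]
  apply le_antisymm
  · have hsub : {l : ℝ | r < dtmRadius P l z} ∩ Ioo 0 h ⊆ Ico c h := by
      rintro l ⟨hl1, hl2⟩
      refine ⟨?_, hl2.2⟩
      by_contra hlt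
      push_neg at hlt
      have : ENNReal.ofReal l < P (closedBall z r) := by
        rw [hFr]; exact ENNReal.ofReal_lt_ofReal_iff_of_nonneg hl2.1.le |>.2 hlt
      exact absurd (dtmRadius_le P z hr this) (not_le.2 hl1)
    calc volume ({l : ℝ | r < dtmRadius P l z} ∩ Ioo 0 h) ≤ volume (Ico c h) :=
          measure_mono hsub
      _ = ENNReal.ofReal (h - c) := Real.volume_Ico
  · set cn := fun n : ℕ => (P (closedBall z (r + 1 / (n + 1)))).toReal with hcn_def
    have hlow : ∀ n : ℕ, ENNReal.ofReal (h - cn n) ≤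
        volume ({l : ℝ | r < dtmRadius P l z} ∩ Ioo 0 h) := by
      intro n
      have hsub : Ioo (cn n) h ∩ Ioo 0 h ⊆ {l : ℝ | r < dtmRadius P l z} ∩ Ioo 0 h := by
        rintro l ⟨hl1, hl2⟩
        refine ⟨?_, hl2⟩
        have hle : P (closedBall z (r + 1 / (n + 1))) ≤ ENNReal.ofReal l := by
          rw [(ENNReal.ofReal_toReal (measure_ne_top _ _)).symm]
          exact ENNReal.ofReal_le_ofReal hl1.1.le
        have := le_dtmRadius P z (lt_trans hl2.2 hh.2) hle
        have hpos : (0:ℝ) < 1 / (n + 1 : ℝ) := by positivity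
        simpa using lt_of_lt_of_le (by linarith) this
      calc ENNReal.ofReal (h - cn n) = volume (Ioo (max (cn n) 0) h) := by
            rw [Real.volume_Ioo]
            congr 1
            rw [max_eq_left ENNReal.toReal_nonneg]
        _ ≤ volume ({l : ℝ | r < dtmRadius P l z} ∩ Ioo 0 h) := by
            apply measure_mono
            intro l hl
            rcases hl with ⟨hl1, hl2⟩
            exact hsub ⟨⟨lt_of_le_of_lt (le_max_left _ _) hl1, hl2⟩,
              ⟨lt_of_le_of_lt (le_max_right _ _) hl1, hl2⟩⟩
    have hcnc : Filter.Tendsto (fun n : ℕ => ENNReal.ofReal (h - cn n)) Filter.atTop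
        (nhds (ENNReal.ofReal (h - c))) := by
      apply (ENNReal.continuous_ofReal.tendsto _).comp
      apply Filter.Tendsto.const_sub
      exact (ENNReal.tendsto_toReal (measure_ne_top _ _)).comp (F_tendsto P z r)
    exact le_of_tendsto hcnc (Filter.Eventually.of_forall hlow)

end Slice

section Layer
variable (P : Measure (Ed d)) [IsProbabilityMeasure P] (z : Ed d)

lemma lint_delta {h : ℝ} (hh : h ∈ Ioo (0:ℝ) 1) :
    ∫⁻ l in Ioo 0 h, ENNReal.ofReal ((dtmRadius P l z) ^ 2) =
      ENNReal.ofReal 2 * ∫⁻ r in Ioi 0,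
        (ENNReal.ofReal h - P (closedBall z r)) * ENNReal.ofReal r := by
  have f_meas : Measurable fun l => dtmRadius P (min l h) z :=
    (dtmRadius_monoMin P z hh.2).measurable
  have f_nn : 0 ≤ᵐ[volume.restrict (Ioo 0 h)] fun l => dtmRadius P (min l h) z :=
    Filter.Eventually.of_forall fun l => dtmRadius_nonneg P z _
  have key := lintegral_rpow_eq_lintegral_meas_lt_mul (volume.restrict (Ioo 0 h)) f_nn
    f_meas.aemeasurable (p := 2) (by norm_num)
  have congr1 : ∫⁻ l in Ioo 0 h, ENNReal.ofReal ((dtmRadius P l z) ^ 2) =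
      ∫⁻ l in Ioo 0 h, ENNReal.ofReal ((dtmRadius P (min l h) z) ^ (2:ℝ)) := by
    apply lintegral_congr_ae
    filter_upwards [self_mem_ae_restrict measurableSet_Ioo] with l hl
    rw [min_eq_left hl.2.le, show ((2:ℝ)) = ((2:ℕ):ℝ) by norm_num, Real.rpow_natCast]
  rw [congr1, key]
  congr 1
  apply lintegral_congr_ae
  filter_upwards [self_mem_ae_restrict measurableSet_Ioi] with r hr
  rw [Measure.restrict_apply' measurableSet_Ioo]
  have hset : {a : ℝ | r < dtmRadius P (min a h) z} ∩ Ioo 0 h =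
      {l : ℝ | r < dtmRadius P l z} ∩ Ioo 0 h := by
    ext l
    simp only [mem_inter_iff, mem_setOf_eq, mem_Ioo]
    constructor
    · rintro ⟨h1, h2⟩; rw [min_eq_left h2.2.le] at h1; exact ⟨h1, h2⟩
    · rintro ⟨h1, h2⟩; rw [min_eq_left h2.2.le]; exact ⟨h1, h2⟩
  rw [hset, sliceMeas P z hh hr]
  norm_num

lemma lint_Q (Q : Measure (Ed d)) [IsFiniteMeasure Q] :
    ∫⁻ u, ENNReal.ofReal (‖u - z‖ ^ 2) ∂Q =
      ENNReal.ofReal 2 * ∫⁻ r in Ioi 0, Q ((closedBall z r)ᶜ) * ENNReal.ofReal r := by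
  have f_meas : Measurable fun u : Ed d => ‖u - z‖ :=
    (continuous_id.sub continuous_const).norm.measurable
  have key := lintegral_rpow_eq_lintegral_meas_lt_mul Q
    (Filter.Eventually.of_forall fun u => norm_nonneg _) f_meas.aemeasurable
    (p := 2) (by norm_num)
  have congr1 : ∫⁻ u, ENNReal.ofReal (‖u - z‖ ^ 2) ∂Q =
      ∫⁻ u, ENNReal.ofReal (‖u - z‖ ^ (2:ℝ)) ∂Q := by
    congr 1; ext u
    rw [show ((2:ℝ)) = ((2:ℕ):ℝ) by norm_num, Real.rpow_natCast]
  rw [congr1, key]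
  congr 1
  apply lintegral_congr_ae
  filter_upwards [self_mem_ae_restrict measurableSet_Ioi] with r hr
  have hset : {a : Ed d | r < ‖a - z‖} = (closedBall z r)ᶜ := by
    ext u
    simp [mem_closedBall, dist_eq_norm, not_le]
  rw [hset]
  norm_num

end Layer

section DtmSq
variable (P : Measure (Ed d)) [IsProbabilityMeasure P] (z : Ed d)

lemma dtm_aesm {h : ℝ} (hh : h ∈ Ioo (0:ℝ) 1) :
    AEStronglyMeasurable (fun l => (dtmRadius P l z) ^ 2) (volume.restrict (Ioo 0 h)) := by
  have f_meas : Measurable fun l => (dtmRadius P (min l h) z) ^ 2 :=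
    ((dtmRadius_monoMin P z hh.2).measurable).pow_const 2
  apply f_meas.aestronglyMeasurable.congr
  filter_upwards [self_mem_ae_restrict measurableSet_Ioo] with l hl
  rw [min_eq_left hl.2.le]

lemma dtm_sq {h : ℝ} (hh : h ∈ Ioo (0:ℝ) 1) :
    dtm P h z ^ 2 =
      (1 / h) * (∫⁻ l in Ioo 0 h, ENNReal.ofReal ((dtmRadius P l z) ^ 2)).toReal := by
  have hIc : ∫ l in (0:ℝ)..h, (dtmRadius P l z) ^ 2 =
      ∫ l in Ioo 0 h, (dtmRadius P l z) ^ 2 := by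
    rw [intervalIntegral.integral_of_le hh.1.le, MeasureTheory.integral_Ioc_eq_integral_Ioo]
  have hlin : ∫ l in Ioo 0 h, (dtmRadius P l z) ^ 2 =
      (∫⁻ l in Ioo 0 h, ENNReal.ofReal ((dtmRadius P l z) ^ 2)).toReal :=
    integral_eq_lintegral_of_nonneg_ae
      (Filter.Eventually.of_forall fun l => sq_nonneg _) (dtm_aesm P z hh)
  rw [dtm, Real.sq_sqrt, hIc, hlin]
  rw [hIc, hlin]
  exact mul_nonneg (one_div_nonneg.2 hh.1.le) ENNReal.toReal_nonneg

end DtmSq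

section Main
variable {P : Measure (Ed d)} [IsProbabilityMeasure P] {h : ℝ} {Q : Measure (Ed d)}

lemma Qle_apply (hQle : Q ≤ P) (s : Set (Ed d)) : Q s ≤ P s :=
  Measure.le_iff'.1 hQle s

lemma RQ_fin (hP2 : ∫⁻ u, ENNReal.ofReal (‖u‖ ^ 2) ∂P < ⊤) (hQle : Q ≤ P) (z : Ed d) :
    ∫⁻ u, ENNReal.ofReal (‖u - z‖ ^ 2) ∂Q < ⊤ := by
  have hpt : ∀ u : Ed d, ENNReal.ofReal (‖u - z‖ ^ 2) ≤
      ENNReal.ofReal (2 * ‖u‖ ^ 2) + ENNReal.ofReal (2 * ‖z‖ ^ 2) := by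
    intro u
    rw [← ENNReal.ofReal_add (by positivity) (by positivity)]
    apply ENNReal.ofReal_le_ofReal
    have h1 : ‖u - z‖ ≤ ‖u‖ + ‖z‖ := norm_sub_le _ _
    nlinarith [sq_nonneg (‖u‖ - ‖z‖), pow_le_pow_left₀ (norm_nonneg (u - z)) h1 2]
  have hQuniv_lt : Q univ < ⊤ := lt_of_le_of_lt (Qle_apply hQle univ) (measure_lt_top P _)
  calc ∫⁻ u, ENNReal.ofReal (‖u - z‖ ^ 2) ∂Q
      ≤ ∫⁻ u, (ENNReal.ofReal (2 * ‖u‖ ^ 2) + ENNReal.ofReal (2 * ‖z‖ ^ 2)) ∂Q :=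
        lintegral_mono hpt
    _ = ∫⁻ u, ENNReal.ofReal (2 * ‖u‖ ^ 2) ∂Q + ENNReal.ofReal (2 * ‖z‖ ^ 2) * Q univ := by
        rw [lintegral_add_right _ measurable_const, lintegral_const]
    _ < ⊤ := by
        apply ENNReal.add_lt_top.2
        constructor
        · calc ∫⁻ u, ENNReal.ofReal (2 * ‖u‖ ^ 2) ∂Q
              ≤ ∫⁻ u, ENNReal.ofReal (2 * ‖u‖ ^ 2) ∂P := lintegral_mono' hQle le_rfl
            _ = ENNReal.ofReal 2 * ∫⁻ u, ENNReal.ofReal (‖u‖ ^ 2) ∂P := by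
                simp_rw [ENNReal.ofReal_mul (by norm_num : (0:ℝ) ≤ 2)]
                rw [lintegral_const_mul' _ _ ENNReal.ofReal_ne_top]
            _ < ⊤ := ENNReal.mul_lt_top ENNReal.ofReal_lt_top hP2
        · exact ENNReal.mul_lt_top ENNReal.ofReal_lt_top hQuniv_lt

lemma integrand_le (hQle : Q ≤ P) (hQuniv : Q univ = ENNReal.ofReal h) (z : Ed d) (r : ℝ) :
    ENNReal.ofReal h - P (closedBall z r) ≤ Q ((closedBall z r)ᶜ) := by
  haveI : IsFiniteMeasure Q := ⟨by rw [hQuniv]; exact ENNReal.ofReal_lt_top⟩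
  rw [measure_compl measurableSet_closedBall (measure_ne_top _ _), hQuniv]
  exact tsub_le_tsub_left (Qle_apply hQle _) _

lemma delta_le_RQ (hh : h ∈ Ioo (0:ℝ) 1) (hQle : Q ≤ P)
    (hQuniv : Q univ = ENNReal.ofReal h) (z : Ed d) :
    ∫⁻ l in Ioo 0 h, ENNReal.ofReal ((dtmRadius P l z) ^ 2) ≤
      ∫⁻ u, ENNReal.ofReal (‖u - z‖ ^ 2) ∂Q := by
  haveI : IsFiniteMeasure Q := ⟨by rw [hQuniv]; exact ENNReal.ofReal_lt_top⟩
  rw [lint_delta P z hh, lint_Q z Q]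
  apply mul_le_mul_right
  apply lintegral_mono
  intro r
  exact mul_le_mul_left (integrand_le hQle hQuniv z r) _

lemma dtm_le (hP2 : ∫⁻ u, ENNReal.ofReal (‖u‖ ^ 2) ∂P < ⊤) (hh : h ∈ Ioo (0:ℝ) 1)
    (hQle : Q ≤ P) (hQuniv : Q univ = ENNReal.ofReal h) (z : Ed d) :
    dtm P h z ^ 2 ≤ (1 / h) * (∫⁻ u, ENNReal.ofReal (‖u - z‖ ^ 2) ∂Q).toReal := by
  rw [dtm_sq P z hh]
  apply mul_le_mul_of_nonneg_left _ (one_div_nonneg.2 hh.1.le)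
  exact ENNReal.toReal_mono (RQ_fin hP2 hQle z).ne (delta_le_RQ hh hQle hQuniv z)

end Main

section EqCase
variable {P : Measure (Ed d)} [IsProbabilityMeasure P] {h : ℝ} {Q : Measure (Ed d)}

lemma cond_to_eq (hh : h ∈ Ioo (0:ℝ) 1)
    (hQuniv : Q univ = ENNReal.ofReal h) {z : Ed d}
    (hQball : ∀ A : Set (Ed d), A ⊆ ball z (dtmRadius P h z) → Q A = P A)
    (hQcompl : Q ((closedBall z (dtmRadius P h z))ᶜ) = 0) :
    ∫⁻ l in Ioo 0 h, ENNReal.ofReal ((dtmRadius P l z) ^ 2) =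
      ∫⁻ u, ENNReal.ofReal (‖u - z‖ ^ 2) ∂Q := by
  haveI : IsFiniteMeasure Q := ⟨by rw [hQuniv]; exact ENNReal.ofReal_lt_top⟩
  rw [lint_delta P z hh, lint_Q z Q]
  congr 1
  apply lintegral_congr_ae
  have hne : ∀ᵐ r ∂(volume.restrict (Ioi (0:ℝ))), r ≠ dtmRadius P h z := by
    apply ae_restrict_of_ae
    refine ae_iff.2 ?_
    simpa using measure_singleton (α := ℝ) (dtmRadius P h z)
  filter_upwards [self_mem_ae_restrict measurableSet_Ioi, hne] with r hr hrne
  congr 1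
  rcases lt_or_gt_of_ne hrne with hlt | hgt
  · have hQr : Q (closedBall z r) = P (closedBall z r) :=
      hQball _ (closedBall_subset_ball hlt)
    rw [measure_compl measurableSet_closedBall (measure_ne_top _ _), hQuniv, hQr]
  · have h1 : ENNReal.ofReal h ≤ P (closedBall z r) := by
      obtain ⟨s, hs, hslt⟩ := exists_lt_of_csInf_lt (S_nonempty P z hh.2) hgt
      exact le_trans hs.2.le (F_mono P z hslt.le)
    have h2 : Q ((closedBall z r)ᶜ) = 0 :=
      measure_mono_null (compl_subset_compl.2 (closedBall_subset_closedBall hgt.le)) hQcompl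
    rw [h2, tsub_eq_zero_of_le h1]

lemma eq_to_cond (hP2 : ∫⁻ u, ENNReal.ofReal (‖u‖ ^ 2) ∂P < ⊤) (hh : h ∈ Ioo (0:ℝ) 1)
    (hQle : Q ≤ P) (hQuniv : Q univ = ENNReal.ofReal h) {z : Ed d}
    (heq : ∫⁻ l in Ioo 0 h, ENNReal.ofReal ((dtmRadius P l z) ^ 2) =
      ∫⁻ u, ENNReal.ofReal (‖u - z‖ ^ 2) ∂Q) :
    (∀ A : Set (Ed d), A ⊆ ball z (dtmRadius P h z) → Q A = P A) ∧
      Q ((closedBall z (dtmRadius P h z))ᶜ) = 0 := by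
  haveI : IsFiniteMeasure Q := ⟨by rw [hQuniv]; exact ENNReal.ofReal_lt_top⟩
  set δ := dtmRadius P h z with hδ
  set f := fun r : ℝ => (ENNReal.ofReal h - P (closedBall z r)) * ENNReal.ofReal r with hf
  set g := fun r : ℝ => Q ((closedBall z r)ᶜ) * ENNReal.ofReal r with hg
  have hI : ∫⁻ r in Ioi (0:ℝ), f r = ∫⁻ r in Ioi (0:ℝ), g r := by
    have := heq
    rw [lint_delta P z hh, lint_Q z Q] at this
    exact (ENNReal.mul_right_inj (by simp) ENNReal.ofReal_ne_top).1 this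
  have hgfin : ∫⁻ r in Ioi (0:ℝ), g r ≠ ⊤ := by
    intro hc
    have h2 := lint_Q z Q
    rw [show ∫⁻ r in Ioi (0:ℝ), Q ((closedBall z r)ᶜ) * ENNReal.ofReal r = ⊤ from hc,
      ENNReal.mul_top (by simp : ENNReal.ofReal 2 ≠ 0)] at h2
    exact (RQ_fin hP2 hQle z).ne h2
  have hfmeas : Measurable f := by
    apply Measurable.mul
    · exact (measurable_const.sub ((F_mono P z).measurable))
    · exact ENNReal.measurable_ofReal
  have hgmeas : Measurable g := by
    apply Measurable.mul
    · exact Antitone.measurable (fun a b hab =>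
        measure_mono (compl_subset_compl.2 (closedBall_subset_closedBall hab)))
    · exact ENNReal.measurable_ofReal
  have hle : ∀ r : ℝ, f r ≤ g r := fun r =>
    mul_le_mul_left (integrand_le hQle hQuniv z r) _
  have hffin : ∫⁻ r in Ioi (0:ℝ), f r ≠ ⊤ := by rw [hI]; exact hgfin
  have hsub : ∫⁻ r in Ioi (0:ℝ), (g r - f r) = 0 := by
    rw [lintegral_sub hfmeas hffin (Filter.Eventually.of_forall hle), hI, tsub_self]
  have hae : (fun r => g r - f r) =ᵐ[volume.restrict (Ioi (0:ℝ))] 0 :=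
    (lintegral_eq_zero_iff (hgmeas.sub hfmeas)).1 hsub
  have hae2 : ∀ᵐ r ∂(volume.restrict (Ioi (0:ℝ))),
      ENNReal.ofReal h - P (closedBall z r) = Q ((closedBall z r)ᶜ) := by
    filter_upwards [hae, self_mem_ae_restrict measurableSet_Ioi] with r hr hr0
    have hgle : g r ≤ f r := tsub_eq_zero_iff_le.1 hr
    have : f r = g r := le_antisymm (hle r) hgle
    rw [hf, hg] at this
    simp only at this
    rw [mul_comm, mul_comm (Q ((closedBall z r)ᶜ))] at this
    exact (ENNReal.mul_right_inj (by simpa using (mem_Ioi.1 hr0))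
      ENNReal.ofReal_ne_top).1 this
  have hbad : volume {r : ℝ | 0 < r ∧
      ¬(ENNReal.ofReal h - P (closedBall z r) = Q ((closedBall z r)ᶜ))} = 0 := by
    have h1 := (ae_restrict_iff' measurableSet_Ioi).1 hae2
    rw [ae_iff] at h1
    apply measure_mono_null _ h1
    intro r hr
    simp only [mem_setOf_eq, not_forall] at *
    exact ⟨hr.1, hr.2⟩
  have hpick : ∀ a b : ℝ, 0 ≤ a → a < b → ∃ r : ℝ,
      (0 < r ∧ ENNReal.ofReal h - P (closedBall z r) = Q ((closedBall z r)ᶜ))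
        ∧ a < r ∧ r < b := by
    intro a b ha hab
    by_contra hc
    push_neg at hc
    have hsub2 : Ioo a b ⊆ {r : ℝ | 0 < r ∧
        ¬(ENNReal.ofReal h - P (closedBall z r) = Q ((closedBall z r)ᶜ))} := by
      intro r hr
      have hr0 : 0 < r := lt_of_le_of_lt ha hr.1
      refine ⟨hr0, fun hprop => ?_⟩
      exact absurd hr.2 (not_lt.2 (hc r ⟨hr0, hprop⟩ hr.1))
    have := measure_mono_null hsub2 hbad
    rw [Real.volume_Ioo] at this
    exact absurd this (ENNReal.ofReal_pos.2 (by linarith)).ne'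
  have hnull : ∀ r : ℝ, δ < r → Q ((closedBall z r)ᶜ) = 0 := by
    intro r hr
    obtain ⟨r', ⟨hr'pos, hpr'⟩, hδr', hr'r⟩ := hpick δ r (dtmRadius_nonneg P z h) hr
    have hge : ENNReal.ofReal h ≤ P (closedBall z r') := by
      obtain ⟨s, hs, hslt⟩ := exists_lt_of_csInf_lt (S_nonempty P z hh.2) hδr'
      exact le_trans hs.2.le (F_mono P z hslt.le)
    have h0 : Q ((closedBall z r')ᶜ) = 0 := by rw [← hpr', tsub_eq_zero_of_le hge]
    exact measure_mono_null (compl_subset_compl.2 (closedBall_subset_closedBall hr'r.le)) h0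
  have hcompl : Q ((closedBall z δ)ᶜ) = 0 := by
    have hU : (closedBall z δ)ᶜ = ⋃ n : ℕ, (closedBall z (δ + 1 / (n + 1)))ᶜ := by
      ext u
      simp only [mem_compl_iff, mem_iUnion, mem_closedBall, not_le]
      constructor
      · intro hu
        obtain ⟨n, hn⟩ := exists_nat_one_div_lt (sub_pos.2 hu)
        exact ⟨n, by push_cast at hn ⊢; linarith⟩
      · rintro ⟨n, hn⟩
        have : (0:ℝ) < 1 / (n + 1) := by positivity
        linarith
    rw [hU]
    exact measure_iUnion_null fun n => hnull _ (lt_add_of_pos_right δ (by positivity))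
  refine ⟨?_, hcompl⟩
  have hballQP : P (ball z δ) ≤ Q (ball z δ) := by
    rcases le_or_gt δ 0 with hδ0 | hδpos
    · simp [ball_eq_empty.2 hδ0]
    · have hmono : Monotone fun n : ℕ => closedBall z (δ - 1 / (n + 1)) := by
        intro a b hab
        apply closedBall_subset_closedBall
        have h1 : (1:ℝ) / (b + 1) ≤ 1 / (a + 1) := by
          apply one_div_le_one_div_of_le (by positivity)
          exact_mod_cast by simpa using Nat.succ_le_succ hab
        linarith
      have hU : ball z δ = ⋃ n : ℕ, closedBall z (δ - 1 / (n + 1)) := by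
        ext u
        simp only [mem_ball, mem_iUnion, mem_closedBall]
        constructor
        · intro hu
          obtain ⟨n, hn⟩ := exists_nat_one_div_lt (sub_pos.2 hu)
          exact ⟨n, by push_cast at hn ⊢; linarith⟩
        · rintro ⟨n, hn⟩
          have : (0:ℝ) < 1 / (n + 1) := by positivity
          linarith
      have hPb : P (ball z δ) = ⨆ n : ℕ, P (closedBall z (δ - 1 / (n + 1))) := by
        rw [hU, Directed.measure_iUnion hmono.directed_le]
      rw [hPb]
      apply iSup_le
      intro n
      have hslt : δ - 1 / ((n:ℝ) + 1) < δ := by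
        have : (0:ℝ) < 1 / ((n:ℝ) + 1) := by positivity
        linarith
      obtain ⟨r', ⟨hr'pos, hpr'⟩, h1, h2⟩ := hpick (max (δ - 1 / (n + 1)) 0) δ
        (le_max_right _ _) (max_lt hslt hδpos)
      have hFle : P (closedBall z r') ≤ ENNReal.ofReal h := by
        by_contra hc
        push_neg at hc
        exact absurd (dtmRadius_le P z hr'pos hc) (not_le.2 h2)
      have hGeq : Q (closedBall z r') = P (closedBall z r') := by
        rw [measure_compl measurableSet_closedBall (measure_ne_top _ _), hQuniv] at hpr'
        have hQle' : Q (closedBall z r') ≤ ENNReal.ofReal h :=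
          le_trans (Qle_apply hQle _) hFle
        calc Q (closedBall z r')
            = ENNReal.ofReal h - (ENNReal.ofReal h - Q (closedBall z r')) :=
              (ENNReal.sub_sub_cancel ENNReal.ofReal_ne_top hQle').symm
          _ = ENNReal.ofReal h - (ENNReal.ofReal h - P (closedBall z r')) := by rw [← hpr']
          _ = P (closedBall z r') := ENNReal.sub_sub_cancel ENNReal.ofReal_ne_top hFle
      calc P (closedBall z (δ - 1 / (n + 1)))
          ≤ P (closedBall z r') := F_mono P z (le_trans (le_max_left _ 0) h1.le)
        _ = Q (closedBall z r') := hGeq.symm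
        _ ≤ Q (ball z δ) := measure_mono (closedBall_subset_ball h2)
  have hball : Q (ball z δ) = P (ball z δ) :=
    le_antisymm (Qle_apply hQle _) hballQP
  have hmeasA : ∀ A : Set (Ed d), MeasurableSet A → A ⊆ ball z δ → Q A = P A := by
    intro A hA hsubA
    refine le_antisymm (Qle_apply hQle A) ?_
    have h1 : P (ball z δ ∩ A) + P (ball z δ \ A) = P (ball z δ) :=
      measure_inter_add_diff _ hA
    have h2 : Q (ball z δ ∩ A) + Q (ball z δ \ A) = Q (ball z δ) :=
      measure_inter_add_diff _ hA
    rw [inter_eq_right.2 hsubA] at h1 h2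
    have h3 : P A + P (ball z δ \ A) ≤ Q A + P (ball z δ \ A) := by
      calc P A + P (ball z δ \ A) = P (ball z δ) := h1
        _ = Q (ball z δ) := hball.symm
        _ = Q A + Q (ball z δ \ A) := h2.symm
        _ ≤ Q A + P (ball z δ \ A) := add_le_add le_rfl (Qle_apply hQle _)
    exact (ENNReal.add_le_add_iff_right (measure_ne_top P _)).1 h3
  intro A hsubA
  have hB : MeasurableSet (toMeasurable Q A ∩ ball z δ) :=
    (measurableSet_toMeasurable Q A).inter measurableSet_ball
  have hQB : Q (toMeasurable Q A ∩ ball z δ) = P (toMeasurable Q A ∩ ball z δ) :=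
    hmeasA _ hB inter_subset_right
  refine le_antisymm (Qle_apply hQle A) ?_
  calc P A ≤ P (toMeasurable Q A ∩ ball z δ) :=
        measure_mono (subset_inter (subset_toMeasurable Q A) hsubA)
    _ = Q (toMeasurable Q A ∩ ball z δ) := hQB.symm
    _ ≤ Q (toMeasurable Q A) := measure_mono inter_subset_left
    _ = Q A := measure_toMeasurable A

end EqCase


section Boch
variable {P : Measure (Ed d)} [IsProbabilityMeasure P] {h : ℝ} {Q : Measure (Ed d)}

lemma main_iff (hP2 : ∫⁻ u, ENNReal.ofReal (‖u‖ ^ 2) ∂P < ⊤) (hh : h ∈ Ioo (0:ℝ) 1)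
    (hQle : Q ≤ P) (hQuniv : Q univ = ENNReal.ofReal h) (z : Ed d) :
    dtm P h z ^ 2 = (1 / h) * (∫⁻ u, ENNReal.ofReal (‖u - z‖ ^ 2) ∂Q).toReal ↔
      ((∀ A : Set (Ed d), A ⊆ ball z (dtmRadius P h z) → Q A = P A) ∧
        Q ((closedBall z (dtmRadius P h z))ᶜ) = 0) := by
  constructor
  · intro he
    apply eq_to_cond hP2 hh hQle hQuniv
    rw [dtm_sq P z hh] at he
    have h2 := mul_left_cancel₀ (one_div_ne_zero hh.1.ne') he
    have hLfin : (∫⁻ l in Ioo 0 h, ENNReal.ofReal ((dtmRadius P l z) ^ 2)) ≠ ⊤ :=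
      (lt_of_le_of_lt (delta_le_RQ hh hQle hQuniv z) (RQ_fin hP2 hQle z)).ne
    exact (ENNReal.toReal_eq_toReal_iff' hLfin (RQ_fin hP2 hQle z).ne).1 h2
  · intro hc
    rw [dtm_sq P z hh, cond_to_eq hh hQuniv hc.1 hc.2]

lemma integrable_normSq (hP2 : ∫⁻ u, ENNReal.ofReal (‖u‖ ^ 2) ∂P < ⊤)
    (hQle : Q ≤ P) (hQuniv : Q univ = ENNReal.ofReal h) (z : Ed d) :
    Integrable (fun u : Ed d => ‖u - z‖ ^ 2) Q := by
  haveI : IsFiniteMeasure Q := ⟨by rw [hQuniv]; exact ENNReal.ofReal_lt_top⟩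
  refine ⟨((continuous_id.sub continuous_const).norm.pow 2).aestronglyMeasurable, ?_⟩
  rw [hasFiniteIntegral_iff_ofReal (Filter.Eventually.of_forall fun u => sq_nonneg _)]
  exact RQ_fin hP2 hQle z

lemma int_sq_eq (z : Ed d) :
    ∫ u, ‖u - z‖ ^ 2 ∂Q = (∫⁻ u, ENNReal.ofReal (‖u - z‖ ^ 2) ∂Q).toReal :=
  integral_eq_lintegral_of_nonneg_ae (Filter.Eventually.of_forall fun u => sq_nonneg _)
    ((continuous_id.sub continuous_const).norm.pow 2).aestronglyMeasurable

lemma integrable_id' (hP2 : ∫⁻ u, ENNReal.ofReal (‖u‖ ^ 2) ∂P < ⊤)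
    (hQle : Q ≤ P) (hQuniv : Q univ = ENNReal.ofReal h) :
    Integrable (fun u : Ed d => u) Q := by
  haveI : IsFiniteMeasure Q := ⟨by rw [hQuniv]; exact ENNReal.ofReal_lt_top⟩
  refine ⟨continuous_id.aestronglyMeasurable, ?_⟩
  rw [hasFiniteIntegral_iff_norm]
  calc ∫⁻ u, ENNReal.ofReal ‖u‖ ∂Q
      ≤ ∫⁻ u, (1 + ENNReal.ofReal (‖u‖ ^ 2)) ∂Q := by
        apply lintegral_mono
        intro u
        show ENNReal.ofReal ‖u‖ ≤ 1 + ENNReal.ofReal (‖u‖ ^ 2)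
        rw [show (1:ℝ≥0∞) + ENNReal.ofReal (‖u‖ ^ 2) = ENNReal.ofReal (1 + ‖u‖ ^ 2) by
          rw [ENNReal.ofReal_add zero_le_one (sq_nonneg _), ENNReal.ofReal_one]]
        exact ENNReal.ofReal_le_ofReal (by nlinarith [norm_nonneg u, sq_nonneg (‖u‖ - 1)])
    _ = Q univ + ∫⁻ u, ENNReal.ofReal (‖u‖ ^ 2) ∂Q := by
        rw [lintegral_add_left measurable_const, lintegral_one]
    _ < ⊤ := ENNReal.add_lt_top.2 ⟨measure_lt_top _ _,
        lt_of_le_of_lt (lintegral_mono' hQle le_rfl) hP2⟩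

lemma key_expand (hP2 : ∫⁻ u, ENNReal.ofReal (‖u‖ ^ 2) ∂P < ⊤) (hh : h ∈ Ioo (0:ℝ) 1)
    (hQle : Q ≤ P) (hQuniv : Q univ = ENNReal.ofReal h) (x y : Ed d) :
    (∫⁻ u, ENNReal.ofReal (‖u - y‖ ^ 2) ∂Q).toReal =
      (∫⁻ u, ENNReal.ofReal (‖u - x‖ ^ 2) ∂Q).toReal + h * (‖y‖ ^ 2 - ‖x‖ ^ 2)
        - 2 * ∫ u, (inner ℝ (y - x) u : ℝ) ∂Q := by
  haveI : IsFiniteMeasure Q := ⟨by rw [hQuniv]; exact ENNReal.ofReal_lt_top⟩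
  rw [← int_sq_eq, ← int_sq_eq]
  have hint1 : Integrable (fun u : Ed d => ‖u - x‖ ^ 2) Q := integrable_normSq hP2 hQle hQuniv x
  have hint2 : Integrable (fun u : Ed d => (inner ℝ (y - x) u : ℝ)) Q :=
    ContinuousLinearMap.integrable_comp (innerSL ℝ (y - x)) (integrable_id' hP2 hQle hQuniv)
  have hpt : ∀ u : Ed d,
      ‖u - y‖ ^ 2 = ‖u - x‖ ^ 2 + (‖y‖ ^ 2 - ‖x‖ ^ 2) - 2 * (inner ℝ (y - x) u : ℝ) := by
    intro u
    have h1 : ‖u - y‖ ^ 2 = ‖u‖ ^ 2 - 2 * (inner ℝ u y : ℝ) + ‖y‖ ^ 2 := norm_sub_sq_real u y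
    have h2 : ‖u - x‖ ^ 2 = ‖u‖ ^ 2 - 2 * (inner ℝ u x : ℝ) + ‖x‖ ^ 2 := norm_sub_sq_real u x
    have h3 : (inner ℝ (y - x) u : ℝ) = (inner ℝ y u : ℝ) - (inner ℝ x u : ℝ) := inner_sub_left _ _ _
    rw [real_inner_comm y u] at h1
    rw [real_inner_comm x u] at h2
    linarith
  calc ∫ u, ‖u - y‖ ^ 2 ∂Q
      = ∫ u, (‖u - x‖ ^ 2 + (‖y‖ ^ 2 - ‖x‖ ^ 2) - 2 * (inner ℝ (y - x) u : ℝ)) ∂Q := by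
        apply integral_congr_ae
        exact Filter.Eventually.of_forall hpt
    _ = (∫ u, (‖u - x‖ ^ 2 + (‖y‖ ^ 2 - ‖x‖ ^ 2)) ∂Q) - ∫ u, 2 * (inner ℝ (y - x) u : ℝ) ∂Q := by
        have hintA : Integrable (fun u : Ed d => ‖u - x‖ ^ 2 + (‖y‖ ^ 2 - ‖x‖ ^ 2)) Q :=
          hint1.add (integrable_const _)
        have hintB : Integrable (fun u : Ed d => 2 * (inner ℝ (y - x) u : ℝ)) Q :=
          hint2.const_mul 2
        exact integral_sub hintA hintB
    _ = ∫ u, ‖u - x‖ ^ 2 ∂Q + h * (‖y‖ ^ 2 - ‖x‖ ^ 2)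
          - 2 * ∫ u, (inner ℝ (y - x) u : ℝ) ∂Q := by
        rw [integral_add hint1 (integrable_const _), integral_const, integral_const_mul,
          measureReal_def, hQuniv, ENNReal.toReal_ofReal hh.1.le, smul_eq_mul]

end Boch


end AuxProofs

/-- semiconcavity-type inequality for the squared DTM, with its equality case. -/
theorem stmt_6 {d : ℕ} (P : Measure (Ed d)) [IsProbabilityMeasure P]
    (hP2 : ∫⁻ u, ENNReal.ofReal (‖u‖ ^ 2) ∂P < ⊤)
    (h : ℝ) (hh : h ∈ Set.Ioo (0:ℝ) 1)
    (x y : Ed d) (μ : Measure (Ed d)) (hμ : μ ∈ PlocPt P h x) :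
    dtm P h y ^ 2 - ‖y‖ ^ 2 ≤
      dtm P h x ^ 2 - ‖x‖ ^ 2 - 2 * (inner ℝ (y - x) (mMean μ) : ℝ) ∧
    (dtm P h y ^ 2 - ‖y‖ ^ 2 =
        dtm P h x ^ 2 - ‖x‖ ^ 2 - 2 * (inner ℝ (y - x) (mMean μ) : ℝ) ↔
      μ ∈ PlocPt P h y) := by
  obtain ⟨Q, hQeq, hQle, hQuniv, hQball, hQcompl⟩ := hμ
  haveI : IsFiniteMeasure Q := ⟨by rw [hQuniv]; exact ENNReal.ofReal_lt_top⟩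
  have hne : h ≠ 0 := hh.1.ne'
  have hinner : (inner ℝ (y - x) (mMean μ) : ℝ) = (1 / h) * ∫ u, (inner ℝ (y - x) u : ℝ) ∂Q := by
    rw [hQeq, mMean, integral_smul_measure, real_inner_smul_right,
      ← integral_inner (integrable_id' hP2 hQle hQuniv) (y - x)]
    congr 1
    rw [ENNReal.toReal_inv, ENNReal.toReal_ofReal hh.1.le, one_div]
  set Ix := (∫⁻ u, ENNReal.ofReal (‖u - x‖ ^ 2) ∂Q).toReal with hIx
  set Iy := (∫⁻ u, ENNReal.ofReal (‖u - y‖ ^ 2) ∂Q).toReal with hIy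
  have hkey : Iy = Ix + h * (‖y‖ ^ 2 - ‖x‖ ^ 2) - 2 * ∫ u, (inner ℝ (y - x) u : ℝ) ∂Q :=
    key_expand hP2 hh hQle hQuniv x y
  have hdx : dtm P h x ^ 2 = (1 / h) * Ix :=
    (main_iff hP2 hh hQle hQuniv x).2 ⟨hQball, hQcompl⟩
  have hdy : dtm P h y ^ 2 ≤ (1 / h) * Iy := dtm_le hP2 hh hQle hQuniv y
  have halg : (1 / h) * Iy - ‖y‖ ^ 2 =
      dtm P h x ^ 2 - ‖x‖ ^ 2 - 2 * (inner ℝ (y - x) (mMean μ) : ℝ) := by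
    rw [hdx, hinner, hkey]
    field_simp
    ring
  refine ⟨by linarith, ?_, ?_⟩
  · intro he
    have heq2 : dtm P h y ^ 2 = (1 / h) * Iy := by linarith
    have hcond := (main_iff hP2 hh hQle hQuniv y).1 heq2
    exact ⟨Q, hQeq, hQle, hQuniv, hcond.1, hcond.2⟩
  · intro hμy
    obtain ⟨Q', hQ'eq, _, _, hQ'ball, hQ'compl⟩ := hμy
    have h0 : ENNReal.ofReal h ≠ 0 := by
      simp only [ne_eq, ENNReal.ofReal_eq_zero, not_le]
      exact hh.1
    have hQQ' : Q' = Q := by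
      have hQ2 : Q = ENNReal.ofReal h • μ := by
        rw [hQeq, smul_smul, ENNReal.mul_inv_cancel h0 ENNReal.ofReal_ne_top, one_smul]
      have hQ'2 : Q' = ENNReal.ofReal h • μ := by
        rw [hQ'eq, smul_smul, ENNReal.mul_inv_cancel h0 ENNReal.ofReal_ne_top, one_smul]
      rw [hQ'2, hQ2]
    rw [hQQ'] at hQ'ball hQ'compl
    have heq2 : dtm P h y ^ 2 = (1 / h) * Iy :=
      (main_iff hP2 hh hQle hQuniv y).2 ⟨hQ'ball, hQ'compl⟩
    linarith
end

section
/- Let h ∈ (0,1), k ≥ 1, K > 0, and let P be a Borel probability measure on ℝ^d supported in B̄(0,K), giving no mass to any sphere ∂B̄(x,r) and such that P({y : ⟨y,v⟩ = c_{P,h}(v)}) = 0 for every unit vector v. Let M ⊂ B(0,K) satisfy P(M) = 1, and let d_{P,h,k} be a k-PDTM of P. Then ∫(d_{P,h,k}²(u) − d_{P,h}²(u)) dP(u) ≥ 0, and for every ε > 0 such that M can be covered by k closed balls of radius ε with centers in M, ∫(d_{P,h,k}²(u) − d_{P,h}²(u)) dP(u) ≤ 2 ε ζ_{P,h}(ε),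 where ζ_{P,h}(ε) := sup{‖m(P_{x,h}) − m(P_{y,h})‖ : x, y ∈ M, ‖x − y‖ ≤ ε}. -/
open MeasureTheory ENNReal Set Metric

set_option linter.unusedSectionVars false
set_option linter.deprecated false

namespace Stmt10

variable {d : ℕ}

/-- Bundled standing hypotheses. -/
structure Good (P : Measure (Ed d)) (K : ℝ) : Prop where
  hK : 0 < K
  hPK : P (closedBall (0 : Ed d) K) = 1
  hsph : ∀ (x : Ed d) (r : ℝ), P (sphere x r) = 0

variable {P : Measure (Ed d)} [IsProbabilityMeasure P] {K : ℝ}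

lemma radius_nonneg (P : Measure (Ed d)) (l : ℝ) (x : Ed d) : 0 ≤ dtmRadius P l x :=
  Real.sInf_nonneg fun _ hr => hr.1.le

lemma mem_radiusSet (G : Good P K) {l : ℝ} (hl : l < 1) (x : Ed d) :
    (‖x‖ + K) ∈ {r : ℝ | 0 < r ∧ ENNReal.ofReal l < P (closedBall x r)} := by
  refine ⟨by have := G.hK; positivity, ?_⟩
  have hsub : closedBall (0 : Ed d) K ⊆ closedBall x (‖x‖ + K) := by
    intro y hy
    simp only [mem_closedBall] at hy ⊢
    rw [dist_zero_right] at hy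
    calc dist y x ≤ dist y 0 + dist 0 x := dist_triangle _ _ _
    _ ≤ K + ‖x‖ := by
        rw [dist_zero_right, dist_comm, dist_zero_right]
        exact add_le_add hy le_rfl
    _ = ‖x‖ + K := add_comm _ _
  calc ENNReal.ofReal l < 1 := ENNReal.ofReal_lt_one.2 hl
  _ = P (closedBall (0:Ed d) K) := G.hPK.symm
  _ ≤ P (closedBall x (‖x‖ + K)) := measure_mono hsub

lemma radiusSet_nonempty (G : Good P K) {l : ℝ} (hl : l < 1) (x : Ed d) :
    {r : ℝ | 0 < r ∧ ENNReal.ofReal l < P (closedBall x r)}.Nonempty :=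
  ⟨_, mem_radiusSet G hl x⟩

lemma radius_le (G : Good P K) {l : ℝ} (hl : l < 1) (x : Ed d) :
    dtmRadius P l x ≤ ‖x‖ + K :=
  csInf_le ⟨0, fun _ hr => hr.1.le⟩ (mem_radiusSet G hl x)

lemma radius_mono (G : Good P K) {l₁ l₂ : ℝ} (h12 : l₁ ≤ l₂) (hl : l₂ < 1) (x : Ed d) :
    dtmRadius P l₁ x ≤ dtmRadius P l₂ x := by
  apply csInf_le_csInf ⟨0, fun _ hr => hr.1.le⟩ (radiusSet_nonempty G hl x)
  intro r hr
  exact ⟨hr.1, (ENNReal.ofReal_le_ofReal h12).trans_lt hr.2⟩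

lemma lt_measure_of_radius_lt (G : Good P K) {l r : ℝ} (hl : l < 1) (x : Ed d)
    (hr : dtmRadius P l x < r) : ENNReal.ofReal l < P (closedBall x r) := by
  obtain ⟨s, hs, hsr⟩ := exists_lt_of_csInf_lt (radiusSet_nonempty G hl x) hr
  exact hs.2.trans_le (measure_mono (closedBall_subset_closedBall hsr.le))

lemma measure_le_of_lt_radius (G : Good P K) {l r : ℝ} (hr0 : 0 ≤ r) (x : Ed d)
    (hr : r < dtmRadius P l x) : P (closedBall x r) ≤ ENNReal.ofReal l := by
  rcases eq_or_lt_of_le hr0 with h0 | h0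
  · rw [← h0, closedBall_zero, ← sphere_zero, G.hsph]
    exact zero_le
  · by_contra hcon
    rw [not_le] at hcon
    have hmem : r ∈ {s : ℝ | 0 < s ∧ ENNReal.ofReal l < P (closedBall x s)} := ⟨h0, hcon⟩
    exact absurd (csInf_le ⟨0, fun _ hs => hs.1.le⟩ hmem) (not_le.2 hr)

lemma closedBall_iInter (x : Ed d) (r : ℝ) :
    ⋂ n : ℕ, closedBall x (r + 1/(n+1)) = closedBall x r := by
  ext y
  simp only [mem_iInter, mem_closedBall]
  constructor
  · intro hy
    by_contra hlt
    push_neg at hlt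
    obtain ⟨n, hn⟩ := exists_nat_one_div_lt (sub_pos.2 hlt)
    linarith [hy n]
  · intro hy n
    have : (0:ℝ) < 1/(n+1) := by positivity
    linarith

lemma measure_closedBall_eq_iInf (P : Measure (Ed d)) [IsProbabilityMeasure P] (x : Ed d) (r : ℝ) :
    P (closedBall x r) = ⨅ n : ℕ, P (closedBall x (r + 1/(n+1))) := by
  rw [← closedBall_iInter x r]
  apply Directed.measure_iInter
  · exact fun _ => measurableSet_closedBall.nullMeasurableSet
  · intro m n
    refine ⟨max m n, closedBall_subset_closedBall ?_, closedBall_subset_closedBall ?_⟩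
    · have hmn : (m:ℝ) ≤ ((max m n : ℕ):ℝ) := Nat.cast_le.2 (le_max_left _ _)
      have : (1:ℝ)/((max m n : ℕ) + 1) ≤ 1/(m+1) := by
        apply one_div_le_one_div_of_le (by positivity)
        linarith
      linarith
    · have hmn : (n:ℝ) ≤ ((max m n : ℕ):ℝ) := Nat.cast_le.2 (le_max_right _ _)
      have : (1:ℝ)/((max m n : ℕ) + 1) ≤ 1/(n+1) := by
        apply one_div_le_one_div_of_le (by positivity)
        linarith
      linarith
  · exact ⟨0, measure_ne_top _ _⟩

lemma lt_radius_of_measure_lt (G : Good P K) {l r : ℝ} (hl : l < 1) (x : Ed d)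
    (hm : P (closedBall x r) < ENNReal.ofReal l) : r < dtmRadius P l x := by
  rw [measure_closedBall_eq_iInf P x r] at hm
  obtain ⟨n, hn⟩ := iInf_lt_iff.1 hm
  have hpos : (0:ℝ) < 1/(n+1) := by positivity
  have hle : r + 1/(n+1) ≤ dtmRadius P l x := by
    apply le_csInf (radiusSet_nonempty G hl x)
    intro s hs
    by_contra hcon
    push_neg at hcon
    exact absurd (hs.2.trans_le (measure_mono (closedBall_subset_closedBall hcon.le)))
      (not_lt.2 hn.le)
  linarith

lemma radius_pos (G : Good P K) {l : ℝ} (hl0 : 0 < l) (hl : l < 1) (x : Ed d) :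
    0 < dtmRadius P l x := by
  apply lt_radius_of_measure_lt G hl x
  rw [closedBall_zero, ← sphere_zero, G.hsph]
  exact ENNReal.ofReal_pos.2 hl0

lemma measure_closedBall_eq_ball (G : Good P K) (x : Ed d) (r : ℝ) :
    P (closedBall x r) = P (ball x r) := by
  apply le_antisymm
  · rw [← ball_union_sphere]
    refine (measure_union_le _ _).trans ?_
    rw [G.hsph x r, add_zero]
  · exact measure_mono ball_subset_closedBall

lemma measure_ball_radius (G : Good P K) {l : ℝ} (hl0 : 0 < l) (hl : l < 1) (x : Ed d) :
    P (ball x (dtmRadius P l x)) = ENNReal.ofReal l := by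
  set δ := dtmRadius P l x with hδdef
  have hδ : 0 < δ := radius_pos G hl0 hl x
  have hupper : P (ball x δ) ≤ ENNReal.ofReal l := by
    have hcover : ball x δ = ⋃ n : ℕ, closedBall x (δ - δ/(n+1)) := by
      ext y
      simp only [mem_ball, mem_iUnion, mem_closedBall]
      constructor
      · intro hy
        obtain ⟨n, hn⟩ := exists_nat_one_div_lt (div_pos (sub_pos.2 hy) hδ)
        refine ⟨n, ?_⟩
        have h2 : δ * (1/(n+1)) < δ * ((δ - dist y x)/δ) := by
          exact mul_lt_mul_of_pos_left hn hδ
        rw [mul_div_cancel₀ _ (ne_of_gt hδ)] at h2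
        have h3 : δ/(n+1) = δ * (1/(n+1)) := by ring
        linarith
      · rintro ⟨n, hn⟩
        have : (0:ℝ) < δ/(n+1) := by positivity
        linarith
    rw [hcover, Directed.measure_iUnion ?_]
    · apply iSup_le; intro n
      have h1 : (0:ℝ) < δ/(n+1) := by positivity
      have h2 : δ/(n+1) ≤ δ := by
        apply div_le_self hδ.le
        have : (0:ℝ) ≤ n := Nat.cast_nonneg n
        linarith
      exact measure_le_of_lt_radius G (by linarith) x (by linarith)
    · apply Monotone.directed_le
      intro m n hmn
      apply closedBall_subset_closedBall
      have hc : (m:ℝ) ≤ (n:ℝ) := Nat.cast_le.2 hmn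
      have : δ/((n:ℝ)+1) ≤ δ/((m:ℝ)+1) := by
        apply div_le_div_of_nonneg_left hδ.le (by positivity)
        linarith
      linarith
  have hlower : ENNReal.ofReal l ≤ P (closedBall x δ) := by
    rw [measure_closedBall_eq_iInf P x δ]
    apply le_iInf
    intro n
    have : (0:ℝ) < 1/(n+1) := by positivity
    exact (lt_measure_of_radius_lt G hl x (by linarith)).le
  have := measure_closedBall_eq_ball G x δ
  exact le_antisymm hupper (by rw [← this]; exact hlower)

end Stmt10

namespace Stmt10B
open MeasureTheory ENNReal Set Metric Stmt10
variable {d : ℕ} {P : Measure (Ed d)} [IsProbabilityMeasure P] {K : ℝ}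
set_option linter.unusedSectionVars false

lemma radius_min_monotone (G : Good P K) {h : ℝ} (hh1 : h < 1) (x : Ed d) :
    Monotone (fun l => dtmRadius P (min l h) x) := fun _ _ hab =>
  radius_mono G (min_le_min_right h hab) (lt_of_le_of_lt (min_le_right _ h) hh1) x

lemma sq_lt_iff_of_pos {t r : ℝ} (ht : 0 < t) (hr : r = Real.sqrt t) :
    ∀ a : ℝ, 0 ≤ a → (t < a^2 ↔ r < a) := by
  intro a ha
  rcases ha.eq_or_lt with h0 | h0
  · constructor
    · intro hx; nlinarith
    · intro hx; rw [hr] at hx; have := Real.sqrt_nonneg t; nlinarith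
  · rw [hr]; exact (Real.sqrt_lt' h0).symm

lemma layercake_eq (G : Good P K) {h : ℝ} (hh0 : 0 < h) (hh1 : h < 1) (x : Ed d) :
    ∫⁻ l in Ioc (0:ℝ) h, ENNReal.ofReal ((dtmRadius P l x)^2)
      = ∫⁻ y in ball x (dtmRadius P h x), ENNReal.ofReal (‖x - y‖^2) ∂P := by
  set δ := dtmRadius P h x with hδdef
  set g : ℝ → ℝ := fun l => dtmRadius P (min l h) x with hg
  have hgm : Monotone g := radius_min_monotone G hh1 x
  have hgmeas : Measurable g := hgm.measurable
  have hgnn : ∀ l, 0 ≤ g l := fun l => radius_nonneg P _ x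
  have e1 : ∫⁻ l in Ioc (0:ℝ) h, ENNReal.ofReal ((dtmRadius P l x)^2)
      = ∫⁻ l in Ioc (0:ℝ) h, ENNReal.ofReal ((g l)^2) := by
    apply setLIntegral_congr_fun measurableSet_Ioc
    intro l hl
    simp [hg, min_eq_left hl.2]
  rw [e1]
  have hcont : Continuous fun y : Ed d => ‖x - y‖^2 :=
    ((continuous_const.sub continuous_id).norm.pow 2)
  rw [lintegral_eq_lintegral_meas_lt (volume.restrict (Ioc (0:ℝ) h))
      (ae_of_all _ fun l => sq_nonneg (g l)) ((hgmeas.pow_const 2).aemeasurable),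
    lintegral_eq_lintegral_meas_lt (P.restrict (ball x δ))
      (ae_of_all _ fun y => sq_nonneg ‖x - y‖) hcont.measurable.aemeasurable]
  apply setLIntegral_congr_fun measurableSet_Ioi
  intro t ht
  rw [mem_Ioi] at ht
  set r := Real.sqrt t with hr
  have key := sq_lt_iff_of_pos ht hr
  have hrpos : 0 < r := Real.sqrt_pos.2 ht
  have hA : MeasurableSet {l : ℝ | t < (g l)^2} :=
    measurableSet_lt measurable_const (hgmeas.pow_const 2)
  have hA' : MeasurableSet {y : Ed d | t < ‖x - y‖^2} :=
    measurableSet_lt measurable_const hcont.measurable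
  beta_reduce
  rw [Measure.restrict_apply hA, Measure.restrict_apply hA']
  have hset2 : {y : Ed d | t < ‖x - y‖^2} ∩ ball x δ = ball x δ \ closedBall x r := by
    ext y
    simp only [mem_inter_iff, mem_setOf_eq, mem_diff, mem_ball, mem_closedBall, not_le]
    rw [key ‖x - y‖ (norm_nonneg _), ← dist_eq_norm, dist_comm]
    tauto
  rw [hset2]
  rcases lt_or_ge r δ with hcase | hcase
  · -- main case : 0 < r < δ
    have hPr_le : P (closedBall x r) ≤ ENNReal.ofReal h :=
      measure_le_of_lt_radius G hrpos.le x hcase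
    set a := (P (closedBall x r)).toReal with ha
    have hPra : P (closedBall x r) = ENNReal.ofReal a :=
      (ENNReal.ofReal_toReal (measure_ne_top P _)).symm
    have ha0 : 0 ≤ a := ENNReal.toReal_nonneg
    have hah : a ≤ h := by
      have := ENNReal.toReal_mono ENNReal.ofReal_ne_top hPr_le
      rwa [ENNReal.toReal_ofReal hh0.le] at this
    have claim1 : ∀ l ∈ Ioc (0:ℝ) h, r < dtmRadius P l x → a ≤ l := by
      intro l hl hrl
      have h1 : P (closedBall x r) ≤ ENNReal.ofReal l :=
        measure_le_of_lt_radius G hrpos.le x hrl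
      rw [hPra] at h1
      exact (ENNReal.ofReal_le_ofReal_iff hl.1.le).1 h1
    have claim2 : ∀ l ∈ Ioc (0:ℝ) h, a < l → r < dtmRadius P l x := by
      intro l hl hal
      apply lt_radius_of_measure_lt G (lt_of_le_of_lt hl.2 hh1) x
      rw [hPra]
      exact (ENNReal.ofReal_lt_ofReal_iff hl.1).2 hal
    have hsub1 : Ioc a h ⊆ {l : ℝ | t < (g l)^2} ∩ Ioc (0:ℝ) h := by
      intro l hl
      have hl0 : 0 < l := lt_of_le_of_lt ha0 hl.1
      have hlIoc : l ∈ Ioc (0:ℝ) h := ⟨hl0, hl.2⟩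
      refine ⟨?_, hlIoc⟩
      have hgl : g l = dtmRadius P l x := by simp [hg, min_eq_left hl.2]
      simp only [mem_setOf_eq]
      rw [key (g l) (hgnn l), hgl]
      exact claim2 l hlIoc hl.1
    have hsub2 : {l : ℝ | t < (g l)^2} ∩ Ioc (0:ℝ) h ⊆ Icc a h := by
      rintro l ⟨hl1, hl2⟩
      simp only [mem_setOf_eq] at hl1
      have hgl : g l = dtmRadius P l x := by simp [hg, min_eq_left hl2.2]
      rw [key (g l) (hgnn l), hgl] at hl1
      exact ⟨claim1 l hl2 hl1, hl2.2⟩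
    have hvol : volume ({l : ℝ | t < (g l)^2} ∩ Ioc (0:ℝ) h) = ENNReal.ofReal (h - a) := by
      apply le_antisymm
      · calc volume ({l : ℝ | t < (g l)^2} ∩ Ioc (0:ℝ) h) ≤ volume (Icc a h) :=
              measure_mono hsub2
          _ = ENNReal.ofReal (h - a) := Real.volume_Icc
      · calc ENNReal.ofReal (h - a) = volume (Ioc a h) := Real.volume_Ioc.symm
          _ ≤ _ := measure_mono hsub1
    rw [hvol]
    have hsubB : closedBall x r ⊆ ball x δ := fun z hz => by
      rw [mem_closedBall] at hz; rw [mem_ball]; exact lt_of_le_of_lt hz hcase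
    rw [measure_diff hsubB measurableSet_closedBall.nullMeasurableSet (measure_ne_top P _)]
    rw [measure_ball_radius G hh0 hh1 x, hPra, ← ENNReal.ofReal_sub h ha0]
  · -- degenerate case : δ ≤ r
    have hempty1 : {l : ℝ | t < (g l)^2} ∩ Ioc (0:ℝ) h = ∅ := by
      apply eq_empty_iff_forall_notMem.2
      rintro l ⟨hl1, hl2⟩
      simp only [mem_setOf_eq] at hl1
      have hgl : g l = dtmRadius P l x := by simp [hg, min_eq_left hl2.2]
      rw [key (g l) (hgnn l), hgl] at hl1
      have : dtmRadius P l x ≤ δ := radius_mono G hl2.2 hh1 x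
      linarith
    have hempty2 : ball x δ \ closedBall x r = ∅ := by
      apply eq_empty_iff_forall_notMem.2
      rintro y ⟨hy1, hy2⟩
      rw [mem_ball] at hy1
      exact hy2 (by rw [mem_closedBall]; linarith)
    rw [hempty1, hempty2, measure_empty, measure_empty]

lemma lintegral_ball_le (G : Good P K) {h : ℝ} (hh0 : 0 < h) (hh1 : h < 1) (x : Ed d)
    (Q : Measure (Ed d)) (hQP : Q ≤ P) (hQu : Q Set.univ = ENNReal.ofReal h) :
    ∫⁻ y in ball x (dtmRadius P h x), ENNReal.ofReal (‖x - y‖^2) ∂P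
      ≤ ∫⁻ y, ENNReal.ofReal (‖x - y‖^2) ∂Q := by
  set δ := dtmRadius P h x with hδdef
  set B := ball x δ with hB
  have hδ0 : 0 ≤ δ := radius_nonneg P h x
  haveI : IsFiniteMeasure Q := isFiniteMeasure_of_le P hQP
  have hPB : P B = ENNReal.ofReal h := measure_ball_radius G hh0 hh1 x
  have hsplit : P = (P - Q) + Q := (Measure.sub_add_cancel_of_le hQP).symm
  have hmg : Measurable fun y : Ed d => ENNReal.ofReal (‖x - y‖^2) :=
    (((continuous_const.sub continuous_id).norm.pow 2).measurable).ennreal_ofReal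
  have h1 : ∫⁻ y in B, ENNReal.ofReal (‖x - y‖^2) ∂P
      = ∫⁻ y in B, ENNReal.ofReal (‖x - y‖^2) ∂(P - Q)
        + ∫⁻ y in B, ENNReal.ofReal (‖x - y‖^2) ∂Q := by
    conv_lhs => rw [hsplit]
    rw [Measure.restrict_add, lintegral_add_measure]
  have hQBc : (P - Q) B = Q Bᶜ := by
    rw [Measure.sub_apply measurableSet_ball hQP, hPB]
    apply ENNReal.sub_eq_of_eq_add (measure_ne_top Q B)
    rw [← hQu, ← measure_add_measure_compl measurableSet_ball, add_comm]
  have h2 : ∫⁻ y in B, ENNReal.ofReal (‖x - y‖^2) ∂(P - Q)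
      ≤ ENNReal.ofReal (δ^2) * Q Bᶜ := by
    calc ∫⁻ y in B, ENNReal.ofReal (‖x - y‖^2) ∂(P - Q)
        ≤ ∫⁻ _ in B, ENNReal.ofReal (δ^2) ∂(P - Q) := by
          apply setLIntegral_mono measurable_const
          intro y hy
          apply ENNReal.ofReal_le_ofReal
          rw [hB, mem_ball] at hy
          have h3 : ‖x - y‖ < δ := by rw [← dist_eq_norm, dist_comm]; exact hy
          nlinarith [norm_nonneg (x - y)]
      _ = ENNReal.ofReal (δ^2) * (P - Q) B := setLIntegral_const _ _
      _ = ENNReal.ofReal (δ^2) * Q Bᶜ := by rw [hQBc]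
  have h3 : ENNReal.ofReal (δ^2) * Q Bᶜ ≤ ∫⁻ y in Bᶜ, ENNReal.ofReal (‖x - y‖^2) ∂Q := by
    calc ENNReal.ofReal (δ^2) * Q Bᶜ = ∫⁻ _ in Bᶜ, ENNReal.ofReal (δ^2) ∂Q :=
          (setLIntegral_const _ _).symm
      _ ≤ ∫⁻ y in Bᶜ, ENNReal.ofReal (‖x - y‖^2) ∂Q := by
          apply setLIntegral_mono hmg
          intro y hy
          apply ENNReal.ofReal_le_ofReal
          have hd : δ ≤ dist y x := not_lt.1 (by simpa [hB, mem_ball] using hy)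
          have : δ ≤ ‖x - y‖ := by rwa [← dist_eq_norm, dist_comm]
          nlinarith
  calc ∫⁻ y in B, ENNReal.ofReal (‖x - y‖^2) ∂P
      = ∫⁻ y in B, ENNReal.ofReal (‖x - y‖^2) ∂(P - Q)
        + ∫⁻ y in B, ENNReal.ofReal (‖x - y‖^2) ∂Q := h1
    _ ≤ ∫⁻ y in Bᶜ, ENNReal.ofReal (‖x - y‖^2) ∂Q
        + ∫⁻ y in B, ENNReal.ofReal (‖x - y‖^2) ∂Q := add_le_add_left (h2.trans h3) _
    _ = ∫⁻ y, ENNReal.ofReal (‖x - y‖^2) ∂Q := by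
        rw [add_comm, lintegral_add_compl _ measurableSet_ball]

lemma lintegral_sq_ne_top (hsupp : P ((closedBall (0:Ed d) K)ᶜ) = 0)
    (x : Ed d) (Q : Measure (Ed d)) (hQP : Q ≤ P) [IsFiniteMeasure Q] :
    ∫⁻ y, ENNReal.ofReal (‖x - y‖^2) ∂Q ≠ ⊤ := by
  have hQ0 : Q ((closedBall (0:Ed d) K)ᶜ) = 0 :=
    le_antisymm (le_trans (Measure.le_iff'.1 hQP _) hsupp.le) (zero_le)
  have hae : ∀ᵐ y ∂Q, ‖y‖ ≤ K := by
    rw [ae_iff]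
    apply measure_mono_null ?_ hQ0
    intro y hy
    simp only [mem_setOf_eq, not_le] at hy
    simp only [mem_compl_iff, mem_closedBall_zero_iff, not_le]
    exact hy
  have hb : ∫⁻ y, ENNReal.ofReal (‖x - y‖^2) ∂Q ≤ ENNReal.ofReal ((‖x‖ + K)^2) * Q univ := by
    rw [← lintegral_const]
    apply lintegral_mono_ae
    filter_upwards [hae] with y hy
    apply ENNReal.ofReal_le_ofReal
    have h1 : ‖x - y‖ ≤ ‖x‖ + ‖y‖ := norm_sub_le _ _
    nlinarith [norm_nonneg (x - y), norm_nonneg x, norm_nonneg y]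
  exact ne_top_of_le_ne_top (ENNReal.mul_ne_top ENNReal.ofReal_ne_top (measure_ne_top Q _)) hb

lemma integral_sq_eq (x : Ed d) (Q : Measure (Ed d)) :
    ∫ y, ‖x - y‖^2 ∂Q = (∫⁻ y, ENNReal.ofReal (‖x - y‖^2) ∂Q).toReal :=
  integral_eq_lintegral_of_nonneg_ae (ae_of_all _ fun _ => sq_nonneg _)
    ((continuous_const.sub continuous_id).norm.pow 2).aestronglyMeasurable

lemma dtm_sq_eq_lintegral (G : Good P K) {h : ℝ} (hh0 : 0 < h) (hh1 : h < 1) (x : Ed d) :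
    dtm P h x ^ 2
      = (1/h) * (∫⁻ l in Ioc (0:ℝ) h, ENNReal.ofReal ((dtmRadius P l x)^2)).toReal := by
  have h1 : dtm P h x ^ 2 = (1/h) * ∫ l in (0:ℝ)..h, (dtmRadius P l x)^2 := by
    rw [dtm, Real.sq_sqrt]
    have hInn : 0 ≤ ∫ l in (0:ℝ)..h, (dtmRadius P l x)^2 :=
      intervalIntegral.integral_nonneg hh0.le (fun u _ => sq_nonneg _)
    positivity
  rw [h1, intervalIntegral.integral_of_le hh0.le]
  congr 1
  have hmeas : AEStronglyMeasurable (fun l => (dtmRadius P l x)^2)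
      (volume.restrict (Ioc (0:ℝ) h)) := by
    apply AEStronglyMeasurable.congr
      (((radius_min_monotone G hh1 x).measurable.pow_const 2).aestronglyMeasurable)
    filter_upwards [ae_restrict_mem measurableSet_Ioc] with l hl
    simp [min_eq_left hl.2]
  rw [integral_eq_lintegral_of_nonneg_ae (ae_of_all _ fun _ => sq_nonneg _) hmeas]

end Stmt10B

namespace Stmt10C
open MeasureTheory ENNReal Set Metric Stmt10 Stmt10B
variable {d : ℕ} {P : Measure (Ed d)} [IsProbabilityMeasure P] {K : ℝ}
set_option linter.unusedSectionVars false

lemma mVar_nonneg (μ : Measure (Ed d)) : 0 ≤ mVar μ :=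
  integral_nonneg fun _ => sq_nonneg _

lemma ae_norm_le' (Q : Measure (Ed d)) (hQ0 : Q ((closedBall (0:Ed d) K)ᶜ) = 0) :
    ∀ᵐ y ∂Q, ‖y‖ ≤ K := by
  rw [ae_iff]
  apply measure_mono_null ?_ hQ0
  intro y hy
  simp only [mem_setOf_eq, not_le] at hy
  simp only [mem_compl_iff, mem_closedBall_zero_iff, not_le]
  exact hy

/-- Bias–variance decomposition. -/
lemma bias_variance (μ : Measure (Ed d)) (hμ1 : μ Set.univ = 1)
    (hμK : μ ((closedBall (0:Ed d) K)ᶜ) = 0) (x : Ed d) :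
    ∫ y, ‖x - y‖^2 ∂μ = ‖x - mMean μ‖^2 + mVar μ := by
  haveI : IsProbabilityMeasure μ := ⟨hμ1⟩
  have hae : ∀ᵐ y ∂μ, ‖y‖ ≤ K := ae_norm_le' μ hμK
  have hid : Integrable (fun y : Ed d => y) μ := by
    apply Integrable.mono' (integrable_const K) measurable_id.aestronglyMeasurable
    filter_upwards [hae] with y hy using hy
  set m := mMean μ with hm
  have hsub : Integrable (fun y : Ed d => y - m) μ := hid.sub (integrable_const m)
  have hmean0 : ∫ y, (y - m) ∂μ = 0 := by
    rw [integral_sub hid (integrable_const m), integral_const]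
    simp only [measureReal_def, measure_univ, ENNReal.toReal_one, one_smul]
    rw [hm, mMean, sub_eq_zero]
  have hI2 : Integrable (fun y : Ed d => (inner ℝ (x - m) (y - m) : ℝ)) μ := by
    apply Integrable.mono' (integrable_const (‖x - m‖ * (K + ‖m‖)))
      (Continuous.aestronglyMeasurable
        (Continuous.inner continuous_const (continuous_id.sub continuous_const)))
    filter_upwards [hae] with y hy
    calc ‖(inner ℝ (x-m) (y-m) : ℝ)‖ = |(inner ℝ (x-m) (y-m) : ℝ)| := rfl
    _ ≤ ‖x-m‖*‖y-m‖ := abs_real_inner_le_norm _ _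
    _ ≤ ‖x-m‖*(K+‖m‖) := by
        apply mul_le_mul_of_nonneg_left ?_ (norm_nonneg _)
        calc ‖y-m‖ ≤ ‖y‖+‖m‖ := norm_sub_le _ _
        _ ≤ K+‖m‖ := by linarith
  have hI3 : Integrable (fun y : Ed d => ‖y - m‖^2) μ := by
    apply Integrable.mono' (integrable_const ((K + ‖m‖)^2))
      ((continuous_id.sub continuous_const).norm.pow 2).aestronglyMeasurable
    filter_upwards [hae] with y hy
    rw [Real.norm_eq_abs, abs_of_nonneg (sq_nonneg _)]
    have h1 : ‖y - m‖ ≤ K + ‖m‖ := (norm_sub_le _ _).trans (by linarith)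
    show ‖y - m‖ ^ 2 ≤ (K + ‖m‖) ^ 2
    nlinarith [norm_nonneg (y - m), norm_nonneg m, norm_nonneg y]
  have hptw : ∀ y : Ed d,
      ‖x - y‖^2 = ‖x - m‖^2 - 2*(inner ℝ (x-m) (y-m):ℝ) + ‖y - m‖^2 := by
    intro y
    have hxy : x - y = (x - m) - (y - m) := by abel
    rw [hxy, norm_sub_sq_real]
  have hVar : mVar μ = ∫ y, ‖y - m‖^2 ∂μ := rfl
  calc ∫ y, ‖x-y‖^2 ∂μ
      = ∫ y, (‖x-m‖^2 - 2*(inner ℝ (x-m) (y-m):ℝ) + ‖y-m‖^2) ∂μ := by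
        congr 1; funext y; exact hptw y
    _ = (∫ y, (‖x-m‖^2 - 2*(inner ℝ (x-m) (y-m):ℝ)) ∂μ) + ∫ y, ‖y-m‖^2 ∂μ :=
        integral_add ((integrable_const _).sub (hI2.const_mul 2)) hI3
    _ = ((∫ _, ‖x-m‖^2 ∂μ) - ∫ y, (2:ℝ)*(inner ℝ (x-m) (y-m):ℝ) ∂μ) + mVar μ := by
        rw [integral_sub (integrable_const _) (hI2.const_mul 2), hVar]
    _ = ‖x - m‖^2 + mVar μ := by
        have h2 : ∫ y, (2:ℝ)*(inner ℝ (x-m) (y-m):ℝ) ∂μ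
            = 2 * ∫ y, (inner ℝ (x-m) (y-m):ℝ) ∂μ := by
          simpa using integral_smul (2:ℝ) (fun y : Ed d => (inner ℝ (x-m) (y-m):ℝ))
        rw [h2, integral_inner hsub, hmean0, inner_zero_right]
        simp [integral_const, measure_univ]

/-- The value `‖x − m(μ)‖² + v(μ)` for `μ = h⁻¹ • Q`. -/
lemma T_eq (G : Good P K) (hsupp : P ((closedBall (0:Ed d) K)ᶜ) = 0)
    {h : ℝ} (hh0 : 0 < h) (x : Ed d)
    (Q : Measure (Ed d)) (hQP : Q ≤ P) (hQu : Q Set.univ = ENNReal.ofReal h) :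
    ‖x - mMean ((ENNReal.ofReal h)⁻¹ • Q)‖^2 + mVar ((ENNReal.ofReal h)⁻¹ • Q)
      = (1/h) * (∫⁻ y, ENNReal.ofReal (‖x - y‖^2) ∂Q).toReal := by
  haveI : IsFiniteMeasure Q := isFiniteMeasure_of_le P hQP
  set μ := (ENNReal.ofReal h)⁻¹ • Q with hμ
  have hh0' : ENNReal.ofReal h ≠ 0 := by
    simp only [ne_eq, ENNReal.ofReal_eq_zero, not_le]; exact hh0
  have hμ1 : μ Set.univ = 1 := by
    rw [hμ, Measure.smul_apply, hQu, smul_eq_mul,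
      ENNReal.inv_mul_cancel hh0' ENNReal.ofReal_ne_top]
  have hμK : μ ((closedBall (0:Ed d) K)ᶜ) = 0 := by
    have hQ0 : Q ((closedBall (0:Ed d) K)ᶜ) = 0 :=
      le_antisymm ((Measure.le_iff'.1 hQP _).trans hsupp.le) (zero_le)
    rw [hμ, Measure.smul_apply, hQ0, smul_eq_mul, mul_zero]
  rw [← bias_variance μ hμ1 hμK x]
  have hsc : ((ENNReal.ofReal h)⁻¹).toReal = 1/h := by
    rw [ENNReal.toReal_inv, ENNReal.toReal_ofReal hh0.le, one_div]
  rw [hμ, integral_smul_measure, smul_eq_mul, hsc, integral_sq_eq]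

lemma dtm_sq_le_T (G : Good P K) (hsupp : P ((closedBall (0:Ed d) K)ᶜ) = 0)
    {h : ℝ} (hh0 : 0 < h) (hh1 : h < 1) (x : Ed d)
    (Q : Measure (Ed d)) (hQP : Q ≤ P) (hQu : Q Set.univ = ENNReal.ofReal h) :
    dtm P h x ^ 2 ≤ ‖x - mMean ((ENNReal.ofReal h)⁻¹ • Q)‖^2
      + mVar ((ENNReal.ofReal h)⁻¹ • Q) := by
  haveI : IsFiniteMeasure Q := isFiniteMeasure_of_le P hQP
  rw [T_eq G hsupp hh0 x Q hQP hQu, dtm_sq_eq_lintegral G hh0 hh1 x, layercake_eq G hh0 hh1 x]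
  apply mul_le_mul_of_nonneg_left ?_ (by positivity)
  exact ENNReal.toReal_mono (lintegral_sq_ne_top hsupp x Q hQP)
    (lintegral_ball_le G hh0 hh1 x Q hQP hQu)

lemma restrict_univ_eq (G : Good P K) {h : ℝ} (hh0 : 0 < h) (hh1 : h < 1) (x : Ed d) :
    (P.restrict (ball x (dtmRadius P h x))) Set.univ = ENNReal.ofReal h := by
  rw [Measure.restrict_apply_univ, measure_ball_radius G hh0 hh1 x]

lemma dtm_sq_eq_T (G : Good P K) (hsupp : P ((closedBall (0:Ed d) K)ᶜ) = 0)
    {h : ℝ} (hh0 : 0 < h) (hh1 : h < 1) (x : Ed d) :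
    dtm P h x ^ 2 = ‖x - mMean (locMeasure P h x)‖^2 + mVar (locMeasure P h x) := by
  have e : locMeasure P h x = (ENNReal.ofReal h)⁻¹ • (P.restrict (ball x (dtmRadius P h x))) := rfl
  rw [e, T_eq G hsupp hh0 x _ Measure.restrict_le_self (restrict_univ_eq G hh0 hh1 x),
    dtm_sq_eq_lintegral G hh0 hh1 x, layercake_eq G hh0 hh1 x]

lemma locMeasure_mem (G : Good P K) {h : ℝ} (hh0 : 0 < h) (hh1 : h < 1) (x : Ed d) :
    locMeasure P h x ∈ PlocPt P h x := by
  refine ⟨P.restrict (ball x (dtmRadius P h x)), rfl, Measure.restrict_le_self,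
    restrict_univ_eq G hh0 hh1 x, ?_, ?_⟩
  · intro A hA
    exact Measure.restrict_eq_self P hA
  · rw [Measure.restrict_apply measurableSet_closedBall.compl]
    have he : (closedBall x (dtmRadius P h x))ᶜ ∩ ball x (dtmRadius P h x) = ∅ :=
      eq_empty_iff_forall_notMem.2 fun y hy => hy.1 (ball_subset_closedBall hy.2)
    rw [he, measure_empty]

lemma mean_norm_le (G : Good P K) (hsupp : P ((closedBall (0:Ed d) K)ᶜ) = 0)
    {h : ℝ} (hh0 : 0 < h) (hh1 : h < 1) (x : Ed d) :
    ‖mMean (locMeasure P h x)‖ ≤ K := by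
  set Q := P.restrict (ball x (dtmRadius P h x)) with hQ
  haveI : IsFiniteMeasure Q := isFiniteMeasure_of_le P Measure.restrict_le_self
  have hQ0 : Q ((closedBall (0:Ed d) K)ᶜ) = 0 :=
    le_antisymm ((Measure.le_iff'.1 Measure.restrict_le_self _).trans hsupp.le) (zero_le)
  have hae := ae_norm_le' Q hQ0
  have hb := norm_integral_le_of_norm_le_const (μ := Q) (f := fun y : Ed d => y) (C := K) hae
  have hQu : Q Set.univ = ENNReal.ofReal h := restrict_univ_eq G hh0 hh1 x
  rw [measureReal_def, hQu, ENNReal.toReal_ofReal hh0.le] at hb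
  have e : mMean (locMeasure P h x) = ((ENNReal.ofReal h)⁻¹).toReal • ∫ y, y ∂Q := by
    rw [mMean]
    exact integral_smul_measure _ _
  rw [e, norm_smul]
  have hsc : ((ENNReal.ofReal h)⁻¹).toReal = 1/h := by
    rw [ENNReal.toReal_inv, ENNReal.toReal_ofReal hh0.le, one_div]
  rw [hsc, Real.norm_eq_abs, abs_of_nonneg (by positivity : (0:ℝ) ≤ 1/h)]
  calc (1/h) * ‖∫ y, y ∂Q‖ ≤ (1/h) * (K * h) :=
        mul_le_mul_of_nonneg_left hb (by positivity)
    _ = K := by field_simp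

lemma norm_algebra (u c a b : Ed d) :
    (‖c - b‖^2 - ‖c - a‖^2) + (‖u - a‖^2 - ‖u - b‖^2)
      = 2 * (inner ℝ (u - c) (b - a) : ℝ) := by
  simp only [norm_sub_sq_real, inner_sub_left, inner_sub_right]
  ring

end Stmt10C

namespace Stmt10D
open MeasureTheory ENNReal Set Metric Stmt10 Stmt10B Stmt10C
variable {d : ℕ} {P : Measure (Ed d)} [IsProbabilityMeasure P] {K : ℝ}
set_option linter.unusedSectionVars false

lemma radius_lip (G : Good P K) {l : ℝ} (hl : l < 1) (x y : Ed d) :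
    dtmRadius P l x ≤ dtmRadius P l y + dist x y := by
  have key : ∀ r ∈ {r : ℝ | 0 < r ∧ ENNReal.ofReal l < P (closedBall y r)},
      dtmRadius P l x ≤ r + dist x y := by
    intro r hr
    apply csInf_le ⟨0, fun s hs => hs.1.le⟩
    have hd : (0:ℝ) ≤ dist x y := dist_nonneg
    refine ⟨by linarith [hr.1], ?_⟩
    refine hr.2.trans_le (measure_mono ?_)
    intro z hz
    rw [mem_closedBall] at hz ⊢
    calc dist z x ≤ dist z y + dist y x := dist_triangle _ _ _
    _ ≤ r + dist x y := by rw [dist_comm y x]; linarith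
  have h2 : dtmRadius P l x - dist x y ≤ dtmRadius P l y := by
    apply le_csInf (radiusSet_nonempty G hl y)
    intro r hr
    linarith [key r hr]
  linarith

lemma intInt (G : Good P K) {h : ℝ} (hh0 : 0 < h) (hh1 : h < 1) (x : Ed d) :
    IntervalIntegrable (fun l => (dtmRadius P l x)^2) volume 0 h := by
  rw [intervalIntegrable_iff, uIoc_of_le hh0.le]
  apply Integrable.mono' (g := fun _ => (‖x‖+K)^2)
    (integrableOn_const (by rw [Real.volume_Ioc]; exact ENNReal.ofReal_ne_top))
  · apply AEStronglyMeasurable.congr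
      (((radius_min_monotone G hh1 x).measurable.pow_const 2).aestronglyMeasurable)
    filter_upwards [ae_restrict_mem measurableSet_Ioc] with l hl
    simp [min_eq_left hl.2]
  · filter_upwards [ae_restrict_mem measurableSet_Ioc] with l hl
    have hl1 : l < 1 := lt_of_le_of_lt hl.2 hh1
    rw [Real.norm_eq_abs, abs_of_nonneg (sq_nonneg _)]
    nlinarith [radius_le G hl1 x, radius_nonneg P l x]

lemma G_lip (G : Good P K) {h : ℝ} (hh0 : 0 < h) (hh1 : h < 1) (x y : Ed d) :
    |(∫ l in (0:ℝ)..h, (dtmRadius P l x)^2) - ∫ l in (0:ℝ)..h, (dtmRadius P l y)^2|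
      ≤ h * ((‖x‖ + ‖y‖ + 2*K) * dist x y) := by
  have hintx := intInt G hh0 hh1 x
  have hinty := intInt G hh0 hh1 y
  rw [← intervalIntegral.integral_sub hintx hinty]
  refine (intervalIntegral.abs_integral_le_integral_abs hh0.le).trans ?_
  have hmono : ∫ l in (0:ℝ)..h, |(dtmRadius P l x)^2 - (dtmRadius P l y)^2|
      ≤ ∫ l in (0:ℝ)..h, ((‖x‖ + ‖y‖ + 2*K) * dist x y) := by
    apply intervalIntegral.integral_mono_on hh0.le (hintx.sub hinty).abs
      intervalIntegrable_const
    intro l hl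
    have hl1 : l < 1 := lt_of_le_of_lt hl.2 hh1
    have h1 := radius_lip G hl1 x y
    have h2 := radius_lip G hl1 y x
    have h3 := radius_le G hl1 x
    have h4 := radius_le G hl1 y
    have h5 := radius_nonneg P l x
    have h6 := radius_nonneg P l y
    have hd : dist y x = dist x y := dist_comm _ _
    have hd0 : (0:ℝ) ≤ dist x y := dist_nonneg
    rw [abs_le]
    constructor <;> nlinarith
  refine hmono.trans (le_of_eq ?_)
  rw [intervalIntegral.integral_const, smul_eq_mul, sub_zero]

lemma G_continuous (G : Good P K) {h : ℝ} (hh0 : 0 < h) (hh1 : h < 1) :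
    Continuous (fun x : Ed d => ∫ l in (0:ℝ)..h, (dtmRadius P l x)^2) := by
  rw [continuous_iff_continuousAt]
  intro x₀
  rw [Metric.continuousAt_iff]
  intro ε hε
  set C := h * (2*‖x₀‖ + 1 + 2*K) + 1 with hC
  have hC1 : 0 ≤ h * (2*‖x₀‖ + 1 + 2*K) :=
    mul_nonneg hh0.le (by have := G.hK; positivity)
  have hCpos : 0 < C := by linarith
  refine ⟨min 1 (ε / C), lt_min one_pos (div_pos hε hCpos), ?_⟩
  intro y hy
  have h1 : dist y x₀ < 1 := lt_of_lt_of_le hy (min_le_left _ _)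
  have h2 : dist y x₀ < ε / C := lt_of_lt_of_le hy (min_le_right _ _)
  have h3 := G_lip G hh0 hh1 y x₀
  have h4 : ‖y‖ ≤ ‖x₀‖ + 1 := by
    have h5 := norm_sub_norm_le y x₀
    rw [← dist_eq_norm] at h5
    linarith
  have hd0 : (0:ℝ) ≤ dist y x₀ := dist_nonneg
  have h5 : h * ((‖y‖ + ‖x₀‖ + 2*K) * dist y x₀) ≤ (C - 1) * dist y x₀ := by
    rw [hC]
    have hle : (‖y‖ + ‖x₀‖ + 2*K) ≤ (2*‖x₀‖ + 1 + 2*K) := by linarith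
    have h5' : h*(‖y‖ + ‖x₀‖ + 2*K) ≤ h*(2*‖x₀‖ + 1 + 2*K) :=
      mul_le_mul_of_nonneg_left hle hh0.le
    nlinarith [mul_le_mul_of_nonneg_right h5' hd0]
  have h6 : (C - 1) * dist y x₀ < ε := by
    have h7 : C * dist y x₀ < C * (ε / C) := by
      rcases hd0.eq_or_lt with h8 | h8
      · rw [← h8, mul_zero]; exact mul_pos hCpos (div_pos hε hCpos)
      · exact mul_lt_mul_of_pos_left h2 hCpos
    rw [mul_div_cancel₀ _ (ne_of_gt hCpos)] at h7
    nlinarith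
  rw [Real.dist_eq]
  linarith

lemma dtm_sq_fun_eq {h : ℝ} (hh0 : 0 < h) :
    (fun u : Ed d => dtm P h u ^ 2)
      = fun u => (1/h) * ∫ l in (0:ℝ)..h, (dtmRadius P l u)^2 := by
  funext u
  rw [dtm, Real.sq_sqrt]
  exact mul_nonneg (by positivity)
    (intervalIntegral.integral_nonneg hh0.le fun _ _ => sq_nonneg _)

lemma dtm_sq_integrable (G : Good P K) (hsupp : P ((closedBall (0:Ed d) K)ᶜ) = 0)
    {h : ℝ} (hh0 : 0 < h) (hh1 : h < 1) :
    Integrable (fun u : Ed d => dtm P h u ^ 2) P := by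
  rw [dtm_sq_fun_eq hh0]
  apply Integrable.mono' (integrable_const ((2*K)^2))
  · exact (continuous_const.mul (G_continuous G hh0 hh1)).aestronglyMeasurable
  · filter_upwards [ae_norm_le' (K := K) P hsupp] with u hu
    have hGnn : 0 ≤ ∫ l in (0:ℝ)..h, (dtmRadius P l u)^2 :=
      intervalIntegral.integral_nonneg hh0.le fun _ _ => sq_nonneg _
    rw [Real.norm_eq_abs, abs_of_nonneg (mul_nonneg (by positivity) hGnn)]
    have hbound : ∫ l in (0:ℝ)..h, (dtmRadius P l u)^2 ≤ h * ((‖u‖+K)^2) := by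
      have hm := intervalIntegral.integral_mono_on (g := fun _ => (‖u‖+K)^2) hh0.le
        (intInt G hh0 hh1 u) intervalIntegrable_const (fun l hl => by
          have hl1 : l < 1 := lt_of_le_of_lt hl.2 hh1
          show dtmRadius P l u ^ 2 ≤ (‖u‖ + K)^2
          nlinarith [radius_le G hl1 u, radius_nonneg P l u])
      rwa [intervalIntegral.integral_const, smul_eq_mul, sub_zero] at hm
    calc (1/h) * ∫ l in (0:ℝ)..h, (dtmRadius P l u)^2 ≤ (1/h)*(h*((‖u‖+K)^2)) :=
          mul_le_mul_of_nonneg_left hbound (by positivity)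
      _ = (‖u‖+K)^2 := by field_simp
      _ ≤ (2*K)^2 := by nlinarith [norm_nonneg u, G.hK]

lemma infcomp_integrable (hsupp : P ((closedBall (0:Ed d) K)ᶜ) = 0)
    {k : ℕ} (hk : 1 ≤ k) (m : Fin k → Ed d) (v : Fin k → ℝ) (hv : ∀ i, 0 ≤ v i) :
    Integrable (fun u : Ed d => ⨅ i, (‖u - m i‖^2 + v i)) P := by
  haveI : Nonempty (Fin k) := ⟨⟨0, hk⟩⟩
  have hbdd : ∀ u : Ed d, BddBelow (range fun i => (‖u - m i‖^2 + v i)) := fun u =>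
    ⟨0, by rintro z ⟨i, rfl⟩; have := hv i; positivity⟩
  apply Integrable.mono' (integrable_const ((K + ‖m ⟨0, hk⟩‖)^2 + v ⟨0, hk⟩))
  · apply Measurable.aestronglyMeasurable
    apply Measurable.iInf
    intro i
    exact (((continuous_id.sub continuous_const).norm.pow 2).measurable).add measurable_const
  · filter_upwards [ae_norm_le' (K := K) P hsupp] with u hu
    rw [Real.norm_eq_abs, abs_of_nonneg (le_ciInf fun i => by have := hv i; positivity)]
    refine (ciInf_le (hbdd u) ⟨0, hk⟩).trans ?_
    have h1 : ‖u - m ⟨0,hk⟩‖ ≤ K + ‖m ⟨0,hk⟩‖ := (norm_sub_le _ _).trans (by linarith)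
    nlinarith [norm_nonneg (u - m ⟨0,hk⟩)]

end Stmt10D

open Stmt10 Stmt10B Stmt10C Stmt10D

set_option linter.unusedVariables false in
set_option maxHeartbeats 1000000 in
/-- the `k`-PDTM approximates the DTM in `L¹(P)`, with an error controlled by the
covering radius and the continuity modulus of the local means. -/
theorem stmt_10 {d : ℕ} (h K : ℝ) (hh : h ∈ Set.Ioo (0:ℝ) 1) (hK : 0 < K)
    (k : ℕ) (hk : 1 ≤ k)
    (P : Measure (Ed d)) [IsProbabilityMeasure P]
    (hsupp : P ((closedBall (0 : Ed d) K)ᶜ) = 0)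
    (hsph : ∀ (x : Ed d) (r : ℝ), P (sphere x r) = 0)
    (hhyp : ∀ v : Ed d, ‖v‖ = 1 → P {y : Ed d | (inner ℝ y v : ℝ) = cInf P h v} = 0)
    (M : Set (Ed d)) (hM : M ⊆ ball (0 : Ed d) K) (hPM : P M = 1)
    (f : Ed d → ℝ) (hf : IsKPDTM P h k f) :
    0 ≤ ∫ u, (f u ^ 2 - dtm P h u ^ 2) ∂P ∧
    ∀ ε : ℝ, 0 < ε →
      (∃ c : Fin k → Ed d, (∀ i, c i ∈ M) ∧ M ⊆ ⋃ i, closedBall (c i) ε) →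
      ∫ u, (f u ^ 2 - dtm P h u ^ 2) ∂P ≤
        2 * ε * sSup {z : ℝ | ∃ x ∈ M, ∃ y ∈ M, ‖x - y‖ ≤ ε ∧
          z = ‖mMean (locMeasure P h x) - mMean (locMeasure P h y)‖} := by
  obtain ⟨t, μs, hkc, hmin, hfx⟩ := hf
  have hh0 : 0 < h := hh.1
  have hh1 : h < 1 := hh.2
  have hPK : P (closedBall (0 : Ed d) K) = 1 :=
    (prob_compl_eq_zero_iff measurableSet_closedBall).1 hsupp
  have G : Stmt10.Good P K := ⟨hK, hPK, hsph⟩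
  haveI : Nonempty (Fin k) := ⟨⟨0, hk⟩⟩
  have hQdata : ∀ i, ∃ Q : Measure (Ed d),
      μs i = (ENNReal.ofReal h)⁻¹ • Q ∧ Q ≤ P ∧ Q Set.univ = ENNReal.ofReal h := by
    intro i
    have hmem := hkc i
    rcases ht : t i with x | v
    · rw [ht] at hmem
      obtain ⟨Q, h1, h2, h3, -, -⟩ := hmem
      exact ⟨Q, h1, h2, h3⟩
    · rw [ht] at hmem
      obtain ⟨Q, h1, h2, h3, -, -⟩ := hmem
      exact ⟨Q, h1, h2, h3⟩
  have hdtm_le : ∀ u : Ed d, ∀ i, dtm P h u ^ 2 ≤ ‖u - mMean (μs i)‖^2 + mVar (μs i) := by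
    intro u i
    obtain ⟨Q, hQeq, hQP, hQu⟩ := hQdata i
    rw [hQeq]
    exact dtm_sq_le_T G hsupp hh0 hh1 u Q hQP hQu
  have hfsq : ∀ u, f u ^ 2 = ⨅ i, (‖u - mMean (μs i)‖^2 + mVar (μs i)) := by
    intro u
    rw [hfx u, Real.sq_sqrt]
    exact le_ciInf fun i => by have := mVar_nonneg (μs i); positivity
  have hptle : ∀ u, dtm P h u ^ 2 ≤ f u ^ 2 := fun u => by
    rw [hfsq u]; exact le_ciInf (hdtm_le u)
  refine ⟨integral_nonneg fun u => sub_nonneg.2 (hptle u), ?_⟩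
  rintro ε hε ⟨c, hcM, hcov⟩
  set i₀ : Fin k := ⟨0, hk⟩ with hi₀
  set Z : Set ℝ := {z : ℝ | ∃ x ∈ M, ∃ y ∈ M, ‖x - y‖ ≤ ε ∧
      z = ‖mMean (locMeasure P h x) - mMean (locMeasure P h y)‖} with hZdef
  have hZbdd : BddAbove Z := by
    refine ⟨2*K, ?_⟩
    rintro z ⟨x, hx, y, hy, -, rfl⟩
    have h1 := mean_norm_le G hsupp hh0 hh1 x
    have h2 := mean_norm_le G hsupp hh0 hh1 y
    calc ‖mMean (locMeasure P h x) - mMean (locMeasure P h y)‖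
        ≤ ‖mMean (locMeasure P h x)‖ + ‖mMean (locMeasure P h y)‖ := norm_sub_le _ _
      _ ≤ 2*K := by linarith
  have hZ0 : (0:ℝ) ∈ Z :=
    ⟨c i₀, hcM i₀, c i₀, hcM i₀, by simp [hε.le], by simp⟩
  have hζ0 : 0 ≤ sSup Z := le_csSup hZbdd hZ0
  have hcomp : IsKCenter P h k (fun i => Sum.inl (c i)) (fun i => locMeasure P h (c i)) :=
    fun i => locMeasure_mem G hh0 hh1 (c i)
  have hrle := hmin _ _ hcomp
  have hIdtm : Integrable (fun u => dtm P h u ^ 2) P := dtm_sq_integrable G hsupp hh0 hh1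
  have hIf : Integrable (fun u => f u ^ 2) P := by
    have he : (fun u => f u ^2) = fun u => ⨅ i, (‖u - mMean (μs i)‖^2 + mVar (μs i)) :=
      funext hfsq
    rw [he]
    exact infcomp_integrable hsupp hk _ _ fun i => mVar_nonneg _
  have hIF' : Integrable (fun u =>
      ⨅ i, (‖u - mMean (locMeasure P h (c i))‖^2 + mVar (locMeasure P h (c i)))) P :=
    infcomp_integrable hsupp hk _ _ fun i => mVar_nonneg _
  have hptM : ∀ u ∈ M,
      (⨅ i, (‖u - mMean (locMeasure P h (c i))‖^2 + mVar (locMeasure P h (c i))))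
        - dtm P h u ^ 2 ≤ 2 * ε * sSup Z := by
    intro u hu
    obtain ⟨i, hi⟩ := mem_iUnion.1 (hcov hu)
    rw [mem_closedBall] at hi
    have hvaru := dtm_sq_eq_T G hsupp hh0 hh1 u
    have hvarc := dtm_sq_eq_T G hsupp hh0 hh1 (c i)
    have hopt : dtm P h (c i) ^ 2 ≤ ‖c i - mMean (locMeasure P h u)‖^2
        + mVar (locMeasure P h u) :=
      dtm_sq_le_T G hsupp hh0 hh1 (c i) _ Measure.restrict_le_self
        (restrict_univ_eq G hh0 hh1 u)
    have hdist : ‖u - c i‖ ≤ ε := by rw [← dist_eq_norm]; exact hi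
    have hZmem : ‖mMean (locMeasure P h u) - mMean (locMeasure P h (c i))‖ ∈ Z :=
      ⟨u, hu, c i, hcM i, hdist, rfl⟩
    have hζ : ‖mMean (locMeasure P h u) - mMean (locMeasure P h (c i))‖ ≤ sSup Z :=
      le_csSup hZbdd hZmem
    have hinner := real_inner_le_norm (u - c i)
      (mMean (locMeasure P h u) - mMean (locMeasure P h (c i)))
    have halg := norm_algebra u (c i) (mMean (locMeasure P h (c i)))
      (mMean (locMeasure P h u))
    have hnn1 := norm_nonneg (mMean (locMeasure P h u) - mMean (locMeasure P h (c i)))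
    have hnn2 := norm_nonneg (u - c i)
    have hbdd' : BddBelow (Set.range fun i' : Fin k =>
        ‖u - mMean (locMeasure P h (c i'))‖^2 + mVar (locMeasure P h (c i'))) := by
      refine ⟨0, ?_⟩
      rintro z ⟨j, rfl⟩
      have := mVar_nonneg (locMeasure P h (c j))
      positivity
    have hinf_le :
        (⨅ i', (‖u - mMean (locMeasure P h (c i'))‖^2 + mVar (locMeasure P h (c i'))))
          ≤ ‖u - mMean (locMeasure P h (c i))‖^2 + mVar (locMeasure P h (c i)) :=
      ciInf_le hbdd' i
    have hinner2 : 2*(inner ℝ (u - c i)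
        (mMean (locMeasure P h u) - mMean (locMeasure P h (c i))) : ℝ)
        ≤ 2 * ε * sSup Z := by nlinarith
    linarith
  have hdtmmeas : Measurable (fun u : Ed d => dtm P h u ^ 2) := by
    rw [dtm_sq_fun_eq hh0]
    exact (continuous_const.mul (G_continuous G hh0 hh1)).measurable
  have hFmeas : Measurable (fun u : Ed d =>
      (⨅ i, (‖u - mMean (locMeasure P h (c i))‖^2 + mVar (locMeasure P h (c i))))
        - dtm P h u ^ 2) := by
    apply Measurable.sub ?_ hdtmmeas
    apply Measurable.iInf
    intro i
    exact (((continuous_id.sub continuous_const).norm.pow 2).measurable).add measurable_const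
  have hae : ∀ᵐ u ∂P,
      (⨅ i, (‖u - mMean (locMeasure P h (c i))‖^2 + mVar (locMeasure P h (c i))))
        - dtm P h u ^ 2 ≤ 2 * ε * sSup Z := by
    set N : Set (Ed d) := {u : Ed d |
      ¬ ((⨅ i, (‖u - mMean (locMeasure P h (c i))‖^2 + mVar (locMeasure P h (c i))))
        - dtm P h u ^ 2 ≤ 2 * ε * sSup Z)} with hNdef
    have hNmeas : MeasurableSet N := by
      have he : N = {u : Ed d | 2 * ε * sSup Z <
          (⨅ i, (‖u - mMean (locMeasure P h (c i))‖^2 + mVar (locMeasure P h (c i))))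
            - dtm P h u ^ 2} := by
        ext u
        simp only [hNdef, mem_setOf_eq, not_le]
      rw [he]
      exact measurableSet_lt measurable_const hFmeas
    have hMN : M ⊆ Nᶜ := fun u hu => by
      simp only [hNdef, mem_compl_iff, mem_setOf_eq, not_not]
      exact hptM u hu
    have hNc : P Nᶜ = 1 := le_antisymm prob_le_one (hPM ▸ measure_mono hMN)
    have hN0 : P N = 0 := by
      by_contra hne
      have h2 := measure_compl hNmeas (measure_ne_top P _)
      rw [measure_univ] at h2
      have h3 := ENNReal.sub_lt_self (a := 1) (b := P N) one_ne_top one_ne_zero hne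
      rw [← h2, hNc] at h3
      exact lt_irrefl _ h3
    rw [ae_iff]
    exact hN0
  have hconst : ∫ _u, (2 * ε * sSup Z) ∂P = 2 * ε * sSup Z := by
    rw [integral_const]; simp
  have hint2 : ∫ u, f u ^ 2 ∂P
      ≤ ∫ u, (⨅ i, (‖u - mMean (locMeasure P h (c i))‖^2
          + mVar (locMeasure P h (c i)))) ∂P := by
    have e : ∫ u, f u ^ 2 ∂P = risk P k μs := by
      show _ = ∫ u, (⨅ i, (‖u - mMean (μs i)‖^2 + mVar (μs i))) ∂P
      congr 1
      funext u
      exact hfsq u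
    rw [e]
    exact hrle
  have hint4 : ∫ u, ((⨅ i, (‖u - mMean (locMeasure P h (c i))‖^2
      + mVar (locMeasure P h (c i)))) - dtm P h u ^ 2) ∂P ≤ 2 * ε * sSup Z := by
    rw [← hconst]
    exact integral_mono_ae (hIF'.sub hIdtm) (integrable_const _) hae
  calc ∫ u, (f u ^ 2 - dtm P h u ^ 2) ∂P
      = (∫ u, f u ^ 2 ∂P) - ∫ u, dtm P h u ^ 2 ∂P := integral_sub hIf hIdtm
    _ ≤ (∫ u, (⨅ i, (‖u - mMean (locMeasure P h (c i))‖^2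
          + mVar (locMeasure P h (c i)))) ∂P) - ∫ u, dtm P h u ^ 2 ∂P :=
        sub_le_sub_right hint2 _
    _ = ∫ u, ((⨅ i, (‖u - mMean (locMeasure P h (c i))‖^2
          + mVar (locMeasure P h (c i)))) - dtm P h u ^ 2) ∂P :=
        (integral_sub hIF' hIdtm).symm
    _ ≤ 2 * ε * sSup Z := hint4
end

section
/- Let h ∈ (0,1), K > 0, and let P be a Borel probability measure on ℝ^d with support contained in B̄(0,K) that is absolutely continuous with respect to Lebesgue measure with density f satisfying 0 < f_min ≤ f ≤ f_max Lebesgue-almost everywhere on its support. Then there exists a constant C, depending only on f_max, K, d and h, such that for every k ≥ 1 and every k-PDTM d_{P,h,k} of P, 0 ≤ ∫(d_{P,h,k}²(u) − d_{P,h}²(u)) dP(u) ≤ C·k^{−2/d}. -/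
open MeasureTheory ENNReal Set Metric

noncomputable section Aux

open Filter Topology

variable {d : ℕ}

lemma delta_nonneg (P : Measure (Ed d)) (l : ℝ) (x : Ed d) : 0 ≤ dtmRadius P l x :=
  Real.sInf_nonneg fun r hr => hr.1.le

lemma delta_bddBelow (P : Measure (Ed d)) (l : ℝ) (x : Ed d) :
    BddBelow {r : ℝ | 0 < r ∧ ENNReal.ofReal l < P (closedBall x r)} :=
  ⟨0, fun r hr => hr.1.le⟩

lemma delta_le_of_lt {P : Measure (Ed d)} {l : ℝ} {x : Ed d} {r : ℝ} (hr : 0 < r)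
    (hP : ENNReal.ofReal l < P (closedBall x r)) : dtmRadius P l x ≤ r :=
  csInf_le (delta_bddBelow P l x) ⟨hr, hP⟩

lemma measure_le_of_lt_delta {P : Measure (Ed d)} {l : ℝ} {x : Ed d} {r : ℝ} (hr : 0 < r)
    (hrd : r < dtmRadius P l x) : P (closedBall x r) ≤ ENNReal.ofReal l := by
  by_contra hc
  exact absurd (delta_le_of_lt hr (lt_of_not_ge hc)) (not_le.2 hrd)

lemma prob_cb_K {P : Measure (Ed d)} [IsProbabilityMeasure P] {K : ℝ}
    (hsupp : P ((closedBall (0 : Ed d) K)ᶜ) = 0) : P (closedBall (0 : Ed d) K) = 1 := by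
  have h2 := measure_add_measure_compl (μ := P)
    (measurableSet_closedBall (x := (0 : Ed d)) (ε := K))
  rw [hsupp, add_zero, measure_univ] at h2
  exact h2

lemma prob_cb_one {P : Measure (Ed d)} [IsProbabilityMeasure P] {K : ℝ}
    (hsupp : P ((closedBall (0 : Ed d) K)ᶜ) = 0) {x : Ed d} {r : ℝ}
    (hr : ‖x‖ + K ≤ r) : P (closedBall x r) = 1 := by
  refine le_antisymm prob_le_one ?_
  rw [← prob_cb_K hsupp]
  refine measure_mono fun y hy => ?_
  simp only [mem_closedBall, dist_zero_right] at hy ⊢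
  calc dist y x ≤ ‖y‖ + ‖x‖ := by
        rw [dist_eq_norm]; exact (norm_sub_le _ _).trans (by ring_nf; rfl)
    _ ≤ r := by linarith

lemma S_mem_norm_add {P : Measure (Ed d)} [IsProbabilityMeasure P] {K : ℝ} (hK : 0 < K)
    (hsupp : P ((closedBall (0 : Ed d) K)ᶜ) = 0) {l : ℝ} (hl : l < 1) (x : Ed d) :
    (‖x‖ + K) ∈ {r : ℝ | 0 < r ∧ ENNReal.ofReal l < P (closedBall x r)} := by
  refine ⟨by positivity, ?_⟩
  rw [prob_cb_one hsupp le_rfl]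
  exact ENNReal.ofReal_lt_one.2 hl

lemma delta_le_norm_add {P : Measure (Ed d)} [IsProbabilityMeasure P] {K : ℝ} (hK : 0 < K)
    (hsupp : P ((closedBall (0 : Ed d) K)ᶜ) = 0) {l : ℝ} (hl : l < 1) (x : Ed d) :
    dtmRadius P l x ≤ ‖x‖ + K :=
  csInf_le (delta_bddBelow P l x) (S_mem_norm_add hK hsupp hl x)

lemma delta_mono_l {P : Measure (Ed d)} [IsProbabilityMeasure P] {K : ℝ} (hK : 0 < K)
    (hsupp : P ((closedBall (0 : Ed d) K)ᶜ) = 0) {l l' : ℝ} (hl' : l' < 1) (hll : l ≤ l')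
    (x : Ed d) : dtmRadius P l x ≤ dtmRadius P l' x := by
  refine csInf_le_csInf (delta_bddBelow P l x) ⟨_, S_mem_norm_add hK hsupp hl' x⟩ ?_
  rintro r ⟨hr0, hr⟩
  exact ⟨hr0, lt_of_le_of_lt (ENNReal.ofReal_le_ofReal hll) hr⟩

lemma delta_lip {P : Measure (Ed d)} [IsProbabilityMeasure P] {K : ℝ} (hK : 0 < K)
    (hsupp : P ((closedBall (0 : Ed d) K)ᶜ) = 0) {l : ℝ} (hl : l < 1) (x y : Ed d) :
    dtmRadius P l x ≤ dtmRadius P l y + dist x y := by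
  have hne : {r : ℝ | 0 < r ∧ ENNReal.ofReal l < P (closedBall y r)}.Nonempty :=
    ⟨_, S_mem_norm_add hK hsupp hl y⟩
  have : dtmRadius P l x - dist x y ≤ dtmRadius P l y := by
    refine le_csInf hne ?_
    rintro r ⟨hr0, hr⟩
    have hsub : closedBall y r ⊆ closedBall x (r + dist x y) := by
      intro z hz
      simp only [mem_closedBall] at hz ⊢
      calc dist z x ≤ dist z y + dist y x := dist_triangle _ _ _
        _ ≤ r + dist x y := by rw [dist_comm y x]; linarith
    have := delta_le_of_lt (by positivity) (lt_of_lt_of_le hr (measure_mono hsub))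
    linarith
  linarith

lemma F_rightcont (P : Measure (Ed d)) [IsFiniteMeasure P] (x : Ed d) (a : ℝ) :
    Tendsto (fun r => P (closedBall x r)) (𝓝[>] a) (𝓝 (P (closedBall x a))) := by
  have hiI : closedBall x a = ⋂ r > a, closedBall x r := by
    ext y
    simp only [mem_closedBall, mem_iInter]
    constructor
    · intro hy r hr
      exact hy.trans hr.le
    · intro hy
      by_contra hc
      push_neg at hc
      obtain ⟨r, hr1, hr2⟩ := exists_between hc
      exact absurd (hy r hr1) (not_le.2 hr2)
  have := tendsto_measure_biInter_gt (μ := P) (s := fun r => closedBall x r) (a := a)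
    (fun r _ => measurableSet_closedBall.nullMeasurableSet)
    (fun i j _ hij => closedBall_subset_closedBall hij)
    ⟨a + 1, by linarith, (measure_lt_top P _).ne⟩
  rw [← hiI] at this
  exact this

lemma measure_cb_delta_ge {P : Measure (Ed d)} [IsProbabilityMeasure P] {K : ℝ} (hK : 0 < K)
    (hsupp : P ((closedBall (0 : Ed d) K)ᶜ) = 0) {l : ℝ} (hl : l < 1) (x : Ed d) :
    ENNReal.ofReal l ≤ P (closedBall x (dtmRadius P l x)) := by
  set δ := dtmRadius P l x
  have hgt : ∀ r, δ < r → ENNReal.ofReal l < P (closedBall x r) := by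
    intro r hr
    obtain ⟨s, ⟨hs0, hsP⟩, hsr⟩ :=
      (csInf_lt_iff (delta_bddBelow P l x) ⟨_, S_mem_norm_add hK hsupp hl x⟩).1 hr
    exact hsP.trans_le (measure_mono (closedBall_subset_closedBall hsr.le))
  refine ge_of_tendsto (F_rightcont P x δ) ?_
  filter_upwards [self_mem_nhdsWithin] with r hr
  exact (hgt r hr).le

end Aux
noncomputable section Aux2

open Filter Topology

variable {d : ℕ}

lemma delta_pos {P : Measure (Ed d)} [IsProbabilityMeasure P] {K : ℝ} (hK : 0 < K)
    (hsupp : P ((closedBall (0 : Ed d) K)ᶜ) = 0) {l : ℝ} (hl : 0 < l) (hl1 : l < 1) {x : Ed d}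
    (hatom : P {x} = 0) : 0 < dtmRadius P l x := by
  have hsingle : closedBall x 0 = {x} := closedBall_zero
  have htt : Tendsto (fun r => P (closedBall x r)) (𝓝[>] (0:ℝ)) (𝓝 (P (closedBall x 0))) :=
    F_rightcont P x 0
  rw [hsingle, hatom] at htt
  have hev : ∀ᶠ r in 𝓝[>] (0:ℝ), P (closedBall x r) < ENNReal.ofReal l :=
    htt.eventually_lt_const (by simpa using hl)
  obtain ⟨r, hrP, hr0⟩ := (hev.and self_mem_nhdsWithin).exists
  have : r ≤ dtmRadius P l x := by
    refine le_csInf ⟨_, S_mem_norm_add hK hsupp hl1 x⟩ ?_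
    rintro s ⟨hs0, hsP⟩
    by_contra hc
    push_neg at hc
    exact absurd ((measure_mono (closedBall_subset_closedBall hc.le)).trans_lt hrP)
      (not_lt.2 hsP.le)
  exact lt_of_lt_of_le hr0 this

lemma ball_mass {P : Measure (Ed d)} [IsProbabilityMeasure P] {K : ℝ} (hK : 0 < K)
    (hsupp : P ((closedBall (0 : Ed d) K)ᶜ) = 0) {h : ℝ} (hh0 : 0 < h) (hh1 : h < 1)
    (hatom : ∀ z : Ed d, P {z} = 0) (hsph : ∀ (z : Ed d) (r : ℝ), P (sphere z r) = 0)
    (x : Ed d) :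
    P (ball x (dtmRadius P h x)) = ENNReal.ofReal h ∧
      P (closedBall x (dtmRadius P h x)) = ENNReal.ofReal h := by
  set δ := dtmRadius P h x with hδ
  have hδpos : 0 < δ := delta_pos hK hsupp hh0 hh1 (hatom x)
  -- closed ball has mass at least h
  have hcb_ge : ENNReal.ofReal h ≤ P (closedBall x δ) := measure_cb_delta_ge hK hsupp hh1 x
  -- ball has mass at most h
  have hball_le : P (ball x δ) ≤ ENNReal.ofReal h := by
    have hU : ball x δ = ⋃ n : ℕ, closedBall x (δ - δ / (n + 2)) := by
      ext y
      simp only [mem_ball, mem_iUnion, mem_closedBall]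
      constructor
      · intro hy
        obtain ⟨n, hn⟩ := exists_nat_one_div_lt (div_pos (by linarith) hδpos :
          (0:ℝ) < (δ - dist y x) / δ)
        refine ⟨n, ?_⟩
        have h1 : δ / (n + 2) < δ / (n + 1) := by
          apply div_lt_div_of_pos_left hδpos (by positivity) (by push_cast; linarith)
        have h2 : δ / (n + 1) = δ * (1 / (n + 1)) := by ring
        have h3 : δ * (1 / (n + 1)) < δ * ((δ - dist y x) / δ) := by
          apply mul_lt_mul_of_pos_left hn hδpos
        rw [mul_div_cancel₀ _ hδpos.ne'] at h3
        nlinarith [h1, h2 ▸ h3]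
      · intro ⟨n, hn⟩
        have : 0 < δ / (n + 2) := by positivity
        linarith
    rw [hU]
    have hmono : Monotone fun n : ℕ => closedBall x (δ - δ / (n + 2)) := by
      intro m n hmn
      apply closedBall_subset_closedBall
      have : δ / (n + 2) ≤ δ / (m + 2) := by
        have hc : (m:ℝ) ≤ (n:ℝ) := Nat.cast_le.2 hmn
        apply div_le_div_of_nonneg_left hδpos.le (by positivity) (by linarith)
      linarith
    refine le_of_tendsto (tendsto_measure_iUnion_atTop hmono) ?_
    filter_upwards with n
    refine measure_le_of_lt_delta ?_ ?_
    · have : δ / (n + 2) < δ := by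
        rw [div_lt_iff₀ (by positivity)]
        nlinarith
      linarith
    · have : 0 < δ / (n + 2) := by positivity
      rw [hδ]; linarith
  -- the sphere is null
  have hsplit : P (closedBall x δ) ≤ P (ball x δ) := by
    calc P (closedBall x δ) = P (ball x δ ∪ sphere x δ) := by rw [ball_union_sphere]
      _ ≤ P (ball x δ) + P (sphere x δ) := measure_union_le _ _
      _ = P (ball x δ) := by rw [hsph, add_zero]
  have h1 : P (ball x δ) = ENNReal.ofReal h :=
    le_antisymm hball_le (hcb_ge.trans hsplit)
  exact ⟨h1, le_antisymm (hsplit.trans hball_le) hcb_ge⟩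

end Aux2
noncomputable section Aux3

open Filter Topology

variable {d : ℕ}

lemma Ed_nontrivial (hd : 0 < d) : Nontrivial (Ed d) :=
  Module.nontrivial_of_finrank_pos (R := ℝ)
    (by rw [finrank_euclideanSpace_fin]; exact hd)

lemma withDensity_sphere (hd : 0 < d) {g : Ed d → ℝ≥0∞} (z : Ed d) (r : ℝ) :
    (volume.withDensity g) (sphere z r) = 0 := by
  haveI := Ed_nontrivial hd
  exact (withDensity_absolutelyContinuous volume g) (Measure.addHaar_sphere volume z r)

lemma withDensity_atom (hd : 0 < d) {g : Ed d → ℝ≥0∞} (z : Ed d) :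
    (volume.withDensity g) {z} = 0 := by
  refine (withDensity_absolutelyContinuous volume g) ?_
  have : ({z} : Set (Ed d)) = closedBall z 0 := closedBall_zero.symm
  rw [this, Measure.addHaar_closedBall volume z le_rfl]
  rw [zero_pow, ENNReal.ofReal_zero, zero_mul]
  rw [finrank_euclideanSpace_fin]
  exact hd.ne'

lemma locMeasure_mem_PlocPt {P : Measure (Ed d)} [IsProbabilityMeasure P] {K : ℝ} (hK : 0 < K)
    (hsupp : P ((closedBall (0 : Ed d) K)ᶜ) = 0) {h : ℝ} (hh0 : 0 < h) (hh1 : h < 1)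
    (hatom : ∀ z : Ed d, P {z} = 0) (hsph : ∀ (z : Ed d) (r : ℝ), P (sphere z r) = 0)
    (x : Ed d) : locMeasure P h x ∈ PlocPt P h x := by
  obtain ⟨hball, _⟩ := ball_mass hK hsupp hh0 hh1 hatom hsph x
  refine ⟨P.restrict (ball x (dtmRadius P h x)), rfl, Measure.restrict_le_self, ?_, ?_, ?_⟩
  · rw [Measure.restrict_apply_univ]; exact hball
  · intro A hA
    rw [Measure.restrict_apply' measurableSet_ball, inter_eq_self_of_subset_left hA]
  · rw [Measure.restrict_apply' measurableSet_ball]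
    have : (closedBall x (dtmRadius P h x))ᶜ ∩ ball x (dtmRadius P h x) = ∅ := by
      rw [eq_empty_iff_forall_notMem]
      rintro y ⟨hy1, hy2⟩
      exact hy1 (ball_subset_closedBall hy2)
    rw [this, measure_empty]

lemma subQ_prob {P : Measure (Ed d)} {h : ℝ} (hh0 : 0 < h) {ν Q : Measure (Ed d)}
    (hν : ν = (ENNReal.ofReal h)⁻¹ • Q) (huniv : Q Set.univ = ENNReal.ofReal h) :
    IsProbabilityMeasure ν := by
  constructor
  rw [hν, Measure.smul_apply, smul_eq_mul, huniv,
    ENNReal.inv_mul_cancel (by simpa using hh0) ENNReal.ofReal_ne_top]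

lemma subQ_null {P : Measure (Ed d)} {h : ℝ} {ν Q : Measure (Ed d)}
    (hν : ν = (ENNReal.ofReal h)⁻¹ • Q) (hle : Q ≤ P) {A : Set (Ed d)} (hA : P A = 0) :
    ν A = 0 := by
  rw [hν, Measure.smul_apply, smul_eq_mul]
  have : Q A = 0 := le_antisymm (hA ▸ Measure.le_iff'.1 hle A) (zero_le)
  rw [this, mul_zero]

lemma subQ_le {P : Measure (Ed d)} {h : ℝ} {ν Q : Measure (Ed d)}
    (hν : ν = (ENNReal.ofReal h)⁻¹ • Q) (hle : Q ≤ P) (A : Set (Ed d)) :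
    ν A ≤ (ENNReal.ofReal h)⁻¹ * P A := by
  rw [hν, Measure.smul_apply, smul_eq_mul]
  exact mul_le_mul_right (Measure.le_iff'.1 hle A) _

-- moment facts
lemma ae_norm_le {ν : Measure (Ed d)} {R : ℝ} (hν : ν ((closedBall (0 : Ed d) R)ᶜ) = 0) :
    ∀ᵐ y ∂ν, ‖y‖ ≤ R := by
  rw [ae_iff]
  convert hν using 2
  ext y
  simp [mem_closedBall, dist_zero_right]

lemma integrable_id'_s11 {ν : Measure (Ed d)} [IsProbabilityMeasure ν] {R : ℝ}
    (hν : ν ((closedBall (0 : Ed d) R)ᶜ) = 0) : Integrable (fun y : Ed d => y) ν := by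
  refine Integrable.mono' (integrable_const R) aestronglyMeasurable_id ?_
  exact ae_norm_le hν

lemma norm_mMean_le {ν : Measure (Ed d)} [IsProbabilityMeasure ν] {R : ℝ} (hR : 0 ≤ R)
    (hν : ν ((closedBall (0 : Ed d) R)ᶜ) = 0) : ‖mMean ν‖ ≤ R := by
  have := norm_integral_le_of_norm_le_const (μ := ν) (f := fun y : Ed d => y) (ae_norm_le hν)
  simpa [mMean] using this

lemma integrable_sq_dist {ν : Measure (Ed d)} [IsProbabilityMeasure ν] {R : ℝ}
    (hν : ν ((closedBall (0 : Ed d) R)ᶜ) = 0) (u : Ed d) :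
    Integrable (fun y : Ed d => ‖u - y‖ ^ 2) ν := by
  refine Integrable.mono' (integrable_const ((‖u‖ + R) ^ 2))
    (((continuous_const.sub continuous_id).norm.pow 2).aestronglyMeasurable) ?_
  filter_upwards [ae_norm_le hν] with y hy
  rw [Real.norm_eq_abs, abs_of_nonneg (by positivity)]
  have h1 : ‖u - y‖ ≤ ‖u‖ + R := (norm_sub_le _ _).trans (by linarith)
  exact pow_le_pow_left₀ (norm_nonneg _) h1 2

lemma bv_decomp {ν : Measure (Ed d)} [IsProbabilityMeasure ν] {R : ℝ} (hR : 0 ≤ R)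
    (hν : ν ((closedBall (0 : Ed d) R)ᶜ) = 0) (u : Ed d) :
    ∫ y, ‖u - y‖ ^ 2 ∂ν = ‖u - mMean ν‖ ^ 2 + mVar ν := by
  set m := mMean ν with hm
  have hint_id : Integrable (fun y : Ed d => y) ν := integrable_id'_s11 hν
  have hcm : ∫ y, (m - y) ∂ν = 0 := by
    rw [integral_sub (integrable_const m) hint_id, integral_const]
    simp [hm, mMean]
  have hinner_int : Integrable (fun y => (2:ℝ) * (inner ℝ (u - m) (m - y) : ℝ)) ν := by
    refine Integrable.mono' (integrable_const (2 * (‖u - m‖ * (‖m‖ + R))))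
      ((continuous_const.mul ((continuous_const.inner (continuous_const.sub continuous_id)))).aestronglyMeasurable) ?_
    filter_upwards [ae_norm_le hν] with y hy
    rw [Real.norm_eq_abs, abs_mul, abs_two]
    have h1 : |(inner ℝ (u - m) (m - y) : ℝ)| ≤ ‖u - m‖ * ‖m - y‖ := abs_real_inner_le_norm _ _
    have h2 : ‖m - y‖ ≤ ‖m‖ + R := (norm_sub_le _ _).trans (by linarith)
    have := mul_le_mul_of_nonneg_left (h1.trans (mul_le_mul_of_nonneg_left h2 (norm_nonneg _)))
      (by norm_num : (0:ℝ) ≤ 2)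
    linarith
  have hsq_int : Integrable (fun y : Ed d => ‖m - y‖ ^ 2) ν := by
    have := integrable_sq_dist hν m
    simpa using this
  have hexp : ∀ y : Ed d, ‖u - y‖ ^ 2
      = ‖u - m‖ ^ 2 + (2 * (inner ℝ (u - m) (m - y) : ℝ) + ‖m - y‖ ^ 2) := by
    intro y
    have : u - y = (u - m) + (m - y) := by abel
    rw [this, norm_add_sq_real]
    ring
  calc ∫ y, ‖u - y‖ ^ 2 ∂ν
      = ∫ y, (‖u - m‖ ^ 2 + (2 * (inner ℝ (u - m) (m - y) : ℝ) + ‖m - y‖ ^ 2)) ∂ν := by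
        exact integral_congr_ae (Eventually.of_forall hexp)
    _ = ‖u - m‖ ^ 2 + ∫ y, (2 * (inner ℝ (u - m) (m - y) : ℝ) + ‖m - y‖ ^ 2) ∂ν := by
        have := integral_add (μ := ν)
          (integrable_const (‖u - m‖ ^ 2)) (hinner_int.add hsq_int)
        simp only [integral_const, measure_univ, ENNReal.toReal_one, probReal_univ, one_smul,
          smul_eq_mul, Pi.add_apply, one_mul] at this ⊢
        exact this
    _ = ‖u - m‖ ^ 2 + mVar ν := by
        rw [integral_add hinner_int hsq_int]
        have h0 : ∫ y, (2:ℝ) * (inner ℝ (u - m) (m - y) : ℝ) ∂ν = 0 := by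
          rw [integral_const_mul]
          have : ∫ y, (inner ℝ (u - m) (m - y) : ℝ) ∂ν
              = (inner ℝ (u - m) (∫ y, (m - y) ∂ν) : ℝ) :=
            integral_inner ((integrable_const m).sub hint_id) (u - m)
          rw [this, hcm, inner_zero_right, mul_zero]
        rw [h0, zero_add, mVar]
        congr 1
        refine integral_congr_ae (Eventually.of_forall fun y => ?_)
        simp only []
        rw [norm_sub_rev]

lemma mVar_nonneg (ν : Measure (Ed d)) : 0 ≤ mVar ν :=
  integral_nonneg fun y => by positivity

lemma mVar_le {ν : Measure (Ed d)} [IsProbabilityMeasure ν] {R : ℝ} (hR : 0 ≤ R)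
    (hν : ν ((closedBall (0 : Ed d) R)ᶜ) = 0) : mVar ν ≤ (2 * R) ^ 2 := by
  have hmean := norm_mMean_le hR hν
  rw [mVar]
  have hint : Integrable (fun y : Ed d => ‖y - mMean ν‖ ^ 2) ν := by
    have := integrable_sq_dist hν (mMean ν)
    refine this.congr (Eventually.of_forall fun y => ?_)
    simp only []
    rw [norm_sub_rev]
  calc ∫ y, ‖y - mMean ν‖ ^ 2 ∂ν ≤ ∫ _, (2 * R) ^ 2 ∂ν := by
        refine integral_mono_ae hint (integrable_const _) ?_
        filter_upwards [ae_norm_le hν] with y hy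
        have h1 : ‖y - mMean ν‖ ≤ 2 * R := (norm_sub_le _ _).trans (by linarith)
        exact pow_le_pow_left₀ (norm_nonneg _) h1 2
    _ = (2 * R) ^ 2 := by simp

end Aux3
noncomputable section Aux4

open Filter Topology

variable {d : ℕ}

lemma delta_aemeasurable {P : Measure (Ed d)} [IsProbabilityMeasure P] {K : ℝ} (hK : 0 < K)
    (hsupp : P ((closedBall (0 : Ed d) K)ᶜ) = 0) {h : ℝ} (hh1 : h < 1) (x : Ed d) :
    AEMeasurable (fun l => dtmRadius P l x) (volume.restrict (Ioc (0:ℝ) h)) := by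
  have hmono : Monotone (fun l => dtmRadius P (min l h) x) := by
    intro l1 l2 hl
    exact delta_mono_l hK hsupp (lt_of_le_of_lt (min_le_right _ _) hh1)
      (min_le_min hl le_rfl) x
  refine ⟨fun l => dtmRadius P (min l h) x, hmono.measurable, ?_⟩
  refine (ae_restrict_iff' measurableSet_Ioc).2 (ae_of_all _ fun l hl => ?_)
  simp only []
  rw [min_eq_left hl.2]

lemma tail_measure_eq {P : Measure (Ed d)} [IsProbabilityMeasure P] {K : ℝ} (hK : 0 < K)
    (hsupp : P ((closedBall (0 : Ed d) K)ᶜ) = 0) {h : ℝ} (hh0 : 0 < h) (hh1 : h < 1)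
    (x : Ed d) {t : ℝ} (ht : 0 < t) :
    (volume.restrict (Ioc (0:ℝ) h)) {l | t < dtmRadius P l x}
      = ENNReal.ofReal h - P (closedBall x t) := by
  set a := (P (closedBall x t)).toReal with ha
  have hFne : P (closedBall x t) ≠ ∞ := (measure_lt_top P _).ne
  have ha0 : 0 ≤ a := ENNReal.toReal_nonneg
  rw [Measure.restrict_apply' measurableSet_Ioc]
  have hub : {l | t < dtmRadius P l x} ∩ Ioc (0:ℝ) h ⊆ Icc a h := by
    rintro l ⟨hl1, hl2, hl3⟩
    have hF : P (closedBall x t) ≤ ENNReal.ofReal l := measure_le_of_lt_delta ht hl1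
    have : a ≤ l := by
      rw [ha]
      calc (P (closedBall x t)).toReal ≤ (ENNReal.ofReal l).toReal :=
            ENNReal.toReal_mono ENNReal.ofReal_ne_top hF
        _ = l := ENNReal.toReal_ofReal hl2.le
    exact ⟨this, hl3⟩
  have hlb : Ioc a h ⊆ {l | t < dtmRadius P l x} ∩ Ioc (0:ℝ) h := by
    rintro l ⟨hl1, hl2⟩
    have hl0 : 0 < l := lt_of_le_of_lt ha0 hl1
    refine ⟨?_, hl0, hl2⟩
    by_contra hc
    rw [mem_setOf_eq, not_lt] at hc
    have hgt : ∀ r, t < r → ENNReal.ofReal l < P (closedBall x r) := by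
      intro r hr
      obtain ⟨s, ⟨hs0, hsP⟩, hsr⟩ :=
        (csInf_lt_iff (delta_bddBelow P l x)
          ⟨_, S_mem_norm_add hK hsupp (lt_of_le_of_lt hl2 hh1) x⟩).1 (lt_of_le_of_lt hc hr)
      exact hsP.trans_le (measure_mono (closedBall_subset_closedBall hsr.le))
    have hge : ENNReal.ofReal l ≤ P (closedBall x t) := by
      refine ge_of_tendsto (F_rightcont P x t) ?_
      filter_upwards [self_mem_nhdsWithin] with r hr
      exact (hgt r hr).le
    have : ENNReal.ofReal a < ENNReal.ofReal l := (ENNReal.ofReal_lt_ofReal_iff hl0).2 hl1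
    rw [ha, ENNReal.ofReal_toReal hFne] at this
    exact absurd hge (not_le.2 this)
  have h1 : volume ({l | t < dtmRadius P l x} ∩ Ioc (0:ℝ) h) ≤ ENNReal.ofReal (h - a) := by
    calc volume ({l | t < dtmRadius P l x} ∩ Ioc (0:ℝ) h) ≤ volume (Icc a h) :=
          measure_mono hub
      _ = ENNReal.ofReal (h - a) := Real.volume_Icc
  have h2 : ENNReal.ofReal (h - a) ≤ volume ({l | t < dtmRadius P l x} ∩ Ioc (0:ℝ) h) := by
    calc ENNReal.ofReal (h - a) = volume (Ioc a h) := Real.volume_Ioc.symm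
      _ ≤ _ := measure_mono hlb
  rw [le_antisymm h1 h2, ENNReal.ofReal_sub _ ha0, ha, ENNReal.ofReal_toReal hFne]

lemma delta_sq_integrable {P : Measure (Ed d)} [IsProbabilityMeasure P] {K : ℝ} (hK : 0 < K)
    (hsupp : P ((closedBall (0 : Ed d) K)ᶜ) = 0) {h : ℝ} (hh1 : h < 1) (x : Ed d) :
    Integrable (fun l => dtmRadius P l x ^ 2) (volume.restrict (Ioc (0:ℝ) h)) := by
  have hm2 : AEMeasurable (fun l => dtmRadius P l x ^ 2) (volume.restrict (Ioc (0:ℝ) h)) :=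
    (delta_aemeasurable hK hsupp hh1 x).pow_const 2
  refine Integrable.mono' (integrable_const ((‖x‖ + K) ^ 2)) hm2.aestronglyMeasurable ?_
  refine (ae_restrict_iff' measurableSet_Ioc).2 (ae_of_all _ fun l hl => ?_)
  rw [Real.norm_eq_abs, abs_of_nonneg (by positivity)]
  have h1 : dtmRadius P l x ≤ ‖x‖ + K :=
    delta_le_norm_add hK hsupp (lt_of_le_of_lt hl.2 hh1) x
  exact pow_le_pow_left₀ (delta_nonneg P l x) h1 2

lemma T_eq {P : Measure (Ed d)} [IsProbabilityMeasure P] {K : ℝ} (hK : 0 < K)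
    (hsupp : P ((closedBall (0 : Ed d) K)ᶜ) = 0) {h : ℝ} (hh0 : 0 < h) (hh1 : h < 1)
    (x : Ed d) :
    ENNReal.ofReal (∫ l in (0:ℝ)..h, dtmRadius P l x ^ 2)
      = 2 * ∫⁻ t in Ioi (0:ℝ),
          (ENNReal.ofReal h - P (closedBall x t)) * ENNReal.ofReal t := by
  rw [intervalIntegral.integral_of_le hh0.le]
  rw [ofReal_integral_eq_lintegral_ofReal (delta_sq_integrable hK hsupp hh1 x)
    (ae_of_all _ fun l => by positivity)]
  have hrpow : ∀ l : ℝ, ENNReal.ofReal (dtmRadius P l x ^ 2)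
      = ENNReal.ofReal (dtmRadius P l x ^ (2:ℝ)) := by
    intro l
    rw [show ((2:ℝ)) = ((2:ℕ):ℝ) by norm_num, Real.rpow_natCast]
  simp_rw [hrpow]
  rw [lintegral_rpow_eq_lintegral_meas_lt_mul (volume.restrict (Ioc (0:ℝ) h))
    (ae_of_all _ fun l => delta_nonneg P l x)
    (delta_aemeasurable hK hsupp hh1 x) (by norm_num : (0:ℝ) < 2)]
  rw [show ENNReal.ofReal (2:ℝ) = 2 by norm_num]
  congr 1
  refine setLIntegral_congr_fun measurableSet_Ioi (fun t ht => ?_)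
  rw [tail_measure_eq hK hsupp hh0 hh1 x ht]
  norm_num

end Aux4
noncomputable section Aux5

open Filter Topology

variable {d : ℕ}

lemma sq_norm_layercake {ν : Measure (Ed d)} [IsProbabilityMeasure ν] (u : Ed d) :
    ∫⁻ y, ENNReal.ofReal (‖u - y‖ ^ 2) ∂ν
      = 2 * ∫⁻ t in Ioi (0:ℝ), ν {y | t < ‖u - y‖} * ENNReal.ofReal t := by
  have hrpow : ∀ y : Ed d, ENNReal.ofReal (‖u - y‖ ^ 2)
      = ENNReal.ofReal (‖u - y‖ ^ (2:ℝ)) := by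
    intro y
    rw [show ((2:ℝ)) = ((2:ℕ):ℝ) by norm_num, Real.rpow_natCast]
  simp_rw [hrpow]
  rw [lintegral_rpow_eq_lintegral_meas_lt_mul (f := fun y : Ed d => ‖u - y‖) ν
    (ae_of_all _ fun y => norm_nonneg _)
    ((measurable_const.sub measurable_id).norm.aemeasurable) (by norm_num : (0:ℝ) < 2)]
  rw [show ENNReal.ofReal (2:ℝ) = 2 by norm_num]
  congr 1
  refine setLIntegral_congr_fun measurableSet_Ioi (fun t ht => ?_)
  norm_num

lemma tail_set_eq_compl (u : Ed d) (t : ℝ) :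
    {y : Ed d | t < ‖u - y‖} = (closedBall u t)ᶜ := by
  ext y
  simp only [mem_setOf_eq, mem_compl_iff, mem_closedBall, not_le, dist_comm y u,
    dist_eq_norm]

lemma keyA {P : Measure (Ed d)} [IsProbabilityMeasure P] {K : ℝ} (hK : 0 < K)
    (hsupp : P ((closedBall (0 : Ed d) K)ᶜ) = 0) {h : ℝ} (hh0 : 0 < h) (hh1 : h < 1)
    {ν Q : Measure (Ed d)} (hν : ν = (ENNReal.ofReal h)⁻¹ • Q) (hle : Q ≤ P)
    (huniv : Q Set.univ = ENNReal.ofReal h) (u : Ed d) :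
    (ENNReal.ofReal h)⁻¹ * ENNReal.ofReal (∫ l in (0:ℝ)..h, dtmRadius P l u ^ 2)
      ≤ ∫⁻ y, ENNReal.ofReal (‖u - y‖ ^ 2) ∂ν := by
  haveI : IsProbabilityMeasure ν := subQ_prob (P := P) hh0 hν huniv
  have hhne : (ENNReal.ofReal h) ≠ 0 := by simpa using hh0
  have hinvne : (ENNReal.ofReal h)⁻¹ ≠ ∞ := by
    simp [ENNReal.inv_ne_top, hhne]
  rw [sq_norm_layercake u, T_eq hK hsupp hh0 hh1 u]
  have hpoint : ∀ t ∈ Ioi (0:ℝ),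
      (ENNReal.ofReal h)⁻¹ * ((ENNReal.ofReal h - P (closedBall u t)) * ENNReal.ofReal t)
        ≤ ν {y | t < ‖u - y‖} * ENNReal.ofReal t := by
    intro t ht
    rw [tail_set_eq_compl u t]
    rw [prob_compl_eq_one_sub measurableSet_closedBall]
    have h1 : ν (closedBall u t) ≤ (ENNReal.ofReal h)⁻¹ * P (closedBall u t) :=
      subQ_le hν hle _
    have h2 : (ENNReal.ofReal h)⁻¹ * (ENNReal.ofReal h - P (closedBall u t))
        = 1 - (ENNReal.ofReal h)⁻¹ * P (closedBall u t) := by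
      rw [ENNReal.mul_sub (fun _ _ => hinvne),
        ENNReal.inv_mul_cancel hhne ENNReal.ofReal_ne_top]
    rw [← mul_assoc, h2]
    exact mul_le_mul_left (tsub_le_tsub_left h1 1) _
  calc (ENNReal.ofReal h)⁻¹ *
        (2 * ∫⁻ t in Ioi (0:ℝ), (ENNReal.ofReal h - P (closedBall u t)) * ENNReal.ofReal t)
      = 2 * ∫⁻ t in Ioi (0:ℝ), (ENNReal.ofReal h)⁻¹ *
          ((ENNReal.ofReal h - P (closedBall u t)) * ENNReal.ofReal t) := by
        rw [lintegral_const_mul' _ _ hinvne]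
        ring
    _ ≤ 2 * ∫⁻ t in Ioi (0:ℝ), ν {y | t < ‖u - y‖} * ENNReal.ofReal t := by
        exact mul_le_mul_right (setLIntegral_mono' measurableSet_Ioi hpoint) 2

lemma keyB {P : Measure (Ed d)} [IsProbabilityMeasure P] {K : ℝ} (hK : 0 < K)
    (hsupp : P ((closedBall (0 : Ed d) K)ᶜ) = 0) {h : ℝ} (hh0 : 0 < h) (hh1 : h < 1)
    (hatom : ∀ z : Ed d, P {z} = 0) (hsph : ∀ (z : Ed d) (r : ℝ), P (sphere z r) = 0)
    (x : Ed d) :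
    ∫⁻ y, ENNReal.ofReal (‖x - y‖ ^ 2) ∂(locMeasure P h x)
      ≤ (ENNReal.ofReal h)⁻¹ * ENNReal.ofReal (∫ l in (0:ℝ)..h, dtmRadius P l x ^ 2) := by
  obtain ⟨hball, _⟩ := ball_mass hK hsupp hh0 hh1 hatom hsph x
  haveI : IsProbabilityMeasure (locMeasure P h x) := by
    constructor
    rw [locMeasure, Measure.smul_apply, smul_eq_mul, Measure.restrict_apply_univ, hball,
      ENNReal.inv_mul_cancel (by simpa using hh0) ENNReal.ofReal_ne_top]
  have hhne : (ENNReal.ofReal h) ≠ 0 := by simpa using hh0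
  have hinvne : (ENNReal.ofReal h)⁻¹ ≠ ∞ := by simp [ENNReal.inv_ne_top, hhne]
  set δ := dtmRadius P h x with hδ
  have hpoint : ∀ t ∈ Ioi (0:ℝ),
      (locMeasure P h x) {y | t < ‖x - y‖} * ENNReal.ofReal t
        ≤ (ENNReal.ofReal h)⁻¹ *
            ((ENNReal.ofReal h - P (closedBall x t)) * ENNReal.ofReal t) := by
    intro t ht
    rw [tail_set_eq_compl x t, locMeasure, Measure.smul_apply, smul_eq_mul,
      Measure.restrict_apply' measurableSet_ball]
    rw [← mul_assoc]
    refine mul_le_mul_left (mul_le_mul_right ?_ _) _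
    by_cases hcase : δ ≤ t
    · have hempty : (closedBall x t)ᶜ ∩ ball x δ = ∅ := by
        rw [eq_empty_iff_forall_notMem]
        rintro y ⟨hy1, hy2⟩
        exact hy1 (mem_closedBall.2 ((mem_ball.1 hy2).le.trans hcase))
      rw [hempty, measure_empty]
      exact zero_le
    · push_neg at hcase
      have hsub : closedBall x t ⊆ ball x δ := fun y hy =>
        mem_ball.2 (lt_of_le_of_lt (mem_closedBall.1 hy) hcase)
      have hdiff : (closedBall x t)ᶜ ∩ ball x δ = ball x δ \ closedBall x t := by
        rw [diff_eq, inter_comm]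
      rw [hdiff, measure_diff hsub measurableSet_closedBall.nullMeasurableSet
        (measure_lt_top P _).ne, hball]
  calc ∫⁻ y, ENNReal.ofReal (‖x - y‖ ^ 2) ∂(locMeasure P h x)
      = 2 * ∫⁻ t in Ioi (0:ℝ), (locMeasure P h x) {y | t < ‖x - y‖} * ENNReal.ofReal t :=
        sq_norm_layercake x
    _ ≤ 2 * ∫⁻ t in Ioi (0:ℝ), (ENNReal.ofReal h)⁻¹ *
          ((ENNReal.ofReal h - P (closedBall x t)) * ENNReal.ofReal t) :=
        mul_le_mul_right (setLIntegral_mono' measurableSet_Ioi hpoint) 2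
    _ = (ENNReal.ofReal h)⁻¹ *
          (2 * ∫⁻ t in Ioi (0:ℝ),
            (ENNReal.ofReal h - P (closedBall x t)) * ENNReal.ofReal t) := by
        rw [lintegral_const_mul' _ _ hinvne]
        ring
    _ = (ENNReal.ofReal h)⁻¹ *
          ENNReal.ofReal (∫ l in (0:ℝ)..h, dtmRadius P l x ^ 2) := by
        rw [T_eq hK hsupp hh0 hh1 x]

end Aux5
noncomputable section Aux6

open Filter Topology

variable {d : ℕ}

lemma T_nonneg (P : Measure (Ed d)) {h : ℝ} (hh0 : 0 < h) (x : Ed d) :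
    0 ≤ ∫ l in (0:ℝ)..h, dtmRadius P l x ^ 2 :=
  intervalIntegral.integral_nonneg hh0.le fun l _ => by positivity

lemma dtm_sq_s11 (P : Measure (Ed d)) {h : ℝ} (hh0 : 0 < h) (x : Ed d) :
    dtm P h x ^ 2 = (1 / h) * ∫ l in (0:ℝ)..h, dtmRadius P l x ^ 2 := by
  rw [dtm, Real.sq_sqrt]
  have := T_nonneg P hh0 x
  positivity

lemma locMeasure_prob {P : Measure (Ed d)} [IsProbabilityMeasure P] {K : ℝ} (hK : 0 < K)
    (hsupp : P ((closedBall (0 : Ed d) K)ᶜ) = 0) {h : ℝ} (hh0 : 0 < h) (hh1 : h < 1)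
    (hatom : ∀ z : Ed d, P {z} = 0) (hsph : ∀ (z : Ed d) (r : ℝ), P (sphere z r) = 0)
    (x : Ed d) : IsProbabilityMeasure (locMeasure P h x) := by
  obtain ⟨hball, _⟩ := ball_mass hK hsupp hh0 hh1 hatom hsph x
  constructor
  rw [locMeasure, Measure.smul_apply, smul_eq_mul, Measure.restrict_apply_univ, hball,
    ENNReal.inv_mul_cancel (by simpa using hh0) ENNReal.ofReal_ne_top]

lemma locMeasure_null {P : Measure (Ed d)} {K h : ℝ}
    (hsupp : P ((closedBall (0 : Ed d) K)ᶜ) = 0) (x : Ed d) :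
    (locMeasure P h x) ((closedBall (0 : Ed d) K)ᶜ) = 0 :=
  subQ_null (P := P) rfl Measure.restrict_le_self hsupp

lemma lintegral_sq_norm_ne_top {ν : Measure (Ed d)} [IsProbabilityMeasure ν] {K : ℝ}
    (hν : ν ((closedBall (0 : Ed d) K)ᶜ) = 0) (u : Ed d) :
    ∫⁻ y, ENNReal.ofReal (‖u - y‖ ^ 2) ∂ν ≠ ∞ := by
  have hle : ∫⁻ y, ENNReal.ofReal (‖u - y‖ ^ 2) ∂ν ≤ ENNReal.ofReal ((‖u‖ + K) ^ 2) := by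
    calc ∫⁻ y, ENNReal.ofReal (‖u - y‖ ^ 2) ∂ν
        ≤ ∫⁻ _, ENNReal.ofReal ((‖u‖ + K) ^ 2) ∂ν := by
          refine lintegral_mono_ae ?_
          filter_upwards [ae_norm_le hν] with y hy
          refine ENNReal.ofReal_le_ofReal ?_
          have h1 : ‖u - y‖ ≤ ‖u‖ + K := (norm_sub_le _ _).trans (by linarith)
          exact pow_le_pow_left₀ (norm_nonneg _) h1 2
      _ = ENNReal.ofReal ((‖u‖ + K) ^ 2) := by simp
  exact (lt_of_le_of_lt hle ENNReal.ofReal_lt_top).ne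

lemma integral_sq_norm_eq {ν : Measure (Ed d)} (u : Ed d) :
    ∫ y, ‖u - y‖ ^ 2 ∂ν = (∫⁻ y, ENNReal.ofReal (‖u - y‖ ^ 2) ∂ν).toReal := by
  rw [integral_eq_lintegral_of_nonneg_ae (f := fun y : Ed d => ‖u - y‖ ^ 2)
    (ae_of_all _ fun y => by positivity)
    (((measurable_const.sub measurable_id).norm.pow measurable_const).aestronglyMeasurable)]

/-- Lemma A: the squared DTM is below the moment of any localized sub-measure. -/
lemma dtm_sq_le_moment {P : Measure (Ed d)} [IsProbabilityMeasure P] {K : ℝ} (hK : 0 < K)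
    (hsupp : P ((closedBall (0 : Ed d) K)ᶜ) = 0) {h : ℝ} (hh0 : 0 < h) (hh1 : h < 1)
    {ν Q : Measure (Ed d)} (hν : ν = (ENNReal.ofReal h)⁻¹ • Q) (hle : Q ≤ P)
    (huniv : Q Set.univ = ENNReal.ofReal h) (u : Ed d) :
    dtm P h u ^ 2 ≤ ‖u - mMean ν‖ ^ 2 + mVar ν := by
  haveI : IsProbabilityMeasure ν := subQ_prob (P := P) hh0 hν huniv
  have hν0 : ν ((closedBall (0 : Ed d) K)ᶜ) = 0 := subQ_null hν hle hsupp
  have key := keyA hK hsupp hh0 hh1 hν hle huniv u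
  have hfin := lintegral_sq_norm_ne_top hν0 u
  have h2 : dtm P h u ^ 2
      = ((ENNReal.ofReal h)⁻¹ *
          ENNReal.ofReal (∫ l in (0:ℝ)..h, dtmRadius P l u ^ 2)).toReal := by
    rw [dtm_sq_s11 P hh0 u, ENNReal.toReal_mul, ENNReal.toReal_inv,
      ENNReal.toReal_ofReal hh0.le, ENNReal.toReal_ofReal (T_nonneg P hh0 u), one_div]
  rw [h2, ← bv_decomp hK.le hν0 u, integral_sq_norm_eq]
  exact ENNReal.toReal_mono hfin key

/-- Lemma B: the moment of the canonical localized measure is below the squared DTM. -/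
lemma moment_le_dtm_sq {P : Measure (Ed d)} [IsProbabilityMeasure P] {K : ℝ} (hK : 0 < K)
    (hsupp : P ((closedBall (0 : Ed d) K)ᶜ) = 0) {h : ℝ} (hh0 : 0 < h) (hh1 : h < 1)
    (hatom : ∀ z : Ed d, P {z} = 0) (hsph : ∀ (z : Ed d) (r : ℝ), P (sphere z r) = 0)
    (x : Ed d) :
    ‖x - mMean (locMeasure P h x)‖ ^ 2 + mVar (locMeasure P h x) ≤ dtm P h x ^ 2 := by
  haveI := locMeasure_prob hK hsupp hh0 hh1 hatom hsph x
  have hν0 := locMeasure_null (P := P) (h := h) hsupp x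
  have key := keyB hK hsupp hh0 hh1 hatom hsph x
  have hhne : (ENNReal.ofReal h) ≠ 0 := by simpa using hh0
  have hRne : (ENNReal.ofReal h)⁻¹ *
      ENNReal.ofReal (∫ l in (0:ℝ)..h, dtmRadius P l x ^ 2) ≠ ∞ :=
    ENNReal.mul_ne_top (by simp [ENNReal.inv_ne_top, hhne]) ENNReal.ofReal_ne_top
  have h2 : dtm P h x ^ 2
      = ((ENNReal.ofReal h)⁻¹ *
          ENNReal.ofReal (∫ l in (0:ℝ)..h, dtmRadius P l x ^ 2)).toReal := by
    rw [dtm_sq_s11 P hh0 x, ENNReal.toReal_mul, ENNReal.toReal_inv,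
      ENNReal.toReal_ofReal hh0.le, ENNReal.toReal_ofReal (T_nonneg P hh0 x), one_div]
  rw [h2, ← bv_decomp hK.le hν0 x, integral_sq_norm_eq]
  exact ENNReal.toReal_mono hRne key

end Aux6
noncomputable section Aux7

open Filter Topology

variable {d : ℕ}

lemma delta_sq_intervalIntegrable {P : Measure (Ed d)} [IsProbabilityMeasure P] {K : ℝ}
    (hK : 0 < K) (hsupp : P ((closedBall (0 : Ed d) K)ᶜ) = 0) {h : ℝ} (hh0 : 0 < h)
    (hh1 : h < 1) (x : Ed d) :
    IntervalIntegrable (fun l => dtmRadius P l x ^ 2) volume 0 h := by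
  rw [intervalIntegrable_iff, uIoc_of_le hh0.le]
  exact delta_sq_integrable hK hsupp hh1 x

lemma T_lip {P : Measure (Ed d)} [IsProbabilityMeasure P] {K : ℝ}
    (hK : 0 < K) (hsupp : P ((closedBall (0 : Ed d) K)ᶜ) = 0) {h : ℝ} (hh0 : 0 < h)
    (hh1 : h < 1) (x y : Ed d) :
    |(∫ l in (0:ℝ)..h, dtmRadius P l x ^ 2) - ∫ l in (0:ℝ)..h, dtmRadius P l y ^ 2|
      ≤ ((‖x‖ + ‖y‖ + 2 * K) * dist x y) * h := by
  rw [← intervalIntegral.integral_sub (delta_sq_intervalIntegrable hK hsupp hh0 hh1 x)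
    (delta_sq_intervalIntegrable hK hsupp hh0 hh1 y)]
  have hb := intervalIntegral.norm_integral_le_of_norm_le_const
    (C := (‖x‖ + ‖y‖ + 2 * K) * dist x y)
    (f := fun l => dtmRadius P l x ^ 2 - dtmRadius P l y ^ 2) (a := 0) (b := h) ?_
  · rw [Real.norm_eq_abs] at hb
    calc _ ≤ ((‖x‖ + ‖y‖ + 2*K) * dist x y) * |h - 0| := hb
      _ = ((‖x‖ + ‖y‖ + 2*K) * dist x y) * h := by rw [sub_zero, abs_of_nonneg hh0.le]
  · intro l hl
    rw [uIoc_of_le hh0.le] at hl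
    have hl1 : l < 1 := lt_of_le_of_lt hl.2 hh1
    have hx := delta_le_norm_add hK hsupp hl1 x
    have hy := delta_le_norm_add hK hsupp hl1 y
    have hx0 := delta_nonneg P l x
    have hy0 := delta_nonneg P l y
    have hlip : |dtmRadius P l x - dtmRadius P l y| ≤ dist x y := by
      rw [abs_sub_le_iff]
      constructor
      · have := delta_lip hK hsupp hl1 x y; linarith
      · have := delta_lip hK hsupp hl1 y x; rw [dist_comm]; linarith
    simp only [Real.norm_eq_abs]
    have hfact : dtmRadius P l x ^ 2 - dtmRadius P l y ^ 2
        = (dtmRadius P l x - dtmRadius P l y) * (dtmRadius P l x + dtmRadius P l y) := by ring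
    rw [hfact, abs_mul]
    have h1 : |dtmRadius P l x + dtmRadius P l y| ≤ ‖x‖ + ‖y‖ + 2 * K := by
      rw [abs_of_nonneg (by linarith)]; linarith
    calc |dtmRadius P l x - dtmRadius P l y| * |dtmRadius P l x + dtmRadius P l y|
        ≤ dist x y * (‖x‖ + ‖y‖ + 2 * K) := by
          apply mul_le_mul hlip h1 (abs_nonneg _) dist_nonneg
      _ = (‖x‖ + ‖y‖ + 2 * K) * dist x y := by ring

lemma T_continuous {P : Measure (Ed d)} [IsProbabilityMeasure P] {K : ℝ}
    (hK : 0 < K) (hsupp : P ((closedBall (0 : Ed d) K)ᶜ) = 0) {h : ℝ} (hh0 : 0 < h)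
    (hh1 : h < 1) :
    Continuous (fun x : Ed d => ∫ l in (0:ℝ)..h, dtmRadius P l x ^ 2) := by
  rw [continuous_iff_continuousAt]
  intro x₀
  rw [ContinuousAt, tendsto_iff_dist_tendsto_zero]
  have hbound : ∀ x : Ed d,
      dist (∫ l in (0:ℝ)..h, dtmRadius P l x ^ 2) (∫ l in (0:ℝ)..h, dtmRadius P l x₀ ^ 2)
        ≤ ((‖x‖ + ‖x₀‖ + 2 * K) * dist x x₀) * h := by
    intro x
    rw [Real.dist_eq]
    exact T_lip hK hsupp hh0 hh1 x x₀
  have htz : Tendsto (fun x : Ed d => ((‖x‖ + ‖x₀‖ + 2 * K) * dist x x₀) * h) (𝓝 x₀)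
      (𝓝 (((‖x₀‖ + ‖x₀‖ + 2 * K) * dist x₀ x₀) * h)) := by
    apply Tendsto.mul _ tendsto_const_nhds
    exact Tendsto.mul (((continuous_norm.add continuous_const).add
        continuous_const).tendsto x₀)
      (tendsto_iff_dist_tendsto_zero.1 (Continuous.tendsto continuous_id x₀) |> fun _ => by
        exact (continuous_id.dist continuous_const).tendsto x₀)
  rw [dist_self, mul_zero, zero_mul] at htz
  exact squeeze_zero (fun x => dist_nonneg) hbound htz

lemma dtm_continuous {P : Measure (Ed d)} [IsProbabilityMeasure P] {K : ℝ}
    (hK : 0 < K) (hsupp : P ((closedBall (0 : Ed d) K)ᶜ) = 0) {h : ℝ} (hh0 : 0 < h)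
    (hh1 : h < 1) : Continuous (dtm P h) := by
  have : Continuous (fun x : Ed d => (1/h) * ∫ l in (0:ℝ)..h, dtmRadius P l x ^ 2) :=
    continuous_const.mul (T_continuous hK hsupp hh0 hh1)
  exact Real.continuous_sqrt.comp this

lemma dtm_sq_le_bound {P : Measure (Ed d)} [IsProbabilityMeasure P] {K : ℝ}
    (hK : 0 < K) (hsupp : P ((closedBall (0 : Ed d) K)ᶜ) = 0) {h : ℝ} (hh0 : 0 < h)
    (hh1 : h < 1) (x : Ed d) : dtm P h x ^ 2 ≤ (‖x‖ + K) ^ 2 := by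
  rw [dtm_sq_s11 P hh0 x]
  have hT : ∫ l in (0:ℝ)..h, dtmRadius P l x ^ 2 ≤ h * (‖x‖ + K) ^ 2 := by
    have hb := intervalIntegral.norm_integral_le_of_norm_le_const
      (C := (‖x‖ + K) ^ 2) (f := fun l => dtmRadius P l x ^ 2) (a := 0) (b := h) ?_
    · rw [Real.norm_eq_abs, sub_zero, abs_of_nonneg hh0.le] at hb
      calc (∫ l in (0:ℝ)..h, dtmRadius P l x ^ 2)
          ≤ |∫ l in (0:ℝ)..h, dtmRadius P l x ^ 2| := le_abs_self _
        _ ≤ (‖x‖ + K) ^ 2 * h := hb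
        _ = h * (‖x‖ + K) ^ 2 := by ring
    · intro l hl
      rw [uIoc_of_le hh0.le] at hl
      simp only [Real.norm_eq_abs]
      rw [abs_of_nonneg (by positivity)]
      exact pow_le_pow_left₀ (delta_nonneg P l x)
        (delta_le_norm_add hK hsupp (lt_of_le_of_lt hl.2 hh1) x) 2
  calc (1/h) * ∫ l in (0:ℝ)..h, dtmRadius P l x ^ 2 ≤ (1/h) * (h * (‖x‖ + K) ^ 2) := by
        apply mul_le_mul_of_nonneg_left hT (by positivity)
    _ = (‖x‖ + K) ^ 2 := by field_simp

lemma dtm_sq_integrable {P : Measure (Ed d)} [IsProbabilityMeasure P] {K : ℝ}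
    (hK : 0 < K) (hsupp : P ((closedBall (0 : Ed d) K)ᶜ) = 0) {h : ℝ} (hh0 : 0 < h)
    (hh1 : h < 1) : Integrable (fun u => dtm P h u ^ 2) P := by
  refine Integrable.mono' (integrable_const ((2*K) ^ 2))
    (((dtm_continuous hK hsupp hh0 hh1).pow 2).aestronglyMeasurable) ?_
  filter_upwards [ae_norm_le hsupp] with u hu
  rw [Real.norm_eq_abs, abs_of_nonneg (by positivity)]
  calc dtm P h u ^ 2 ≤ (‖u‖ + K) ^ 2 := dtm_sq_le_bound hK hsupp hh0 hh1 u
    _ ≤ (2*K) ^ 2 := by nlinarith [norm_nonneg u]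

/-- the density bound on measurable sets -/
lemma P_le_fmax_vol {P : Measure (Ed d)} {g : Ed d → ℝ≥0∞} (hPg : P = volume.withDensity g)
    {fmax : ℝ} (hgb : ∀ᵐ y ∂P, g y ≤ ENNReal.ofReal fmax) {A : Set (Ed d)}
    (hA : MeasurableSet A) : P A ≤ ENNReal.ofReal fmax * volume A := by
  have hbad : P {y | ¬ g y ≤ ENNReal.ofReal fmax} = 0 := hgb
  obtain ⟨B, hBsub, hBmeas, hB0⟩ := exists_measurable_superset_of_null hbad
  calc P A ≤ P (A ∩ B) + P (A \ B) := measure_le_inter_add_diff P A B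
    _ ≤ P B + P (A \ B) := by
        exact add_le_add (measure_mono inter_subset_right) le_rfl
    _ = P (A \ B) := by rw [hB0, zero_add]
    _ ≤ ENNReal.ofReal fmax * volume A := by
        rw [hPg, withDensity_apply _ (hA.diff hBmeas)]
        calc ∫⁻ y in A \ B, g y ∂volume ≤ ∫⁻ _ in A \ B, ENNReal.ofReal fmax ∂volume := by
              refine setLIntegral_mono' (hA.diff hBmeas) fun y hy => ?_
              by_contra hc
              exact hy.2 (hBsub (by simpa using hc))
          _ = ENNReal.ofReal fmax * volume (A \ B) := by
              rw [setLIntegral_const]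
          _ ≤ ENNReal.ofReal fmax * volume A :=
              mul_le_mul_right (measure_mono diff_subset) _

end Aux7
noncomputable section Aux8

open Filter Topology

variable {d : ℕ}

lemma vol_ann_toReal (hd : 0 < d) {a b : ℝ} (ha : 0 ≤ a) (hab : a ≤ b) (u : Ed d) :
    (volume (closedBall u b \ ball u a)).toReal
      = (b ^ d - a ^ d) * (volume (ball (0:Ed d) 1)).toReal := by
  haveI := Ed_nontrivial hd
  have hsub : ball u a ⊆ closedBall u b :=
    ball_subset_closedBall.trans (closedBall_subset_closedBall hab)
  rw [measure_diff hsub measurableSet_ball.nullMeasurableSet measure_ball_lt_top.ne]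
  rw [Measure.addHaar_closedBall volume u (ha.trans hab), Measure.addHaar_ball volume u ha,
    finrank_euclideanSpace_fin]
  rw [ENNReal.toReal_sub_of_le (mul_le_mul_left (ENNReal.ofReal_le_ofReal
      (pow_le_pow_left₀ ha hab d)) _)
    (ENNReal.mul_ne_top ENNReal.ofReal_ne_top measure_ball_lt_top.ne)]
  rw [ENNReal.toReal_mul, ENNReal.toReal_mul,
    ENNReal.toReal_ofReal (pow_nonneg (ha.trans hab) d),
    ENNReal.toReal_ofReal (pow_nonneg ha d)]
  ring

lemma pow_sub_pow_le {a b Bb : ℝ} (ha : 0 ≤ a) (hab : a ≤ b) (hB : b ≤ Bb) (d : ℕ) :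
    b ^ d - a ^ d ≤ d * Bb ^ (d - 1) * (b - a) := by
  have hB0 : 0 ≤ Bb := le_trans (le_trans ha hab) hB
  have hgeom := geom_sum₂_mul (R := ℝ) b a d
  rw [← hgeom]
  have hsum : ∑ i ∈ Finset.range d, b ^ i * a ^ (d - 1 - i) ≤ d * Bb ^ (d - 1) := by
    calc ∑ i ∈ Finset.range d, b ^ i * a ^ (d - 1 - i)
        ≤ ∑ _i ∈ Finset.range d, Bb ^ (d - 1) := by
          refine Finset.sum_le_sum fun i hi => ?_
          have hi' : i < d := Finset.mem_range.1 hi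
          have h1 : b ^ i ≤ Bb ^ i := pow_le_pow_left₀ (ha.trans hab) hB i
          have h2 : a ^ (d - 1 - i) ≤ Bb ^ (d - 1 - i) :=
            pow_le_pow_left₀ ha (hab.trans hB) _
          calc b ^ i * a ^ (d - 1 - i) ≤ Bb ^ i * Bb ^ (d - 1 - i) := by
                apply mul_le_mul h1 h2 (by positivity) (by positivity)
            _ = Bb ^ (i + (d - 1 - i)) := by rw [pow_add]
            _ = Bb ^ (d - 1) := by
                congr 1
                omega
      _ = d * Bb ^ (d - 1) := by
          rw [Finset.sum_const, Finset.card_range, nsmul_eq_mul]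
  exact mul_le_mul_of_nonneg_right hsum (by linarith)

lemma mMean_locMeasure (P : Measure (Ed d)) {h : ℝ} (hh0 : 0 < h) (x : Ed d) :
    mMean (locMeasure P h x) = (1 / h) • ∫ y in ball x (dtmRadius P h x), y ∂P := by
  rw [mMean, locMeasure, integral_smul_measure]
  congr 1
  rw [ENNReal.toReal_inv, ENNReal.toReal_ofReal hh0.le, one_div]

lemma mean_stability {P : Measure (Ed d)} [IsProbabilityMeasure P] (hd : 0 < d) {K : ℝ}
    (hK : 0 < K) (hsupp : P ((closedBall (0 : Ed d) K)ᶜ) = 0) {h : ℝ} (hh0 : 0 < h)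
    (hh1 : h < 1) {g : Ed d → ℝ≥0∞} (hPg : P = volume.withDensity g) {fmax : ℝ}
    (hgb : ∀ᵐ y ∂P, g y ≤ ENNReal.ofReal fmax) (hfmax0 : 0 ≤ fmax)
    {u x : Ed d} (hu : ‖u‖ ≤ K) {ε : ℝ} (hε : dist u x ≤ ε)
    (hεcap : ε ≤ 2 * Real.sqrt d * K) :
    ‖mMean (locMeasure P h u) - mMean (locMeasure P h x)‖
      ≤ ((1/h) * K * (2 * (fmax * ((d * (2*K + 4*Real.sqrt d*K) ^ (d - 1) * 4)
          * (volume (ball (0:Ed d) 1)).toReal)))) * ε := by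
  have hε0 : 0 ≤ ε := dist_nonneg.trans hε
  set δu := dtmRadius P h u with hδu
  set δx := dtmRadius P h x with hδx
  have hδu0 : 0 ≤ δu := delta_nonneg P h u
  have hδuK : δu ≤ 2 * K := (delta_le_norm_add hK hsupp hh1 u).trans (by linarith)
  have hlip1 : δu ≤ δx + ε := (delta_lip hK hsupp hh1 u x).trans (by linarith)
  have hlip2 : δx ≤ δu + ε := by
    have := delta_lip hK hsupp hh1 x u
    rw [dist_comm] at this
    linarith
  set a := max (δu - 2*ε) 0 with hadef
  set b := δu + 2*ε with hbdef
  have ha0 : 0 ≤ a := le_max_right _ _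
  have hab : a ≤ b := by
    rw [hadef]
    apply max_le <;> [linarith; positivity]
  set Ann := closedBall u b \ ball u a with hAnn
  -- inclusion lemmas
  have hsub1 : ball u δu \ ball x δx ⊆ Ann := by
    rintro y ⟨hy1, hy2⟩
    rw [mem_ball] at hy1
    rw [mem_ball, not_lt] at hy2
    constructor
    · rw [mem_closedBall]; linarith
    · rw [mem_ball, not_lt]
      have hyx : dist y u ≥ δx - dist x u := by
        have := dist_triangle y u x
        have h4 : dist y x ≥ δx := hy2
        have h5 : dist y x ≤ dist y u + dist u x := dist_triangle y u x
        rw [dist_comm x u]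
        linarith
      apply max_le
      · have : dist x u ≤ ε := by rw [dist_comm]; exact hε
        linarith
      · exact dist_nonneg
  have hsub2 : ball x δx \ ball u δu ⊆ Ann := by
    rintro y ⟨hy1, hy2⟩
    rw [mem_ball] at hy1
    rw [mem_ball, not_lt] at hy2
    constructor
    · rw [mem_closedBall]
      have := dist_triangle y x u
      have : dist y u ≤ dist y x + dist x u := dist_triangle y x u
      have hxu : dist x u ≤ ε := by rw [dist_comm]; exact hε
      linarith
    · rw [mem_ball, not_lt]
      apply max_le <;> linarith
  -- bound on P Ann
  have hBb : b ≤ 2*K + 4*Real.sqrt d*K := by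
    have : (0:ℝ) ≤ Real.sqrt d * K := by positivity
    linarith
  have hba : b - a ≤ 4 * ε := by
    rw [hadef, hbdef]
    rcases le_or_gt 0 (δu - 2*ε) with hc | hc
    · rw [max_eq_left hc]; linarith
    · rw [max_eq_right hc.le]; linarith
  have hvol : (volume Ann).toReal ≤ d * (2*K + 4*Real.sqrt d*K) ^ (d - 1) * (4 * ε)
      * (volume (ball (0:Ed d) 1)).toReal := by
    rw [hAnn, vol_ann_toReal hd ha0 hab u]
    have h1 : b ^ d - a ^ d ≤ d * (2*K + 4*Real.sqrt d*K) ^ (d - 1) * (b - a) :=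
      pow_sub_pow_le ha0 hab hBb d
    have h2 : b ^ d - a ^ d ≤ d * (2*K + 4*Real.sqrt d*K) ^ (d - 1) * (4 * ε) := by
      refine h1.trans ?_
      apply mul_le_mul_of_nonneg_left hba
      positivity
    exact mul_le_mul_of_nonneg_right h2 ENNReal.toReal_nonneg
  have hPAnnfin : P Ann ≠ ∞ := (measure_lt_top P _).ne
  have hPAnn : (P Ann).toReal ≤ fmax * (d * (2*K + 4*Real.sqrt d*K) ^ (d - 1) * (4 * ε)
      * (volume (ball (0:Ed d) 1)).toReal) := by
    have hb1 : P Ann ≤ ENNReal.ofReal fmax * volume Ann :=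
      P_le_fmax_vol hPg hgb (measurableSet_closedBall.diff measurableSet_ball)
    have hvolfin : volume Ann ≠ ∞ :=
      ((measure_mono diff_subset).trans_lt measure_closedBall_lt_top).ne
    calc (P Ann).toReal ≤ (ENNReal.ofReal fmax * volume Ann).toReal :=
          ENNReal.toReal_mono (ENNReal.mul_ne_top ENNReal.ofReal_ne_top hvolfin) hb1
      _ = fmax * (volume Ann).toReal := by
          rw [ENNReal.toReal_mul, ENNReal.toReal_ofReal hfmax0]
      _ ≤ fmax * (d * (2*K + 4*Real.sqrt d*K) ^ (d - 1) * (4 * ε)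
          * (volume (ball (0:Ed d) 1)).toReal) :=
          mul_le_mul_of_nonneg_left hvol hfmax0
  -- the mean difference
  rw [mMean_locMeasure P hh0 u, mMean_locMeasure P hh0 x, ← smul_sub]
  have hIntOn : ∀ S : Set (Ed d), IntegrableOn (fun y : Ed d => y) S P :=
    fun S => (integrable_id'_s11 hsupp).integrableOn
  have hsplit1 : ∫ y in ball u δu, (y : Ed d) ∂P
      = (∫ y in ball u δu ∩ ball x δx, (y : Ed d) ∂P) + ∫ y in ball u δu \ ball x δx, y ∂P :=
    (integral_inter_add_diff measurableSet_ball (hIntOn _)).symm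
  have hsplit2 : ∫ y in ball x δx, (y : Ed d) ∂P
      = (∫ y in ball u δu ∩ ball x δx, (y : Ed d) ∂P) + ∫ y in ball x δx \ ball u δu, y ∂P := by
    rw [inter_comm]
    exact (integral_inter_add_diff measurableSet_ball (hIntOn _)).symm
  have hnorm_each : ∀ S : Set (Ed d), S ⊆ Ann →
      ‖∫ y in S, (y : Ed d) ∂P‖ ≤ K * (P Ann).toReal := by
    intro S hS
    have h1 : ‖∫ y in S, (y : Ed d) ∂P‖ ≤ K * (P S).toReal := by
      refine norm_setIntegral_le_of_norm_le_const_ae (measure_lt_top P S) ?_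
      exact ae_restrict_of_ae (ae_norm_le hsupp)
    refine h1.trans (mul_le_mul_of_nonneg_left ?_ hK.le)
    exact ENNReal.toReal_mono hPAnnfin (measure_mono hS)
  rw [norm_smul]
  have hnn : ‖∫ y in ball u δu, (y:Ed d) ∂P - ∫ y in ball x δx, (y:Ed d) ∂P‖
      ≤ 2 * (K * (P Ann).toReal) := by
    rw [hsplit1, hsplit2]
    have heq : (∫ y in ball u δu ∩ ball x δx, (y : Ed d) ∂P) + (∫ y in ball u δu \ ball x δx, (y:Ed d) ∂P)
        - ((∫ y in ball u δu ∩ ball x δx, (y : Ed d) ∂P) + ∫ y in ball x δx \ ball u δu, (y:Ed d) ∂P)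
        = (∫ y in ball u δu \ ball x δx, (y:Ed d) ∂P) - ∫ y in ball x δx \ ball u δu, (y:Ed d) ∂P := by
      abel
    rw [heq]
    calc ‖(∫ y in ball u δu \ ball x δx, (y:Ed d) ∂P) - ∫ y in ball x δx \ ball u δu, (y:Ed d) ∂P‖
        ≤ ‖∫ y in ball u δu \ ball x δx, (y:Ed d) ∂P‖ + ‖∫ y in ball x δx \ ball u δu, (y:Ed d) ∂P‖ :=
          norm_sub_le _ _
      _ ≤ K * (P Ann).toReal + K * (P Ann).toReal :=
          add_le_add (hnorm_each _ hsub1) (hnorm_each _ hsub2)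
      _ = 2 * (K * (P Ann).toReal) := by ring
  have hfinal := mul_le_mul_of_nonneg_left hnn (by positivity : (0:ℝ) ≤ ‖(1/h : ℝ)‖)
  refine hfinal.trans ?_
  rw [Real.norm_eq_abs, abs_of_nonneg (by positivity : (0:ℝ) ≤ 1/h)]
  have h3 : 2 * (K * (P Ann).toReal)
      ≤ 2 * (K * (fmax * (d * (2*K + 4*Real.sqrt d*K) ^ (d - 1) * (4 * ε)
          * (volume (ball (0:Ed d) 1)).toReal))) := by
    apply mul_le_mul_of_nonneg_left _ (by norm_num : (0:ℝ) ≤ 2)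
    exact mul_le_mul_of_nonneg_left hPAnn hK.le
  have h4 := mul_le_mul_of_nonneg_left h3 (by positivity : (0:ℝ) ≤ 1/h)
  refine h4.trans_eq ?_
  ring

end Aux8
noncomputable section Aux9

open Filter Topology

variable {d : ℕ}

lemma inner_algebra (u x a b : Ed d) :
    (‖u - a‖^2 - ‖x - a‖^2) + (‖x - b‖^2 - ‖u - b‖^2)
      = 2 * (inner ℝ (u - x) (b - a) : ℝ) := by
  simp only [norm_sub_sq_real, inner_sub_left, inner_sub_right]
  ring

lemma rpow_sq_eq (hd : 0 < d) {k : ℕ} (hk : 1 ≤ k) :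
    ((k:ℝ) ^ (-(1:ℝ)/d)) ^ 2 = (k:ℝ) ^ (-(2:ℝ)/d) := by
  have hk0 : (0:ℝ) ≤ (k:ℝ) := Nat.cast_nonneg k
  rw [← Real.rpow_natCast ((k:ℝ) ^ (-(1:ℝ)/d)) 2, ← Real.rpow_mul hk0]
  congr 1
  push_cast
  ring


lemma coord_bound {K s : ℝ} {n : ℕ} (hK : 0 < K) (hn : 1 ≤ n) (hs0 : 0 ≤ s)
    (hs2 : s ≤ 2*K) :
    |s - (2*K/n) * (((min (n-1) ⌊s * n / (2*K)⌋₊ : ℕ) : ℝ) + 1/2)| ≤ K/n := by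
  have hn0 : (0:ℝ) < n := by exact_mod_cast hn
  set t : ℝ := s * n / (2*K) with htdef
  have ht0 : 0 ≤ t := by positivity
  have htn : t ≤ n := by
    rw [htdef, div_le_iff₀ (by positivity)]
    nlinarith
  have hts : (2*K/n) * t = s := by
    rw [htdef]; field_simp
  have hq : ((min (n-1) ⌊t⌋₊ : ℕ) : ℝ) * (2*K/n) ≤ s ∧
      s ≤ (((min (n-1) ⌊t⌋₊ : ℕ) : ℝ) + 1) * (2*K/n) := by
    rcases le_or_gt ⌊t⌋₊ (n-1) with hcase | hcase
    · rw [min_eq_right hcase]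
      have hfl : (⌊t⌋₊ : ℝ) ≤ t := Nat.floor_le ht0
      have hfu : t < ⌊t⌋₊ + 1 := Nat.lt_floor_add_one t
      have h2Kn : (0:ℝ) < 2*K/n := by positivity
      constructor
      · nlinarith [mul_le_mul_of_nonneg_right hfl h2Kn.le]
      · nlinarith [mul_le_mul_of_nonneg_right hfu.le h2Kn.le]
    · rw [min_eq_left (by omega)]
      have hfl : ((⌊t⌋₊:ℕ) : ℝ) ≤ t := Nat.floor_le ht0
      have htn' : (n:ℝ) ≤ t := by
        calc (n:ℝ) ≤ (⌊t⌋₊ : ℝ) := by exact_mod_cast (by omega : n ≤ ⌊t⌋₊)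
          _ ≤ t := hfl
      have hteq : t = n := le_antisymm htn htn'
      have hseq : s = 2*K := by
        have h7 := hts
        rw [hteq] at h7
        field_simp at h7
        linarith
      have hcast : (((n-1 : ℕ)):ℝ) = (n:ℝ) - 1 := by
        have h8 : (1:ℕ) ≤ n := hn
        push_cast [Nat.cast_sub h8]
        ring
      rw [hcast, hseq]
      constructor
      · have h9 : ((n:ℝ) - 1) * (2*K/n) ≤ (n:ℝ) * (2*K/n) := by
          have : (0:ℝ) < 2*K/n := by positivity
          nlinarith
        have h10 : (n:ℝ) * (2*K/n) = 2*K := by field_simp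
        linarith
      · have h11 : ((n:ℝ) - 1 + 1) * (2*K/n) = 2*K := by field_simp; ring
        linarith
  rw [abs_le]
  obtain ⟨hq1, hq2⟩ := hq
  have hid : 2*K/(n:ℝ) * (((min (n-1) ⌊t⌋₊ : ℕ) : ℝ) + 1/2)
      = ((min (n-1) ⌊t⌋₊ : ℕ) : ℝ) * (2*K/(n:ℝ)) + K/(n:ℝ) := by
    field_simp
  have hid2 : (((min (n-1) ⌊t⌋₊ : ℕ) : ℝ) + 1) * (2*K/(n:ℝ))
      = ((min (n-1) ⌊t⌋₊ : ℕ) : ℝ) * (2*K/(n:ℝ)) + 2*(K/(n:ℝ)) := by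
    field_simp
  constructor
  · linarith [hq1, hid]
  · linarith [hq2, hid, hid2]

lemma grid_cover (hd : 0 < d) {K : ℝ} (hK : 0 < K) (k : ℕ) (hk : 1 ≤ k) :
    ∃ pt : Fin k → Ed d, ∀ u : Ed d, ‖u‖ ≤ K →
      ∃ i, ‖u - pt i‖ ≤ (2 * Real.sqrt d * K) * (k:ℝ) ^ (-(1:ℝ)/d) := by
  have hd0 : (d:ℝ) ≠ 0 := Nat.cast_ne_zero.2 hd.ne'
  set x : ℝ := (k:ℝ) ^ ((d:ℝ)⁻¹) with hxdef
  have hk1 : (1:ℝ) ≤ (k:ℝ) := by exact_mod_cast hk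
  have hx1 : (1:ℝ) ≤ x := by
    rw [hxdef]
    calc (1:ℝ) = (1:ℝ) ^ ((d:ℝ)⁻¹) := (Real.one_rpow _).symm
      _ ≤ (k:ℝ) ^ ((d:ℝ)⁻¹) := Real.rpow_le_rpow zero_le_one hk1 (by positivity)
  have hxpos : 0 < x := lt_of_lt_of_le one_pos hx1
  set n : ℕ := ⌊x⌋₊ with hndef
  have hn1 : 1 ≤ n := Nat.le_floor (by exact_mod_cast hx1)
  have hn0 : (0:ℝ) < n := by exact_mod_cast hn1
  have hnd : n ^ d ≤ k := by
    have h1 : (n:ℝ) ≤ x := Nat.floor_le (by positivity)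
    have h2 : ((n:ℝ)) ^ d ≤ x ^ d := pow_le_pow_left₀ (by positivity) h1 d
    have h3 : x ^ d = (k:ℝ) := by
      rw [hxdef, ← Real.rpow_natCast ((k:ℝ) ^ ((d:ℝ)⁻¹)) d, ← Real.rpow_mul (by positivity)]
      rw [inv_mul_cancel₀ hd0, Real.rpow_one]
    have h4 : ((n ^ d : ℕ) : ℝ) ≤ (k:ℝ) := by
      calc ((n ^ d : ℕ) : ℝ) = ((n:ℝ)) ^ d := by push_cast; ring
        _ ≤ x ^ d := h2
        _ = (k:ℝ) := h3
    exact_mod_cast h4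
  have hinv : (n:ℝ)⁻¹ ≤ 2 * (k:ℝ) ^ (-(1:ℝ)/d) := by
    have hx2n : x ≤ 2 * n := by
      have := Nat.lt_floor_add_one x
      have hn1' : (1:ℝ) ≤ (n:ℝ) := by exact_mod_cast hn1
      rw [← hndef] at this
      linarith
    have h4 : (2 * (n:ℝ))⁻¹ ≤ x⁻¹ := by
      apply inv_anti₀ hxpos hx2n
    have h5 : x⁻¹ = (k:ℝ) ^ (-(1:ℝ)/d) := by
      rw [hxdef, ← Real.rpow_neg (by positivity), neg_div, one_div]
    rw [← h5]
    calc (n:ℝ)⁻¹ = 2 * (2 * (n:ℝ))⁻¹ := by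
          field_simp
      _ ≤ 2 * x⁻¹ := by linarith
  -- grid points
  haveI : NeZero n := ⟨by omega⟩
  let pfun : (Fin d → Fin n) → Ed d := fun c =>
    (WithLp.equiv 2 (Fin d → ℝ)).symm (fun j => -K + (2*K/n) * ((c j : ℝ) + 1/2))
  have hcard : Fintype.card (Fin d → Fin n) ≤ Fintype.card (Fin k) := by
    simpa [Fintype.card_fun] using hnd
  obtain ⟨em⟩ := Function.Embedding.nonempty_of_card_le hcard
  classical
  refine ⟨fun i => if hi : ∃ c, em c = i then pfun hi.choose else pfun (fun _ => ⟨0, by omega⟩),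
    ?_⟩
  intro u hu
  -- the coordinatewise index
  have hcoord : ∀ j : Fin d, |u j| ≤ K := by
    intro j
    have h1 : |u j| = Real.sqrt ((u j) ^ 2) := (Real.sqrt_sq_eq_abs _).symm
    have h2 : (u j)^2 ≤ ∑ i, ‖u i‖ ^ 2 := by
      have := Finset.single_le_sum (f := fun i => ‖u i‖ ^ 2)
        (fun i _ => by positivity) (Finset.mem_univ j)
      simpa [Real.norm_eq_abs, sq_abs] using this
    calc |u j| = Real.sqrt ((u j)^2) := h1
      _ ≤ Real.sqrt (∑ i, ‖u i‖ ^ 2) := Real.sqrt_le_sqrt h2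
      _ = ‖u‖ := (EuclideanSpace.norm_eq u).symm
      _ ≤ K := hu
  let cc : Fin d → Fin n := fun j => ⟨min (n-1) ⌊(u j + K) * n / (2*K)⌋₊, by omega⟩
  have hccbound : ∀ j : Fin d, |u j - pfun cc j| ≤ K / n := by
    intro j
    have hpj : pfun cc j = -K + (2*K/n) * ((cc j : ℝ) + 1/2) := rfl
    have hs0 : 0 ≤ u j + K := by have := hcoord j; rw [abs_le] at this; linarith
    have hs2 : u j + K ≤ 2*K := by have := hcoord j; rw [abs_le] at this; linarith
    have hcb := coord_bound (s := u j + K) hK hn1 hs0 hs2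
    have hcc : ((cc j : ℕ) : ℝ) = ((min (n-1) ⌊(u j + K) * n / (2*K)⌋₊ : ℕ) : ℝ) := rfl
    rw [hpj]
    have heq : u j - (-K + (2*K/n) * ((cc j : ℝ) + 1/2))
        = (u j + K) - (2*K/n) * (((min (n-1) ⌊(u j + K) * n / (2*K)⌋₊ : ℕ) : ℝ) + 1/2) := by
      rw [← hcc]; ring
    rw [heq]
    exact hcb
  -- conclude
  refine ⟨em cc, ?_⟩
  have hex : ∃ c, em c = em cc := ⟨cc, rfl⟩
  have hbeta : (fun i => if hi : ∃ c, em c = i then pfun hi.choose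
      else pfun (fun _ => ⟨0, by omega⟩)) (em cc) = pfun cc := by
    simp only [dif_pos hex]
    exact congrArg pfun (em.injective hex.choose_spec)
  rw [hbeta]
  have hnorm : ‖u - pfun cc‖ ≤ Real.sqrt d * (K / n) := by
    rw [EuclideanSpace.norm_eq]
    have hsum : ∑ j, ‖(u - pfun cc) j‖ ^ 2 ≤ (d:ℝ) * (K/n)^2 := by
      calc ∑ j, ‖(u - pfun cc) j‖ ^ 2 ≤ ∑ _j : Fin d, (K/n)^2 := by
            refine Finset.sum_le_sum fun j _ => ?_
            rw [PiLp.sub_apply, Real.norm_eq_abs, sq_abs, ← sq_abs]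
            have := hccbound j
            nlinarith [abs_nonneg (u j - pfun cc j)]
        _ = (d:ℝ) * (K/n)^2 := by
            rw [Finset.sum_const, Finset.card_univ, Fintype.card_fin, nsmul_eq_mul]
    calc Real.sqrt (∑ j, ‖(u - pfun cc) j‖ ^ 2) ≤ Real.sqrt ((d:ℝ) * (K/n)^2) :=
          Real.sqrt_le_sqrt hsum
      _ = Real.sqrt d * (K/n) := by
          rw [Real.sqrt_mul (by positivity), Real.sqrt_sq (by positivity)]
  refine hnorm.trans ?_
  have h6 : Real.sqrt d * (K/n) = Real.sqrt d * K * (n:ℝ)⁻¹ := by ring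
  rw [h6]
  calc Real.sqrt d * K * (n:ℝ)⁻¹ ≤ Real.sqrt d * K * (2 * (k:ℝ) ^ (-(1:ℝ)/d)) := by
        apply mul_le_mul_of_nonneg_left hinv (by positivity)
    _ = (2 * Real.sqrt d * K) * (k:ℝ) ^ (-(1:ℝ)/d) := by ring

end Aux9

noncomputable section Aux10

open Filter Topology

variable {d : ℕ}

lemma plocExt_core {P : Measure (Ed d)} {h : ℝ} {tt : ExtPt d} {μ : Measure (Ed d)}
    (hμ : μ ∈ PlocExt P h tt) :
    ∃ Q, μ = (ENNReal.ofReal h)⁻¹ • Q ∧ Q ≤ P ∧ Q Set.univ = ENNReal.ofReal h := by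
  cases tt with
  | inl x => obtain ⟨Q, h1, h2, h3, _, _⟩ := hμ; exact ⟨Q, h1, h2, h3⟩
  | inr v => obtain ⟨Q, h1, h2, h3, _, _⟩ := hμ; exact ⟨Q, h1, h2, h3⟩

end Aux10

/-- when `P` has an ambient-dimensional support with density bounded above and
below, the `k`-PDTM approximates the DTM in `L¹(P)` at rate `k^{-2/d}`, with a constant
depending only on `f_max`, `K`, `d` and `h`. -/
theorem stmt_11 (d : ℕ) (hd : 0 < d) (h fmax K : ℝ) (hh : h ∈ Set.Ioo (0:ℝ) 1) (hK : 0 < K) :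
    ∃ C : ℝ, ∀ (P : Measure (Ed d)), IsProbabilityMeasure P →
      P ((closedBall (0 : Ed d) K)ᶜ) = 0 →
      ∀ fmin : ℝ, 0 < fmin → fmin ≤ fmax →
      ∀ g : Ed d → ℝ≥0∞, P = volume.withDensity g →
      (∀ᵐ x ∂P, ENNReal.ofReal fmin ≤ g x ∧ g x ≤ ENNReal.ofReal fmax) →
      ∀ k : ℕ, 1 ≤ k → ∀ f : Ed d → ℝ, IsKPDTM P h k f →
        0 ≤ ∫ u, (f u ^ 2 - dtm P h u ^ 2) ∂P ∧
        ∫ u, (f u ^ 2 - dtm P h u ^ 2) ∂P ≤ C * (k : ℝ) ^ (-(2 : ℝ) / d) := by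
  obtain ⟨hh0, hh1⟩ := hh
  set Cm : ℝ := (1/h) * K * (2 * (fmax * ((d * (2*K + 4*Real.sqrt d*K) ^ (d - 1) * 4)
      * (volume (ball (0:Ed d) 1)).toReal))) with hCm
  set E : ℝ := 2 * Real.sqrt d * K with hE
  have hE0 : 0 ≤ E := by rw [hE]; positivity
  refine ⟨2 * Cm * E^2, ?_⟩
  intro P hP hsupp fmin hfmin0 hfminmax g hPg hgbound k hk f hf
  haveI := hP
  have hatom : ∀ z : Ed d, P {z} = 0 := fun z => by
    rw [hPg]; exact withDensity_atom hd z
  have hsph : ∀ (z : Ed d) (r : ℝ), P (sphere z r) = 0 := fun z r => by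
    rw [hPg]; exact withDensity_sphere hd z r
  have hfmax0 : 0 ≤ fmax := hfmin0.le.trans hfminmax
  have hgb : ∀ᵐ y ∂P, g y ≤ ENNReal.ofReal fmax := hgbound.mono fun y hy => hy.2
  obtain ⟨t, μ, hcen, hmin, hfx⟩ := hf
  haveI : Nonempty (Fin k) := ⟨⟨0, hk⟩⟩
  have hcore : ∀ i, ∃ Q, μ i = (ENNReal.ofReal h)⁻¹ • Q ∧ Q ≤ P ∧
      Q Set.univ = ENNReal.ofReal h := fun i => plocExt_core (hcen i)
  have hprob : ∀ i, IsProbabilityMeasure (μ i) := fun i => by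
    obtain ⟨Q, h1, h2, h3⟩ := hcore i
    exact subQ_prob (P := P) hh0 h1 h3
  have hnull : ∀ i, (μ i) ((closedBall (0 : Ed d) K)ᶜ) = 0 := fun i => by
    obtain ⟨Q, h1, h2, h3⟩ := hcore i
    exact subQ_null h1 h2 hsupp
  set g₀ : Ed d → ℝ := fun u => ⨅ i : Fin k, (‖u - mMean (μ i)‖ ^ 2 + mVar (μ i)) with hg₀
  have hbnonneg : ∀ i (u : Ed d), 0 ≤ ‖u - mMean (μ i)‖ ^ 2 + mVar (μ i) := fun i u =>
    add_nonneg (by positivity) (mVar_nonneg _)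
  have hg₀nonneg : ∀ u, 0 ≤ g₀ u := fun u => le_ciInf fun i => hbnonneg i u
  have hfsq : ∀ u, f u ^ 2 = g₀ u := fun u => by
    rw [hfx u, Real.sq_sqrt (hg₀nonneg u)]
  have hlow : ∀ u, dtm P h u ^ 2 ≤ g₀ u := fun u => by
    refine le_ciInf fun i => ?_
    obtain ⟨Q, h1, h2, h3⟩ := hcore i
    exact dtm_sq_le_moment hK hsupp hh0 hh1 h1 h2 h3 u
  constructor
  · refine integral_nonneg fun u => ?_
    show (0:ℝ) ≤ f u ^ 2 - dtm P h u ^ 2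
    have h1 := hlow u
    have h2 := hfsq u
    linarith
  -- upper bound
  have hbdd : ∀ (ν : Fin k → Measure (Ed d)), BddBelow
      (range fun i => ‖(0:Ed d) - mMean (ν i)‖ ^ 2 + mVar (ν i)) := fun ν =>
    (Set.finite_range _).bddBelow
  -- integrability of an inf power function
  have hint_inf : ∀ (ν : Fin k → Measure (Ed d)),
      (∀ i, IsProbabilityMeasure (ν i)) → (∀ i, (ν i) ((closedBall (0 : Ed d) K)ᶜ) = 0) →
      Integrable (fun u => ⨅ i : Fin k, (‖u - mMean (ν i)‖ ^ 2 + mVar (ν i))) P := by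
    intro ν hp hn
    have hmeas : Measurable (fun u => ⨅ i : Fin k, (‖u - mMean (ν i)‖ ^ 2 + mVar (ν i))) := by
      refine Measurable.iInf fun i => ?_
      exact ((measurable_id.sub measurable_const).norm.pow measurable_const).add_const _
    refine Integrable.mono' (integrable_const (8 * K^2)) hmeas.aestronglyMeasurable ?_
    filter_upwards [ae_norm_le hsupp] with u hu
    have hnn : 0 ≤ ⨅ i : Fin k, (‖u - mMean (ν i)‖ ^ 2 + mVar (ν i)) :=
      le_ciInf fun i => add_nonneg (by positivity) (mVar_nonneg _)
    rw [Real.norm_eq_abs, abs_of_nonneg hnn]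
    have hone : (⨅ i : Fin k, (‖u - mMean (ν i)‖ ^ 2 + mVar (ν i)))
        ≤ ‖u - mMean (ν (Classical.arbitrary _))‖ ^ 2 + mVar (ν (Classical.arbitrary _)) :=
      ciInf_le ((Set.finite_range _).bddBelow) _
    refine hone.trans ?_
    have h1 : ‖mMean (ν (Classical.arbitrary _))‖ ≤ K := by
      haveI := hp (Classical.arbitrary _)
      exact norm_mMean_le hK.le (hn _)
    have h2 : mVar (ν (Classical.arbitrary _)) ≤ (2*K)^2 := by
      haveI := hp (Classical.arbitrary _)
      exact mVar_le hK.le (hn _)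
    have h3 : ‖u - mMean (ν (Classical.arbitrary _))‖ ≤ 2*K :=
      (norm_sub_le _ _).trans (by linarith)
    nlinarith [norm_nonneg (u - mMean (ν (Classical.arbitrary (Fin k))))]
  have hint_g₀ : Integrable g₀ P := hint_inf μ hprob hnull
  have hint_dtm : Integrable (fun u => dtm P h u ^ 2) P := dtm_sq_integrable hK hsupp hh0 hh1
  -- grid construction
  obtain ⟨pt, hpt⟩ := grid_cover hd hK k hk
  set μ' : Fin k → Measure (Ed d) := fun i => locMeasure P h (pt i) with hμ'
  have hprob' : ∀ i, IsProbabilityMeasure (μ' i) := fun i =>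
    locMeasure_prob hK hsupp hh0 hh1 hatom hsph (pt i)
  have hnull' : ∀ i, (μ' i) ((closedBall (0 : Ed d) K)ᶜ) = 0 := fun i =>
    locMeasure_null hsupp (pt i)
  have hcen' : IsKCenter P h k (fun i => Sum.inl (pt i)) μ' := fun i =>
    locMeasure_mem_PlocPt hK hsupp hh0 hh1 hatom hsph (pt i)
  have hrisk_le : risk P k μ ≤ risk P k μ' := hmin _ μ' hcen'
  set g₁ : Ed d → ℝ := fun u => ⨅ i : Fin k, (‖u - mMean (μ' i)‖ ^ 2 + mVar (μ' i)) with hg₁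
  have hint_g₁ : Integrable g₁ P := hint_inf μ' hprob' hnull'
  set κ : ℝ := (k:ℝ) ^ (-(1:ℝ)/d) with hκ
  have hκ0 : 0 ≤ κ := by rw [hκ]; positivity
  have hκ1 : κ ≤ 1 := by
    rw [hκ]
    refine Real.rpow_le_one_of_one_le_of_nonpos (by exact_mod_cast hk) ?_
    apply div_nonpos_of_nonpos_of_nonneg <;> [norm_num; positivity]
  set ε : ℝ := E * κ with hε
  have hε0 : 0 ≤ ε := mul_nonneg hE0 hκ0
  have hεcap : ε ≤ 2 * Real.sqrt d * K := by
    rw [hε, ← hE]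
    calc E * κ ≤ E * 1 := mul_le_mul_of_nonneg_left hκ1 hE0
      _ = E := mul_one E
  -- pointwise comparison
  have hpoint : ∀ᵐ u ∂P, g₁ u - dtm P h u ^ 2 ≤ 2 * Cm * E^2 * κ^2 := by
    filter_upwards [ae_norm_le hsupp] with u hu
    obtain ⟨i, hi⟩ := hpt u hu
    have hi' : ‖u - pt i‖ ≤ ε := hi
    set x := pt i with hx
    set mx := mMean (μ' i) with hmx
    set mu := mMean (locMeasure P h u) with hmu
    have hg₁i : g₁ u ≤ ‖u - mx‖ ^ 2 + mVar (μ' i) :=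
      ciInf_le ((Set.finite_range _).bddBelow) i
    have hBx : ‖x - mx‖ ^ 2 + mVar (μ' i) ≤ dtm P h x ^ 2 :=
      moment_le_dtm_sq hK hsupp hh0 hh1 hatom hsph x
    have hAu : dtm P h x ^ 2 ≤ ‖x - mu‖ ^ 2 + mVar (locMeasure P h u) := by
      have hball := (ball_mass hK hsupp hh0 hh1 hatom hsph u).1
      exact dtm_sq_le_moment hK hsupp hh0 hh1 rfl Measure.restrict_le_self
        (by rw [Measure.restrict_apply_univ]; exact hball) x
    have hBu : ‖u - mu‖ ^ 2 + mVar (locMeasure P h u) ≤ dtm P h u ^ 2 :=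
      moment_le_dtm_sq hK hsupp hh0 hh1 hatom hsph u
    have hmean_dist : ‖mu - mx‖ ≤ Cm * ε := by
      rw [hCm]
      exact mean_stability hd hK hsupp hh0 hh1 hPg hgb hfmax0 hu
        (by rw [dist_eq_norm]; exact hi') hεcap
    have halg : (‖u - mx‖^2 - ‖x - mx‖^2) + (‖x - mu‖^2 - ‖u - mu‖^2)
        = 2 * (inner ℝ (u - x) (mu - mx) : ℝ) := inner_algebra u x mx mu
    have hcs : (inner ℝ (u - x) (mu - mx) : ℝ) ≤ ‖u - x‖ * ‖mu - mx‖ :=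
      real_inner_le_norm _ _
    have hprod : ‖u - x‖ * ‖mu - mx‖ ≤ ε * (Cm * ε) := by
      apply mul_le_mul hi' hmean_dist (norm_nonneg _) hε0
    have hfin : g₁ u - dtm P h u ^ 2 ≤ 2 * (ε * (Cm * ε)) := by linarith
    calc g₁ u - dtm P h u ^ 2 ≤ 2 * (ε * (Cm * ε)) := hfin
      _ = 2 * Cm * E^2 * κ^2 := by rw [hε]; ring
  -- put everything together
  have hmain : ∫ u, (f u ^ 2 - dtm P h u ^ 2) ∂P
      = ∫ u, g₀ u ∂P - ∫ u, dtm P h u ^ 2 ∂P := by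
    rw [← integral_sub hint_g₀ hint_dtm]
    exact integral_congr_ae (ae_of_all _ fun u => by dsimp only; rw [hfsq u])
  have hr0 : ∫ u, g₀ u ∂P = risk P k μ := rfl
  have hr1 : ∫ u, g₁ u ∂P = risk P k μ' := rfl
  have hstep : ∫ u, g₁ u ∂P - ∫ u, dtm P h u ^ 2 ∂P ≤ 2 * Cm * E^2 * κ^2 := by
    rw [← integral_sub hint_g₁ hint_dtm]
    calc ∫ u, (g₁ u - dtm P h u ^ 2) ∂P ≤ ∫ _, (2 * Cm * E^2 * κ^2) ∂P :=
          integral_mono_ae (hint_g₁.sub hint_dtm) (integrable_const _) hpoint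
      _ = 2 * Cm * E^2 * κ^2 := by simp
  have hκsq : κ^2 = (k:ℝ) ^ (-(2:ℝ)/d) := by
    rw [hκ]
    exact rpow_sq_eq hd hk
  calc ∫ u, (f u ^ 2 - dtm P h u ^ 2) ∂P
      = ∫ u, g₀ u ∂P - ∫ u, dtm P h u ^ 2 ∂P := hmain
    _ ≤ ∫ u, g₁ u ∂P - ∫ u, dtm P h u ^ 2 ∂P := by
        rw [hr0, hr1] at *
        linarith [hrisk_le]
    _ ≤ 2 * Cm * E^2 * κ^2 := hstep
    _ = 2 * Cm * E^2 * (k:ℝ) ^ (-(2:ℝ)/d) := by rw [hκsq]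
end
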